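/- arXiv:1807.07648 — 7 statements merged into one kernel-verified Lean document; each statement's English description precedes it below -/
import Mathlib

section
/- Let n ≥ 1 be an integer and let ζ = exp(2πi/n). The n×n discrete Fourier transform matrix F_n, whose rows and columns are indexed by 0,1,…,n−1 and whose (j,k)-entry is ζ^{jk}/√n, has the nonvanishing minors property if and only if n is prime or n = 1. -/
open Complex Real Polynomial NumberField

open Polynomial

section PolyAux

variable {A : Type*} [CommRing A]

lemma prod_X_sub_C_dvd_of_eval_eq_zero' {ι : Type*} [DecidableEq ι] (s : Finset ι) (v : ι → A)
    [IsDomain A] (hv : Set.InjOn v s) (f : A[X]) (hf : ∀ i ∈ s, f.eval (v i) = 0) :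
    (∏ i ∈ s, (X - C (v i))) ∣ f := by
  induction s using Finset.induction_on generalizing f with
  | empty => simpa using one_dvd f
  | @insert a s ha ih =>
    obtain ⟨g, hg⟩ := (dvd_iff_isRoot (p := f) (a := v a)).2 (hf a (Finset.mem_insert_self a s))
    rw [Finset.prod_insert ha, hg]
    refine mul_dvd_mul_left _ (ih (hv.mono (by simp [Finset.subset_insert])) g fun i hi => ?_)
    have h1 : f.eval (v i) = 0 := hf i (Finset.mem_insert_of_mem hi)
    rw [hg, eval_mul, eval_sub, eval_X, eval_C] at h1
    have h2 : v i - v a ≠ 0 := sub_ne_zero.2 fun h => ha (by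
      rwa [hv (Finset.mem_insert_of_mem hi) (Finset.mem_insert_self a s) h] at hi)
    exact (mul_eq_zero.1 h1).resolve_left h2

/-- The operator `f ↦ X * f'`. -/
noncomputable def xD (f : A[X]) : A[X] := X * derivative f

lemma xD_add (f g : A[X]) : xD (f + g) = xD f + xD g := by
  simp [xD, mul_add]

lemma xD_sum {ι : Type*} (s : Finset ι) (g : ι → A[X]) :
    xD (∑ i ∈ s, g i) = ∑ i ∈ s, xD (g i) := by
  classical
  induction s using Finset.induction_on with
  | empty => simp [xD]
  | @insert a s ha ih => rw [Finset.sum_insert ha, Finset.sum_insert ha, xD_add, ih]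

lemma xD_C_mul_X_pow (a : A) (e : ℕ) : xD (C a * X ^ e) = C ((e : A)) * (C a * X ^ e) := by
  cases e with
  | zero => simp [xD]
  | succ m =>
    simp only [xD, derivative_C_mul, derivative_X_pow, Nat.add_sub_cancel]
    push_cast
    ring

lemma xD_iter_sum {k : ℕ} (w : Fin k → A) (c : Fin k → ℕ) (m : ℕ) :
    xD^[m] (∑ j, C (w j) * X ^ (c j)) = ∑ j, C (w j * (c j : A) ^ m) * X ^ (c j) := by
  induction m with
  | zero => simp
  | succ m ih =>
    rw [Function.iterate_succ_apply', ih, xD_sum]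
    refine Finset.sum_congr rfl fun j _ => ?_
    rw [xD_C_mul_X_pow, ← mul_assoc, ← C_mul]
    ring_nf

lemma xD_dvd_pow_sub_one (s : ℕ) (f : A[X]) (h : (X - 1 : A[X]) ^ (s + 1) ∣ f) :
    (X - 1 : A[X]) ^ s ∣ xD f := by
  obtain ⟨g, rfl⟩ := h
  refine ⟨X * ((C (((s : ℕ) + 1 : ℕ) : A)) * derivative (X - 1 : A[X]) * g
    + (X - 1) * derivative g), ?_⟩
  rw [xD, derivative_mul, derivative_pow, Nat.add_sub_cancel]
  push_cast
  ring

lemma xD_iter_dvd (m s : ℕ) (f : A[X]) (h : (X - 1 : A[X]) ^ (s + m) ∣ f) :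
    (X - 1 : A[X]) ^ s ∣ xD^[m] f := by
  induction m generalizing f with
  | zero => simpa using h
  | succ m ih =>
    rw [Function.iterate_succ_apply]
    exact ih _ (xD_dvd_pow_sub_one (s + m) f (by rwa [show s + m + 1 = s + (m + 1) by omega]))

lemma eval_one_xD_iter_eq_zero (k m : ℕ) (hm : m < k) (f : A[X])
    (h : (X - 1 : A[X]) ^ k ∣ f) : (xD^[m] f).eval 1 = 0 := by
  have h1 : (X - 1 : A[X]) ^ 1 ∣ xD^[m] f :=
    xD_iter_dvd m 1 f (dvd_trans (pow_dvd_pow _ (by omega)) h)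
  rw [pow_one] at h1
  have := (dvd_iff_isRoot (p := xD^[m] f) (a := (1 : A))).1 (by rw [C_1]; exact h1)
  simpa [Polynomial.IsRoot] using this

end PolyAux

instance pnat_cast_neZero_rat (p : ℕ+) : NeZero ((p : ℕ) : ℚ) := ⟨by simp⟩

instance pnat_cyclotomicField_isCyclotomicExtension (p : ℕ+) :
    IsCyclotomicExtension {(p : ℕ)} ℚ (CyclotomicField (p : ℕ) ℚ) :=
  CyclotomicField.isCyclotomicExtension _ _

set_option synthInstance.maxHeartbeats 1000000 in
set_option maxHeartbeats 2000000 in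
/-- Chebotarëv's theorem over the cyclotomic field. -/
theorem cheb (p : ℕ+) [hp : Fact (Nat.Prime (p : ℕ))] {k : ℕ} (r c : Fin k → Fin (p : ℕ))
    (hr : Function.Injective r) (hc : Function.Injective c) :
    (Matrix.of fun i j : Fin k =>
      IsCyclotomicExtension.zeta p ℚ (CyclotomicField p ℚ) ^ ((r i : ℕ) * (c j : ℕ))).det ≠ 0 := by
  set K := CyclotomicField p ℚ with hK
  letI : NumberField K := IsCyclotomicExtension.numberField {(p : ℕ)} ℚ K
  set η := IsCyclotomicExtension.zeta p ℚ K with hηdef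
  have hη : IsPrimitiveRoot η (p : ℕ) := IsCyclotomicExtension.zeta_spec p ℚ K
  set z : 𝓞 K := hη.toInteger with hzdef
  have hz : IsPrimitiveRoot z (p : ℕ) := hη.toInteger_isPrimitiveRoot
  have hzK : algebraMap (𝓞 K) K z = η := rfl
  set lam : 𝓞 K := z - 1 with hlamdef
  have hlam : Prime lam := hη.zeta_sub_one_prime'
  have hlp : lam ∣ ((p : ℕ) : 𝓞 K) := by exact_mod_cast hη.toInteger_sub_one_dvd_prime'
  intro h0
  obtain ⟨v, hvne, hv⟩ := (Matrix.exists_mulVec_eq_zero_iff).2 h0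
  obtain ⟨b, hb⟩ := IsLocalization.exist_integer_multiples
    (nonZeroDivisors (𝓞 K)) Finset.univ v
  have hbw : ∀ j, ∃ x : 𝓞 K, algebraMap (𝓞 K) K x = (b : 𝓞 K) • v j :=
    fun j => hb j (Finset.mem_univ j)
  choose w hw using hbw
  have hOinj : Function.Injective (algebraMap (𝓞 K) K) := IsFractionRing.injective _ _
  -- relations in 𝓞 K
  have hrel : ∀ i, ∑ j, w j * z ^ ((r i : ℕ) * (c j : ℕ)) = 0 := by
    intro i
    apply hOinj
    rw [map_sum, map_zero]
    have := congrFun hv i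
    simp only [Matrix.mulVec, dotProduct, Matrix.of_apply, Pi.zero_apply] at this
    calc ∑ j, algebraMap (𝓞 K) K (w j * z ^ ((r i : ℕ) * (c j : ℕ)))
        = ∑ j, ((b : 𝓞 K) • v j) * η ^ ((r i : ℕ) * (c j : ℕ)) := by
          refine Finset.sum_congr rfl fun j _ => ?_
          rw [map_mul, hw j, map_pow, hzK]
      _ = algebraMap (𝓞 K) K (b : 𝓞 K) * ∑ j, η ^ ((r i : ℕ) * (c j : ℕ)) * v j := by
          rw [Finset.mul_sum]
          refine Finset.sum_congr rfl fun j _ => ?_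
          rw [Algebra.smul_def]; ring
      _ = 0 := by rw [this, mul_zero]

  -- a nonzero coordinate
  obtain ⟨j₀, hj₀⟩ : ∃ j₀, v j₀ ≠ 0 := Function.ne_iff.1 hvne
  have hbne : algebraMap (𝓞 K) K (b : 𝓞 K) ≠ 0 := by
    simpa using fun h => nonZeroDivisors.coe_ne_zero b (hOinj (by simpa using h))
  have hwj₀ : w j₀ ≠ 0 := by
    intro h
    apply hj₀
    have := hw j₀
    rw [h, map_zero, Algebra.smul_def] at this
    exact (mul_eq_zero.1 this.symm).resolve_left hbne
  -- the mod-lambda main step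
  have main : ∀ (w : Fin k → 𝓞 K), (∀ i, ∑ j, w j * z ^ ((r i : ℕ) * (c j : ℕ)) = 0) →
      ∀ j, lam ∣ w j := by
    intro w hrelw j
    set Q : Ideal (𝓞 K) := Ideal.span {lam} with hQ
    haveI hQp : Q.IsPrime := (Ideal.span_singleton_prime hlam.ne_zero).2 hlam
    haveI : IsDomain ((𝓞 K) ⧸ Q) := Ideal.Quotient.isDomain Q
    set pmap : 𝓞 K →+* (𝓞 K) ⧸ Q := Ideal.Quotient.mk Q with hpmap
    have hdvd_iff : ∀ x : 𝓞 K, pmap x = 0 ↔ lam ∣ x := fun x => by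
      rw [hpmap, Ideal.Quotient.eq_zero_iff_mem, hQ, Ideal.mem_span_singleton]
    have hpmapz : pmap z = 1 := by
      have h1 : pmap lam = 0 := (hdvd_iff lam).2 dvd_rfl
      rw [hlamdef, map_sub, map_one, sub_eq_zero] at h1
      exact h1
    have hpmapzpow : ∀ m : ℕ, pmap (z ^ m) = 1 := fun m => by rw [map_pow, hpmapz, one_pow]
    have hint : ∀ t : ℤ, pmap ((t : ℤ) : 𝓞 K) = 0 → ((p : ℕ) : ℤ) ∣ t := by
      intro t ht
      by_contra hnd
      have hpz : Prime ((p : ℕ) : ℤ) := Int.prime_iff_natAbs_prime.2 (by simpa using hp.out)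
      obtain ⟨a, b2, hab⟩ := (Irreducible.coprime_iff_not_dvd hpz.irreducible).2 hnd
      have h2 : lam ∣ ((t : ℤ) : 𝓞 K) := (hdvd_iff _).1 ht
      have h1 : lam ∣ (((p : ℕ) : ℤ) : 𝓞 K) := by exact_mod_cast hlp
      have h3 : lam ∣ (1 : 𝓞 K) := by
        have h4 := congrArg (fun x : ℤ => (x : 𝓞 K)) hab
        push_cast at h4
        rw [← h4]
        exact dvd_add (Dvd.dvd.mul_left h1 _) (Dvd.dvd.mul_left h2 _)
      exact hlam.not_unit (isUnit_of_dvd_one h3)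
    -- the polynomial and its roots
    set F : (𝓞 K)[X] := ∑ j, C (w j) * X ^ ((c j : ℕ)) with hF
    have hroots : ∀ i, F.eval (z ^ (r i : ℕ)) = 0 := by
      intro i
      rw [hF, eval_finset_sum, ← hrelw i]
      refine Finset.sum_congr rfl fun j _ => ?_
      rw [eval_mul, eval_C, eval_pow, eval_X, ← pow_mul]
    have hinjroot : Set.InjOn (fun i => z ^ (r i : ℕ)) (Finset.univ : Finset (Fin k)) := by
      intro i _ i' _ h
      exact hr (Fin.ext (hz.pow_inj (r i).2 (r i').2 h))
    obtain ⟨G, hG⟩ := prod_X_sub_C_dvd_of_eval_eq_zero' Finset.univ _ hinjroot F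
      (fun i _ => hroots i)
    have hmapF : F.map pmap = ∑ j', C (pmap (w j')) * X ^ ((c j' : ℕ)) := by
      rw [hF, Polynomial.map_sum]
      exact Finset.sum_congr rfl fun j' _ => by rw [Polynomial.map_mul, map_C, Polynomial.map_pow,
        map_X]
    have hdvdmap : (X - 1 : ((𝓞 K) ⧸ Q)[X]) ^ k ∣ F.map pmap := by
      rw [hG, Polynomial.map_mul, Polynomial.map_prod]
      have : ∀ i : Fin k, (X - C (z ^ (r i : ℕ))).map pmap = (X - 1 : ((𝓞 K) ⧸ Q)[X]) := by
        intro i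
        rw [Polynomial.map_sub, map_X, map_C, hpmapzpow]
        simp
      rw [Finset.prod_congr rfl fun i _ => this i, Finset.prod_const, Finset.card_univ,
        Fintype.card_fin]
      exact Dvd.intro _ rfl
    have hsums : ∀ m : ℕ, m < k → ∑ j', pmap (w j') * ((c j' : ℕ) : (𝓞 K) ⧸ Q) ^ m = 0 := by
      intro m hm
      have h1 := eval_one_xD_iter_eq_zero k m hm _ hdvdmap
      rw [hmapF, xD_iter_sum, eval_finset_sum] at h1
      simpa using h1
    -- Vandermonde
    set cv : Fin k → (𝓞 K) ⧸ Q := fun j' => ((c j' : ℕ) : (𝓞 K) ⧸ Q) with hcv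
    have hcvinj : Function.Injective cv := by
      intro j1 j2 h
      have h0 : pmap ((((c j1 : ℕ) : ℤ) - ((c j2 : ℕ) : ℤ) : ℤ) : 𝓞 K) = 0 := by
        rw [map_intCast, Int.cast_sub, sub_eq_zero]
        exact_mod_cast h
      have h5 := hint _ h0
      have h6 : (((c j1 : ℕ) : ℤ) - ((c j2 : ℕ) : ℤ)) = 0 := by
        refine Int.eq_zero_of_abs_lt_dvd h5 ?_
        have b1 : ((c j1 : ℕ) : ℤ) < ((p : ℕ) : ℤ) := by exact_mod_cast (c j1).2
        have b2 : ((c j2 : ℕ) : ℤ) < ((p : ℕ) : ℤ) := by exact_mod_cast (c j2).2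
        have b3 : (0 : ℤ) ≤ ((c j1 : ℕ) : ℤ) := by positivity
        have b4 : (0 : ℤ) ≤ ((c j2 : ℕ) : ℤ) := by positivity
        rw [abs_sub_lt_iff]; omega
      exact hc (Fin.ext (by exact_mod_cast sub_eq_zero.1 h6))
    have hdet : (Matrix.vandermonde cv).det ≠ 0 := by
      rw [Matrix.det_vandermonde]
      refine Finset.prod_ne_zero_iff.2 fun i _ => Finset.prod_ne_zero_iff.2 fun j' hj' => ?_
      exact sub_ne_zero.2 fun h => (Finset.mem_Ioi.1 hj').ne' (hcvinj h)
    have hmv : (Matrix.vandermonde cv).transpose.mulVec (fun j' => pmap (w j')) = 0 := by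
      ext m
      simp only [Matrix.mulVec, dotProduct, Matrix.transpose_apply, Matrix.vandermonde,
        Matrix.of_apply, Pi.zero_apply]
      rw [← hsums (m : ℕ) m.2]
      exact Finset.sum_congr rfl fun j' _ => mul_comm _ _
    have hzero : pmap (w j) = 0 := by
      have h2 := congrArg (Matrix.mulVec (Matrix.adjugate (Matrix.vandermonde cv).transpose)) hmv
      rw [Matrix.mulVec_mulVec, Matrix.adjugate_mul, Matrix.mulVec_zero,
        Matrix.smul_mulVec, Matrix.one_mulVec] at h2
      have h3 := congrFun h2 j
      simp only [Pi.smul_apply, smul_eq_mul, Pi.zero_apply] at h3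
      have hdet' : ((Matrix.vandermonde cv).transpose).det ≠ 0 := by rwa [Matrix.det_transpose]
      exact (mul_eq_zero.1 h3).resolve_left hdet'
    exact (hdvd_iff (w j)).1 hzero
  -- descent
  have descent : ∀ x : 𝓞 K, ∀ w : Fin k → 𝓞 K, w j₀ = x → w j₀ ≠ 0 →
      (∀ i, ∑ j, w j * z ^ ((r i : ℕ) * (c j : ℕ)) = 0) → False := by
    have hwf : WellFounded (DvdNotUnit : 𝓞 K → 𝓞 K → Prop) := wellFounded_dvdNotUnit
    intro x
    induction x using hwf.induction with
    | _ x IH =>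
    intro w hx hne hrel
    have hall : ∀ j, lam ∣ w j := main w hrel
    choose u hu using hall
    have hune : u j₀ ≠ 0 := by
      intro h; apply hne; rw [hu j₀, h, mul_zero]
    refine IH (u j₀) ?_ u rfl hune ?_
    · exact ⟨hune, lam, hlam.not_unit, by rw [← hx, hu j₀]; exact mul_comm _ _⟩
    · intro i
      have h1 : lam * ∑ j, u j * z ^ ((r i : ℕ) * (c j : ℕ)) = 0 := by
        rw [Finset.mul_sum]
        rw [← hrel i]
        exact Finset.sum_congr rfl fun j _ => by rw [← mul_assoc, ← hu j]
      exact (mul_eq_zero.1 h1).resolve_left hlam.ne_zero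
  exact descent (w j₀) w rfl hwj₀ hrel


open Complex Real Polynomial NumberField



lemma det_map_aeval {M : Type*} [CommRing M] (μ' : M) {k : ℕ} (e : Fin k → Fin k → ℕ) :
    Polynomial.aeval μ' (Matrix.of fun i j : Fin k => (X : Polynomial ℤ) ^ e i j).det
      = (Matrix.of fun i j : Fin k => μ' ^ e i j).det := by
  have hrd := RingHom.map_det ((Polynomial.aeval μ' : Polynomial ℤ →ₐ[ℤ] M) : Polynomial ℤ →+* M)
    (Matrix.of fun i j : Fin k => (X : Polynomial ℤ) ^ e i j)
  refine hrd.trans ?_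
  congr 1
  ext i j
  simp

theorem cheb' (p : ℕ+) [hp : Fact (Nat.Prime (p : ℕ))] {L : Type*} [Field L] [CharZero L]
    {μ : L} (hμ : IsPrimitiveRoot μ (p : ℕ)) {k : ℕ} (r c : Fin k → Fin (p : ℕ))
    (hr : Function.Injective r) (hc : Function.Injective c) :
    (Matrix.of fun i j : Fin k => μ ^ ((r i : ℕ) * (c j : ℕ))).det ≠ 0 := by
  intro h0
  set D : Polynomial ℤ :=
    (Matrix.of fun i j : Fin k => (X : Polynomial ℤ) ^ ((r i : ℕ) * (c j : ℕ))).det with hD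
  have h1 : Polynomial.aeval μ D = 0 := by
    rw [hD, det_map_aeval μ (fun i j => (r i : ℕ) * (c j : ℕ)), h0]
  have hdvd : cyclotomic (p : ℕ) ℤ ∣ D := by
    rw [cyclotomic_eq_minpoly hμ p.pos]
    exact minpoly.isIntegrallyClosed_dvd (hμ.isIntegral p.pos) h1
  have hη : IsPrimitiveRoot (IsCyclotomicExtension.zeta p ℚ (CyclotomicField p ℚ)) (p : ℕ) :=
    IsCyclotomicExtension.zeta_spec p ℚ _
  have h2 : Polynomial.aeval (IsCyclotomicExtension.zeta p ℚ (CyclotomicField p ℚ)) D = 0 := by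
    obtain ⟨E, hE⟩ := hdvd
    erw [hE, map_mul, cyclotomic_eq_minpoly hη p.pos, minpoly.aeval, zero_mul]
  erw [hD, det_map_aeval _ (fun i j => (r i : ℕ) * (c j : ℕ))] at h2
  exact cheb p r c hr hc h2

lemma inj2 {N : ℕ} (x y : Fin N) (hxy : x ≠ y) : Function.Injective ![x, y] := by
  intro i j h
  fin_cases i <;> fin_cases j <;> simp_all

/-- **Chebotarëv's theorem.** The `n × n` discrete Fourier transform matrix, with
`(j,k)`-entry `exp(2πi·jk/n)/√n`, has the nonvanishing minors property (every square
submatrix formed by selecting distinct rows and distinct columns has nonzero determinant)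
if and only if `n` is prime or `n = 1`. -/
theorem dft_nonvanishing_minors_iff (n : ℕ) (hn : 1 ≤ n) :
    (∀ (k : ℕ) (ri ci : Fin k → Fin n), Function.Injective ri → Function.Injective ci →
      (Matrix.of fun i j : Fin k =>
        Complex.exp (2 * Real.pi * Complex.I * ((ri i : ℕ) * (ci j : ℕ) : ℕ) / n)
          / (Real.sqrt n : ℂ)).det ≠ 0)
    ↔ (n.Prime ∨ n = 1) := by
  have hn0 : (0 : ℝ) < n := by exact_mod_cast hn
  have hsn : ((Real.sqrt n : ℝ) : ℂ) ≠ 0 := by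
    simp only [ne_eq, Complex.ofReal_eq_zero]
    exact ne_of_gt (Real.sqrt_pos.2 hn0)
  have hnz : (n : ℂ) ≠ 0 := Nat.cast_ne_zero.2 (by omega)
  constructor
  · intro H
    by_cases h1 : n = 1
    · exact Or.inr h1
    have hn2 : 2 ≤ n := by omega
    left
    by_contra hnp
    obtain ⟨m, hmn, hm2, hmlt⟩ := Nat.exists_dvd_of_not_prime2 hn2 hnp
    set b := n / m with hbdef
    have hmb : m * b = n := Nat.mul_div_cancel' hmn
    have hb2 : 2 ≤ b := by
      by_contra hb
      interval_cases b <;> omega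
    have hblt : b < n := by
      have h2b : 2 * b ≤ m * b := Nat.mul_le_mul_right b hm2
      omega
    have hm0 : m < n := hmlt
    refine H 2 ![⟨0, by omega⟩, ⟨m, by omega⟩] ![⟨0, by omega⟩, ⟨b, by omega⟩]
      (inj2 _ _ (Fin.ne_of_val_ne (by simp; omega))) (inj2 _ _ (Fin.ne_of_val_ne (by simp; omega)))
      ?_
    have en : Complex.exp (2 * Real.pi * Complex.I * ((n : ℕ) : ℂ) / n) = 1 := by
      rw [mul_div_assoc, div_self hnz, mul_one, Complex.exp_two_pi_mul_I]
    rw [Matrix.det_fin_two]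
    simp only [Matrix.of_apply, Matrix.cons_val_zero, Matrix.cons_val_one, Matrix.head_cons]
    norm_num
    rw [show (m : ℂ) * (b : ℂ) = ((n : ℕ) : ℂ) from by exact_mod_cast congrArg (Nat.cast (R := ℂ)) hmb,
      en]
    norm_num
  · rintro (hp | h1)
    · haveI : Fact (Nat.Prime n) := ⟨hp⟩
      intro k ri ci hri hci
      set pn : ℕ+ := ⟨n, by omega⟩ with hpn
      haveI : Fact (Nat.Prime (pn : ℕ)) := ⟨hp⟩
      have hζ : IsPrimitiveRoot (Complex.exp (2 * Real.pi * Complex.I / n)) n :=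
        Complex.isPrimitiveRoot_exp n (by omega)
      have hdet := cheb' pn (L := ℂ) hζ ri ci hri hci
      have hM : (Matrix.of fun i j : Fin k =>
            Complex.exp (2 * Real.pi * Complex.I * (((ri i : ℕ) * (ci j : ℕ) : ℕ) : ℂ) / n)
              / ((Real.sqrt n : ℝ) : ℂ))
          = ((Real.sqrt n : ℝ) : ℂ)⁻¹ • (Matrix.of fun i j : Fin k =>
            Complex.exp (2 * Real.pi * Complex.I / n) ^ ((ri i : ℕ) * (ci j : ℕ))) := by
        ext i j
        simp only [Matrix.smul_apply, Matrix.of_apply, smul_eq_mul]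
        rw [← Complex.exp_nat_mul, div_eq_inv_mul]
        congr 2
        push_cast
        ring
      rw [hM, Matrix.det_smul]
      exact mul_ne_zero (pow_ne_zero _ (inv_ne_zero hsn)) hdet
    · subst h1
      intro k ri ci hri hci
      have hk : k ≤ 1 := by simpa using Fintype.card_le_of_injective ri hri
      interval_cases k
      · rw [Matrix.det_fin_zero]
        exact one_ne_zero
      · rw [Matrix.det_fin_one]
        simp only [Matrix.of_apply]
        have h1 : (ri 0 : ℕ) = 0 := by omega
        have h2 : (ci 0 : ℕ) = 0 := by omega
        rw [h1, h2]
        simp [Real.sqrt_one]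
end

section
/- Let p be a prime and let f be a nonzero polynomial with complex coefficients of degree at most p−1. If f has m distinct roots which are p-th roots of unity, then the number of nonzero coefficients of f is strictly greater than m. -/
open Polynomial

/-- Product of distinct linear factors divides. -/
lemma prod_X_sub_C_dvd_of_eval_eq_zero {R : Type*} [CommRing R] [IsDomain R]
    (s : Finset R) (G : R[X]) (h : ∀ r ∈ s, G.eval r = 0) :
    (∏ r ∈ s, (X - C r)) ∣ G := by
  classical
  induction s using Finset.induction_on generalizing G with
  | empty => simpa using one_dvd _
  | @insert a s ha ih =>
    obtain ⟨H, rfl⟩ := (dvd_iff_isRoot).mpr (h a (s.mem_insert_self a))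
    rw [Finset.prod_insert ha]
    refine mul_dvd_mul_left _ (ih H fun r hr => ?_)
    have h0 := h r (Finset.mem_insert_of_mem hr)
    rw [eval_mul, eval_sub, eval_X, eval_C] at h0
    rcases mul_eq_zero.mp h0 with h1 | h1
    · exact absurd (sub_eq_zero.mp h1) (fun e => ha (e ▸ hr))
    · exact h1

lemma fp_weight (p : ℕ) [hp : Fact p.Prime] :
    ∀ (m : ℕ) (g : Polynomial (ZMod p)), g ≠ 0 → g.natDegree ≤ p - 1 →
      (X - 1) ^ m ∣ g → m < g.support.card := by
  intro m
  induction m with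
  | zero =>
    intro g hg _ _
    simpa [Finset.card_pos, Polynomial.support_nonempty] using hg
  | succ m ih =>
    -- inner induction on natDegree to strip off powers of X
    suffices H : ∀ (N : ℕ) (g : Polynomial (ZMod p)), g.natDegree ≤ N → g ≠ 0 →
        g.natDegree ≤ p - 1 → (X - 1) ^ (m + 1) ∣ g → m + 1 < g.support.card by
      intro g; exact H g.natDegree g le_rfl
    intro N
    induction N with
    | zero =>
      intro g hgN hg hdeg hdvd
      -- natDegree g = 0, g = C c nonzero, but X - 1 divides, contradiction
      exfalso
      have hdvd1 : (X - 1 : (ZMod p)[X]) ∣ g := dvd_trans (dvd_pow_self _ (Nat.succ_ne_zero m)) hdvd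
      have h1 : g.eval 1 = 0 := by
        obtain ⟨q, rfl⟩ := hdvd1
        simp
      have : g = C (g.coeff 0) := Polynomial.eq_C_of_natDegree_le_zero hgN
      rw [this] at h1 hg
      simp at h1
      rw [h1] at hg
      simp at hg
    | succ N ihN =>
      intro g hgN hg hdeg hdvd
      by_cases h0 : g.coeff 0 = 0
      · -- g = X * h
        obtain ⟨h, rfl⟩ := Polynomial.X_dvd_iff.mpr h0
        have hh : h ≠ 0 := fun e => hg (by rw [e, mul_zero])
        have hXh : (X * h).natDegree = h.natDegree + 1 := by
          rw [Polynomial.natDegree_X_mul hh]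
        have hdvdh : (X - 1) ^ (m + 1) ∣ h := by
          have hcop : IsCoprime ((X - 1 : (ZMod p)[X]) ^ (m + 1)) X :=
            IsCoprime.pow_left ⟨-1, 1, by ring⟩
          exact hcop.dvd_of_dvd_mul_left hdvd
        have hcard : (X * h).support.card = h.support.card := by
          have : (X * h).support = h.support.map ⟨fun n => n + 1, add_left_injective 1⟩ := by
            ext n
            simp only [Finset.mem_map, Function.Embedding.coeFn_mk,
              Polynomial.mem_support_iff]
            cases n with
            | zero =>
              simp only [Polynomial.mul_coeff_zero, Polynomial.coeff_X_zero, zero_mul,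
                ne_eq, not_true_eq_false, false_iff]
              rintro ⟨a, ha, h⟩; omega
            | succ n =>
              rw [Polynomial.coeff_X_mul]
              constructor
              · intro hn; exact ⟨n, hn, rfl⟩
              · rintro ⟨a, ha, h⟩
                have : a = n := by omega
                rwa [this] at ha
          rw [this, Finset.card_map]
        rw [hcard]
        exact ihN h (by omega) hh (by omega) hdvdh
      · -- main step: pass to X * derivative g
        have hdvdD : (X - 1) ^ m ∣ derivative g := by
          obtain ⟨q, hq⟩ := hdvd
          rw [hq, derivative_mul, derivative_pow]
          have t1 : (X - 1 : (ZMod p)[X]) ^ m ∣ C ((m + 1 : ℕ) : ZMod p) * (X - 1) ^ (m + 1 - 1) * derivative (X - 1) * q := by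
            simp only [Nat.add_sub_cancel]
            exact (((dvd_refl _).mul_left _).mul_right _).mul_right _
          have t2 : (X - 1 : (ZMod p)[X]) ^ m ∣ (X - 1) ^ (m + 1) * derivative q :=
            (pow_dvd_pow _ (by omega)).mul_right _
          exact dvd_add t1 t2
        have hcoeff : ∀ n : ℕ, (X * derivative g).coeff n = g.coeff n * n := by
          intro n
          cases n with
          | zero => simp [Polynomial.mul_coeff_zero]
          | succ n =>
            rw [Polynomial.coeff_X_mul, Polynomial.coeff_derivative]
            push_cast; ring
        have hsupp : (X * derivative g).support = g.support.erase 0 := by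
          ext n
          rw [Finset.mem_erase, Polynomial.mem_support_iff, Polynomial.mem_support_iff, hcoeff]
          constructor
          · intro hn
            refine ⟨fun e => by simp [e] at hn, fun e => hn (by rw [e, zero_mul])⟩
          · rintro ⟨hn0, hcn⟩
            have hnle : n ≤ p - 1 := le_trans (Polynomial.le_natDegree_of_ne_zero hcn) hdeg
            have : (n : ZMod p) ≠ 0 := by
              rw [Ne, ZMod.natCast_eq_zero_iff]
              intro hdvd'
              have := Nat.le_of_dvd (Nat.pos_of_ne_zero hn0) hdvd'
              have hp2 := hp.out.two_le
              omega
            exact mul_ne_zero hcn this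
        have h0mem : (0 : ℕ) ∈ g.support := Polynomial.mem_support_iff.mpr h0
        have hcard : g.support.card = (X * derivative g).support.card + 1 := by
          rw [hsupp, Finset.card_erase_of_mem h0mem]
          have : 0 < g.support.card := Finset.card_pos.mpr ⟨0, h0mem⟩
          omega
        have hdegpos : g.natDegree ≠ 0 := by
          intro e
          have hdvd1 : (X - 1 : (ZMod p)[X]) ∣ g :=
            dvd_trans (dvd_pow_self _ (Nat.succ_ne_zero m)) hdvd
          have h1 : g.eval 1 = 0 := by obtain ⟨q, rfl⟩ := hdvd1; simp
          have hC : g = C (g.coeff 0) := Polynomial.eq_C_of_natDegree_le_zero (le_of_eq e)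
          rw [hC] at h1; simp at h1; exact h0 h1
        have hg' : X * derivative g ≠ 0 := by
          intro e
          have : g.natDegree ∈ (X * derivative g).support := by
            rw [hsupp, Finset.mem_erase]
            exact ⟨hdegpos, Polynomial.natDegree_mem_support_of_nonzero hg⟩
          rw [e] at this; simp at this
        have hdeg' : (X * derivative g).natDegree ≤ p - 1 := by
          refine Polynomial.natDegree_le_iff_coeff_eq_zero.mpr fun n hn => ?_
          rw [hcoeff, Polynomial.coeff_eq_zero_of_natDegree_lt (lt_of_le_of_lt hdeg hn), zero_mul]
        have hdvd' : (X - 1) ^ m ∣ X * derivative g := Dvd.dvd.mul_left hdvdD X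
        have := ih _ hg' hdeg' hdvd'
        omega
/-- If `p` is prime and `f` is a nonzero complex polynomial of degree at most `p - 1`
that vanishes at `m` distinct `p`-th roots of unity, then the number of nonzero
coefficients of `f` is strictly greater than `m`. -/
theorem weight_gt_card_roots_of_unity (p : ℕ) (hp : p.Prime) (f : Polynomial ℂ)
    (hf : f ≠ 0) (hdeg : f.natDegree ≤ p - 1) (S : Finset ℂ)
    (hS : ∀ z ∈ S, z ^ p = 1 ∧ f.eval z = 0) :
    S.card < f.support.card := by
  haveI : Fact p.Prime := ⟨hp⟩
  haveI : NeZero p := ⟨hp.ne_zero⟩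
  by_contra hcon
  push_neg at hcon
  set k := f.support.card with hk
  obtain ⟨T, hTS, hTcard⟩ := Finset.exists_subset_card_eq hcon
  -- index equivalences
  let eA : Fin k ≃ {x // x ∈ f.support} := (Finset.equivFinOfCardEq rfl).symm
  let eT : Fin k ≃ {x // x ∈ T} := (Finset.equivFinOfCardEq hTcard).symm
  set e : Fin k → ℕ := fun j => (eA j : ℕ) with he
  have he_inj : Function.Injective e :=
    fun i j h => eA.injective (Subtype.ext h)
  have he_mem : ∀ j, e j ∈ f.support := fun j => (eA j).2
  have he_le : ∀ j, e j ≤ p - 1 := fun j =>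
    le_trans (Polynomial.le_natDegree_of_mem_supp _ (he_mem j)) hdeg
  set z : Fin k → ℂ := fun i => ((eT i : ℂ)) with hz
  have hz_inj : Function.Injective z :=
    fun i j h => eT.injective (Subtype.ext h)
  have hzS : ∀ i, z i ∈ S := fun i => hTS (eT i).2
  -- primitive root and exponents
  have hζ : IsPrimitiveRoot (Complex.exp (2 * Real.pi * Complex.I / p)) p :=
    Complex.isPrimitiveRoot_exp p hp.ne_zero
  set ζ := Complex.exp (2 * Real.pi * Complex.I / p) with hζdef
  have haex : ∀ i, ∃ b, b < p ∧ ζ ^ b = z i := by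
    intro i
    obtain ⟨b, hb, hbe⟩ := hζ.eq_pow_of_pow_eq_one (hS _ (hzS i)).1
    exact ⟨b, hb, hbe⟩
  choose a halt haζ using haex
  -- the cyclotomic setup
  set Φ := cyclotomic p ℤ with hΦ
  have hirr : Irreducible Φ := Polynomial.cyclotomic.irreducible hp.pos
  have hprime : Prime Φ := hirr.prime
  haveI : IsDomain (AdjoinRoot Φ) := AdjoinRoot.isDomain_of_prime hprime
  haveI : IsNoetherianRing (AdjoinRoot Φ) :=
    isNoetherianRing_of_surjective (Polynomial ℤ) _ (AdjoinRoot.mk Φ) (AdjoinRoot.mk_surjective)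
  haveI : WfDvdMonoid (AdjoinRoot Φ) := IsNoetherianRing.wfDvdMonoid
  have hζ0 : aeval ζ Φ = 0 := by
    have := hζ.isRoot_cyclotomic hp.pos
    rw [Polynomial.IsRoot] at this
    rw [hΦ, Polynomial.aeval_def, ← Polynomial.eval_map, Polynomial.map_cyclotomic]
    exact this
  set Ψ := AdjoinRoot.liftAlgHom Φ (Algebra.ofId ℤ ℂ) ζ (by rw [← hζ0, Polynomial.aeval_def]; rfl) with hΨ
  have hΨroot : Ψ (AdjoinRoot.root Φ) = ζ := by rw [hΨ]; apply AdjoinRoot.liftAlgHom_root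
  have hΨinj : Function.Injective Ψ := by
    rw [injective_iff_map_eq_zero]
    intro x hx
    obtain ⟨g, rfl⟩ := AdjoinRoot.mk_surjective x
    rw [hΨ, AdjoinRoot.liftAlgHom_mk] at hx
    have hint : IsIntegral ℤ ζ := hζ.isIntegral hp.pos
    have hdvd : minpoly ℤ ζ ∣ g := minpoly.isIntegrallyClosed_dvd hint hx
    rw [← Polynomial.cyclotomic_eq_minpoly hζ hp.pos] at hdvd
    exact AdjoinRoot.mk_eq_zero.mpr hdvd
  have h1 : aeval (1 : ZMod p) Φ = 0 := by
    rw [hΦ, Polynomial.aeval_def, Polynomial.eval₂_at_one, Polynomial.eval_one_cyclotomic_prime]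
    simp
  set φ := AdjoinRoot.liftAlgHom Φ (Algebra.ofId ℤ (ZMod p)) (1 : ZMod p) (by rw [← h1, Polynomial.aeval_def]; rfl) with hφ
  have hφroot : φ (AdjoinRoot.root Φ) = 1 := by rw [hφ]; apply AdjoinRoot.liftAlgHom_root
  set π := AdjoinRoot.root Φ - 1 with hπ
  have hπp : π ∣ ((p : ℤ) : AdjoinRoot Φ) := by
    have hd : (X - C 1 : Polynomial ℤ) ∣ Φ - C (Φ.eval 1) := Polynomial.X_sub_C_dvd_sub_C_eval
    have := map_dvd (AdjoinRoot.mk Φ) hd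
    rw [map_sub, map_sub, AdjoinRoot.mk_X, AdjoinRoot.mk_C, AdjoinRoot.mk_self,
      Polynomial.eval_one_cyclotomic_prime, zero_sub, dvd_neg, AdjoinRoot.mk_C] at this
    simpa [hπ] using this
  have hker : ∀ x : AdjoinRoot Φ, φ x = 0 → π ∣ x := by
    intro x hx
    obtain ⟨g, rfl⟩ := AdjoinRoot.mk_surjective x
    rw [hφ, AdjoinRoot.liftAlgHom_mk, Polynomial.eval₂_at_one] at hx
    obtain ⟨s, hs⟩ := (ZMod.intCast_zmod_eq_zero_iff_dvd _ p).mp hx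
    have hd : (X - C 1 : Polynomial ℤ) ∣ g - C (g.eval 1) := Polynomial.X_sub_C_dvd_sub_C_eval
    have h2 := map_dvd (AdjoinRoot.mk Φ) hd
    rw [map_sub, map_sub, AdjoinRoot.mk_X, AdjoinRoot.mk_C] at h2
    have h3 : π ∣ (AdjoinRoot.mk Φ) (C (g.eval 1)) := by
      rw [AdjoinRoot.mk_C, hs, map_mul, map_natCast]
      exact Dvd.dvd.mul_right (by exact_mod_cast hπp) _
    have h4 : AdjoinRoot.mk Φ g =
        (AdjoinRoot.mk Φ g - (AdjoinRoot.mk Φ) (C (g.eval 1))) + (AdjoinRoot.mk Φ) (C (g.eval 1)) := by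
      ring
    rw [h4]
    exact dvd_add (by rw [AdjoinRoot.mk_C] at h2 ⊢; exact h2) h3
  have hπ0 : π ≠ 0 := by
    intro h
    have := congrArg Ψ h
    rw [map_sub, hΨroot, map_one, map_zero, sub_eq_zero] at this
    exact hζ.ne_one hp.one_lt this
  have hπu : ¬ IsUnit π := by
    intro hu
    have h4 : φ π = 0 := by rw [hπ, map_sub, hφroot, map_one, sub_self]
    have := hu.map φ
    rw [h4] at this
    exact not_isUnit_zero this
  -- matrices
  set Nmat : Matrix (Fin k) (Fin k) (AdjoinRoot Φ) :=
    fun i j => (AdjoinRoot.root Φ) ^ (a i * e j) with hNmat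
  set Mmat : Matrix (Fin k) (Fin k) ℂ := fun i j => z i ^ e j with hMmat
  have hmap : Nmat.map Ψ = Mmat := by
    funext i j
    rw [hNmat, hMmat]
    show Ψ ((AdjoinRoot.root Φ) ^ (a i * e j)) = z i ^ e j
    rw [map_pow, hΨroot, pow_mul, haζ]
  -- the kernel vector over ℂ coming from f
  set c : Fin k → ℂ := fun j => f.coeff (e j) with hc
  have hc0 : c ≠ 0 := by
    obtain ⟨n, hn⟩ := Polynomial.support_nonempty.mpr hf
    intro hcz
    have h5 := congrFun hcz (eA.symm ⟨n, hn⟩)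
    rw [hc] at h5
    simp only [he, Equiv.apply_symm_apply, Pi.zero_apply] at h5
    exact (Polynomial.mem_support_iff.mp hn) h5
  have hsum_eval : ∀ x : ℂ, f.eval x = ∑ j : Fin k, f.coeff (e j) * x ^ (e j) := by
    intro x
    rw [Polynomial.eval_eq_sum, Polynomial.sum_def,
      ← Finset.sum_attach f.support (fun n => f.coeff n * x ^ n), ← Finset.univ_eq_attach,
      ← Equiv.sum_comp eA (fun y : {m // m ∈ f.support} => f.coeff y * x ^ (y : ℕ))]
  have hMc : Mmat.mulVec c = 0 := by
    funext i
    have h6 := (hS _ (hzS i)).2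
    rw [hsum_eval (z i)] at h6
    simp only [Matrix.mulVec, dotProduct, hMmat, hc, Pi.zero_apply]
    rw [← h6]
    exact Finset.sum_congr rfl fun j _ => mul_comm _ _
  have hdetM : Mmat.det = 0 := Matrix.exists_mulVec_eq_zero_iff.mp ⟨c, hc0, hMc⟩
  have hdetN : Nmat.det = 0 := by
    apply hΨinj
    rw [map_zero]
    have h := RingHom.map_det Ψ.toRingHom Nmat
    rw [RingHom.mapMatrix_apply] at h
    rw [show Nmat.map ⇑Ψ.toRingHom = Nmat.map ⇑Ψ from rfl, hmap] at h
    exact h.trans hdetM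
  obtain ⟨v, hv0, hNv⟩ := Matrix.exists_mulVec_eq_zero_iff.mpr hdetN
  obtain ⟨j0, hj0⟩ := Function.ne_iff.mp hv0
  -- extract the largest power of π dividing all coordinates of v
  obtain ⟨n0, c0, hc0dvd, hvj0⟩ := WfDvdMonoid.max_power_factor' hj0 hπu
  have hbound : ¬ (∀ j, π ^ (n0 + 1) ∣ v j) := by
    intro hall
    obtain ⟨u, hu⟩ := hall j0
    rw [hvj0, pow_succ, mul_assoc] at hu
    have := mul_left_cancel₀ (pow_ne_zero n0 hπ0) hu
    exact hc0dvd ⟨u, this⟩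
  have hexists : ∃ t, (∀ j, π ^ t ∣ v j) ∧ ¬ (∀ j, π ^ (t + 1) ∣ v j) := by
    by_contra hno
    push_neg at hno
    have hall : ∀ t, ∀ j, π ^ t ∣ v j := by
      intro t
      induction t with
      | zero => intro j; simp
      | succ t ih => exact hno t ih
    exact hbound (hall (n0 + 1))
  obtain ⟨t, hPt, hPt1⟩ := hexists
  choose w hw using fun j => hPt j
  obtain ⟨j1, hj1⟩ : ∃ j, ¬ π ∣ w j := by
    by_contra hno
    push_neg at hno
    refine hPt1 fun j => ?_
    obtain ⟨u, hu⟩ := hno j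
    exact ⟨u, by rw [hw j, hu, pow_succ, mul_assoc]⟩
  have hφw : φ (w j1) ≠ 0 := fun h => hj1 (hker _ h)
  -- from N v = 0 deduce N w = 0 coordinatewise
  have hNw : ∀ i, ∑ j, Nmat i j * w j = 0 := by
    intro i
    have h7 := congrFun hNv i
    simp only [Matrix.mulVec, dotProduct, Pi.zero_apply] at h7
    have h8 : ∑ j, Nmat i j * v j = π ^ t * ∑ j, Nmat i j * w j := by
      rw [Finset.mul_sum]
      exact Finset.sum_congr rfl fun j _ => by rw [hw j]; ring
    rw [h8] at h7
    exact (mul_eq_zero.mp h7).resolve_left (pow_ne_zero t hπ0)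
  -- build the polynomial over AdjoinRoot Φ
  set G : Polynomial (AdjoinRoot Φ) := ∑ j : Fin k, C (w j) * X ^ (e j) with hG
  have hGeval : ∀ i, G.eval ((AdjoinRoot.root Φ) ^ (a i)) = 0 := by
    intro i
    rw [hG]
    rw [Polynomial.eval_finset_sum]
    have h9 : ∀ j ∈ Finset.univ, (C (w j) * X ^ (e j)).eval ((AdjoinRoot.root Φ) ^ (a i))
        = Nmat i j * w j := by
      intro j _
      rw [Polynomial.eval_mul, Polynomial.eval_C, Polynomial.eval_pow, Polynomial.eval_X,
        ← pow_mul, hNmat]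
      ring
    rw [Finset.sum_congr rfl h9]
    exact hNw i
  have hrinj : Function.Injective (fun i => (AdjoinRoot.root Φ) ^ (a i)) := by
    intro i j h
    have h' : (AdjoinRoot.root Φ) ^ a i = (AdjoinRoot.root Φ) ^ a j := h
    apply hz_inj
    rw [← haζ i, ← haζ j, ← hΨroot, ← map_pow, ← map_pow, h']
  set s : Finset (AdjoinRoot Φ) := Finset.image (fun i => (AdjoinRoot.root Φ) ^ (a i)) Finset.univ
    with hsdef
  have hscard : s.card = k := by
    rw [hsdef, Finset.card_image_of_injective _ hrinj, Finset.card_univ, Fintype.card_fin]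
  have hdvdG : (∏ r ∈ s, (X - C r)) ∣ G := by
    refine prod_X_sub_C_dvd_of_eval_eq_zero s G fun r hr => ?_
    rw [hsdef] at hr
    obtain ⟨i, _, rfl⟩ := Finset.mem_image.mp hr
    exact hGeval i
  -- map everything down to ZMod p
  have hmapdvd := Polynomial.map_dvd (φ : AdjoinRoot Φ →+* ZMod p) hdvdG
  have hprodmap : (∏ r ∈ s, (X - C r)).map (φ : AdjoinRoot Φ →+* ZMod p)
      = ((X - 1 : Polynomial (ZMod p))) ^ k := by
    rw [← Polynomial.coe_mapRingHom, map_prod]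
    have h10 : ∀ r ∈ s, (Polynomial.mapRingHom (φ : AdjoinRoot Φ →+* ZMod p)) (X - C r)
        = (X - 1 : Polynomial (ZMod p)) := by
      intro r hr
      rw [hsdef] at hr
      obtain ⟨i, _, rfl⟩ := Finset.mem_image.mp hr
      simp only [Polynomial.coe_mapRingHom, Polynomial.map_sub, Polynomial.map_X,
        Polynomial.map_C]
      rw [show (φ : AdjoinRoot Φ →+* ZMod p) ((AdjoinRoot.root Φ) ^ (a i))
        = φ ((AdjoinRoot.root Φ) ^ (a i)) from rfl, map_pow, hφroot, one_pow, Polynomial.C_1]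
    rw [Finset.prod_congr rfl h10, Finset.prod_const, hscard]
  have hmapG : G.map (φ : AdjoinRoot Φ →+* ZMod p) = ∑ j : Fin k, C (φ (w j)) * X ^ (e j) := by
    rw [hG, ← Polynomial.coe_mapRingHom, map_sum]
    refine Finset.sum_congr rfl fun j _ => ?_
    simp only [Polynomial.coe_mapRingHom, Polynomial.map_mul, Polynomial.map_C,
      Polynomial.map_pow, Polynomial.map_X]
    rfl
  set Ghat : Polynomial (ZMod p) := ∑ j : Fin k, C (φ (w j)) * X ^ (e j) with hGhat
  have hcoeffhat : ∀ n, Ghat.coeff n = ∑ j : Fin k, if e j = n then φ (w j) else 0 := by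
    intro n
    rw [hGhat, Polynomial.finset_sum_coeff]
    refine Finset.sum_congr rfl fun j _ => ?_
    rw [Polynomial.coeff_C_mul, Polynomial.coeff_X_pow]
    by_cases h : e j = n
    · simp [h]
    · simp [h, Ne.symm h]
  have hcoeffj1 : Ghat.coeff (e j1) = φ (w j1) := by
    rw [hcoeffhat]
    rw [Finset.sum_eq_single j1]
    · simp
    · intro j _ hj
      have : e j ≠ e j1 := fun h => hj (he_inj h)
      simp [this]
    · intro h; exact absurd (Finset.mem_univ j1) h
  have hGhat0 : Ghat ≠ 0 := by
    intro h
    rw [h, Polynomial.coeff_zero] at hcoeffj1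
    exact hφw hcoeffj1.symm
  have hGhatdeg : Ghat.natDegree ≤ p - 1 := by
    refine Polynomial.natDegree_le_iff_coeff_eq_zero.mpr fun n hn => ?_
    rw [hcoeffhat]
    refine Finset.sum_eq_zero fun j _ => ?_
    have : e j ≠ n := by have := he_le j; omega
    simp [this]
  have hGhatsupp : Ghat.support.card ≤ k := by
    have hsub : Ghat.support ⊆ Finset.image e Finset.univ := by
      intro n hn
      rw [Polynomial.mem_support_iff, hcoeffhat] at hn
      have : ∃ j : Fin k, e j = n := by
        by_contra hno
        push_neg at hno
        exact hn (Finset.sum_eq_zero fun j _ => by simp [hno j])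
      obtain ⟨j, hj⟩ := this
      exact Finset.mem_image.mpr ⟨j, Finset.mem_univ j, hj⟩
    calc Ghat.support.card ≤ (Finset.image e Finset.univ).card := Finset.card_le_card hsub
      _ ≤ Finset.univ.card := Finset.card_image_le
      _ = k := by rw [Finset.card_univ, Fintype.card_fin]
  have hfinal : k < Ghat.support.card := by
    refine fp_weight p k Ghat hGhat0 hGhatdeg ?_
    rw [← hmapG, ← hprodmap]
    exact hmapdvd
  omega
end

section
/- Let n ≥ 1 be odd. The discrete cosine transform matrix C_n, which is the ((n+1)/2)×((n+1)/2) matrix with rows and columns indexed by 0,1,…,(n−1)/2 whose (r,s)-entry equals √(1/n) if r = s = 0, equals √(2/n) if exactly one of r, s is 0, and equals 2cos(2πrs/n)/√n otherwise, has the nonvanishing minors property if and only if n is prime or n = 1. -/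
open Real Matrix Polynomial

lemma prodXsubC_dvd {R : Type*} [CommRing R] [IsDomain R] :
    ∀ (k : ℕ) (r : Fin k → R), Function.Injective r → ∀ (f : R[X]),
      (∀ i, f.eval (r i) = 0) → (∏ i, (X - C (r i))) ∣ f := by
  intro k
  induction k with
  | zero => intro r _ f _; simpa using one_dvd f
  | succ k ih =>
    intro r hr f hf
    obtain ⟨q, hq⟩ := dvd_iff_isRoot.mpr (hf 0)
    have hq' : ∀ i : Fin k, q.eval (r i.succ) = 0 := by
      intro i
      have h1 := hf i.succ
      rw [hq] at h1
      simp only [eval_mul, eval_sub, eval_X, eval_C] at h1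
      rcases mul_eq_zero.mp h1 with h | h
      · exact absurd (sub_eq_zero.mp h) (by
          intro he; exact Fin.succ_ne_zero i (hr he))
      · exact h
    have hd := ih (fun i => r i.succ)
      (fun a b h => by
        have := hr h; exact Fin.succ_injective _ this) q hq'
    rw [Fin.prod_univ_succ, hq]
    exact mul_dvd_mul_left _ hd

lemma frenkel {F : Type*} [Field F] :
    ∀ (k : ℕ) (g : Fin k → ℕ) (c : Fin k → F),
      Function.Injective (fun j => ((g j : F))) →
      ((X - 1) ^ k ∣ ∑ j, C (c j) * X ^ (g j)) → ∀ j, c j = 0 := by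
  intro k
  induction k with
  | zero => intro g c _ _ j; exact absurd j.2 (by simp)
  | succ k ih =>
    intro g c hg hdvd
    set f : F[X] := ∑ j, C (c j) * X ^ (g j) with hf
    have key : ∀ (d : F) (m : ℕ), X * derivative (C d * X ^ m) = C (d * m) * X ^ m := by
      intro d m
      rcases Nat.eq_zero_or_pos m with hm | hm
      · subst hm; simp
      · rw [derivative_C_mul_X_pow, mul_left_comm, ← pow_succ', Nat.sub_add_cancel hm]
    -- the modified polynomial
    set h : F[X] := X * derivative f - C ((g 0 : F)) * f with hh
    have hh2 : h = ∑ j, C (c j * ((g j : F) - (g 0 : F))) * X ^ (g j) := by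
      rw [hh, hf, derivative_sum, Finset.mul_sum, Finset.mul_sum, ← Finset.sum_sub_distrib]
      refine Finset.sum_congr rfl fun j _ => ?_
      rw [key]
      rw [← mul_assoc, ← C_mul]
      rw [← sub_mul, ← C_sub]
      ring_nf
    have hdvd1 : (X - 1) ^ k ∣ derivative f := by
      obtain ⟨q, hq⟩ := hdvd
      rw [hq, derivative_mul, derivative_pow]
      refine dvd_add ?_ ?_
      · simp only [Nat.succ_sub_one]
        exact dvd_mul_of_dvd_left (dvd_mul_of_dvd_left (dvd_mul_left _ _) _) _
      · exact dvd_mul_of_dvd_left (pow_dvd_pow _ (Nat.le_succ k)) _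
    have hdvdh : (X - 1) ^ k ∣ h := by
      rw [hh]
      refine dvd_sub (Dvd.dvd.mul_left hdvd1 _) (Dvd.dvd.mul_left ?_ _)
      exact (pow_dvd_pow _ (Nat.le_succ k)).trans hdvd
    -- rewrite h as a sum over Fin k
    have hh3 : h = ∑ j : Fin k, C (c j.succ * ((g j.succ : F) - (g 0 : F))) * X ^ (g j.succ) := by
      rw [hh2, Fin.sum_univ_succ]
      simp
    have htail : ∀ j : Fin k, c j.succ * ((g j.succ : F) - (g 0 : F)) = 0 := by
      refine ih (fun j => g j.succ) _ (fun a b hab => ?_) (hh3 ▸ hdvdh)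
      have := hg hab
      exact Fin.succ_injective _ this
    have htail' : ∀ j : Fin k, c j.succ = 0 := by
      intro j
      have hne : ((g j.succ : F)) - (g 0 : F) ≠ 0 := by
        rw [sub_ne_zero]
        intro he
        exact Fin.succ_ne_zero j (hg he)
      exact (mul_eq_zero.mp (htail j)).resolve_right hne
    have hc0 : c 0 = 0 := by
      have hfval : f = C (c 0) * X ^ (g 0) := by
        rw [hf, Fin.sum_univ_succ]
        simp [htail']
      have h1 : f.eval 1 = 0 := by
        obtain ⟨q, hq⟩ := (dvd_pow_self (X - (1:F[X])) (Nat.succ_ne_zero k)).trans hdvd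
        rw [hq]
        simp
      rw [hfval] at h1
      simpa using h1
    intro j
    refine Fin.cases hc0 htail' j


set_option maxHeartbeats 1000000 in
set_option synthInstance.maxHeartbeats 100000 in
/-- Chebotarev's theorem on roots of unity. -/
theorem cheb_s2 (p : ℕ) (hp : p.Prime) {η : ℂ} (hη : IsPrimitiveRoot η p)
    {k : ℕ} (a b : Fin k → ZMod p) (ha : Function.Injective a) (hb : Function.Injective b) :
    (Matrix.of fun i j : Fin k => η ^ ((a i) * (b j)).val).det ≠ 0 := by
  haveI : Fact p.Prime := ⟨hp⟩
  have hp1 : 1 < p := hp.one_lt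
  have hp0 : 0 < p := hp.pos
  set Φ : Polynomial ℤ := Polynomial.cyclotomic p ℤ with hΦ
  have hroot : (Polynomial.aeval η) Φ = 0 := by
    rw [hΦ, Polynomial.aeval_def, Polynomial.eval₂_eq_eval_map, Polynomial.map_cyclotomic,
      ← Polynomial.IsRoot.def]
    haveI : NeZero ((p : ℕ) : ℂ) := ⟨by exact_mod_cast Nat.cast_ne_zero.mpr hp0.ne'⟩
    exact Polynomial.isRoot_cyclotomic_iff.mpr hη
  set θ : AdjoinRoot Φ →ₐ[ℤ] ℂ := AdjoinRoot.liftAlgHom Φ (Algebra.ofId ℤ ℂ) η hroot with hθdef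
  have hηint : IsIntegral ℤ η :=
    ⟨Polynomial.X ^ p - Polynomial.C 1, Polynomial.monic_X_pow_sub_C 1 hp0.ne', by
      simp [hη.pow_eq_one]⟩
  have hmin : minpoly ℤ η = Φ := (Polynomial.cyclotomic_eq_minpoly hη hp0).symm
  have hθinj : Function.Injective θ := by
    refine (injective_iff_map_eq_zero θ).mpr fun x hx => ?_
    obtain ⟨g, rfl⟩ := AdjoinRoot.mk_surjective x
    change Polynomial.aeval η g = 0 at hx
    have hdvd : Φ ∣ g := hmin ▸ minpoly.isIntegrallyClosed_dvd hηint hx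
    exact AdjoinRoot.mk_eq_zero.mpr hdvd
  haveI : IsDomain (AdjoinRoot Φ) := Function.Injective.isDomain θ.toRingHom hθinj
  haveI : IsNoetherianRing (AdjoinRoot Φ) :=
    isNoetherianRing_of_surjective (Polynomial ℤ) _ (AdjoinRoot.mk Φ) AdjoinRoot.mk_surjective
  haveI hwfi : WfDvdMonoid (AdjoinRoot Φ) := IsNoetherianRing.wfDvdMonoid
  set ρ : AdjoinRoot Φ := AdjoinRoot.root Φ with hρdef
  have hθρ : θ ρ = η := by rw [hθdef, hρdef]; exact AdjoinRoot.liftAlgHom_root _ _ _ _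
  have hρp : ρ ^ p = 1 := by
    apply hθinj
    rw [_root_.map_pow, hθρ, _root_.map_one, hη.pow_eq_one]
  have hpowmod : ∀ m : ℕ, ρ ^ m = ρ ^ (m % p) := by
    intro m
    conv_lhs => rw [← Nat.div_add_mod m p]
    rw [pow_add, pow_mul, hρp, one_pow, one_mul]
  -- the reduction map to ZMod p
  have hΦ1 : Φ.eval₂ (Int.castRingHom (ZMod p)) 1 = 0 := by
    rw [Polynomial.eval₂_at_one, hΦ, Polynomial.eval_one_cyclotomic_prime]
    simp
  set φ : AdjoinRoot Φ →+* ZMod p := AdjoinRoot.lift (Int.castRingHom (ZMod p)) 1 hΦ1 with hφdef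
  have hφρ : φ ρ = 1 := by rw [hφdef, hρdef]; exact AdjoinRoot.lift_root hΦ1
  set pim : AdjoinRoot Φ := 1 - ρ with hπdef
  have hφπ : φ pim = 0 := by rw [hπdef, _root_.map_sub, _root_.map_one, hφρ, sub_self]
  have hπ0 : pim ≠ 0 := by
    intro h
    have : θ pim = 0 := by rw [h, _root_.map_zero]
    rw [hπdef, _root_.map_sub, _root_.map_one, hθρ, sub_eq_zero] at this
    exact hη.ne_one hp1 this.symm
  have hπu : ¬ IsUnit pim := by
    intro h
    have := h.map φ
    rw [hφπ] at this
    exact not_isUnit_zero this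
  -- kernel of φ is contained in (π)
  have hker : ∀ x : AdjoinRoot Φ, φ x = 0 → pim ∣ x := by
    intro x hx
    obtain ⟨g, rfl⟩ := AdjoinRoot.mk_surjective x
    rw [hφdef, AdjoinRoot.lift_mk, Polynomial.eval₂_at_one] at hx
    obtain ⟨t, ht⟩ := (ZMod.intCast_zmod_eq_zero_iff_dvd _ _).mp hx
    have hpdvd : pim ∣ ((p : ℤ) : AdjoinRoot Φ) := by
      have h2 := Polynomial.sub_dvd_eval_sub (1 : AdjoinRoot Φ) ρ
        (Φ.map (algebraMap ℤ (AdjoinRoot Φ)))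
      have e1 : (Φ.map (algebraMap ℤ (AdjoinRoot Φ))).eval ρ = 0 := by
        rw [Polynomial.eval_map, ← Polynomial.aeval_def, hρdef, AdjoinRoot.aeval_eq,
          AdjoinRoot.mk_self]
      have e2 : (Φ.map (algebraMap ℤ (AdjoinRoot Φ))).eval 1 = ((p : ℤ) : AdjoinRoot Φ) := by
        rw [Polynomial.eval_map, Polynomial.eval₂_at_one, hΦ,
          Polynomial.eval_one_cyclotomic_prime]
        simp
      rw [e1, e2, sub_zero] at h2
      exact h2
    push_cast at hpdvd
    have hgdvd : pim ∣ AdjoinRoot.mk Φ g - ((g.eval 1 : ℤ) : AdjoinRoot Φ) := by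
      have h2 := Polynomial.sub_dvd_eval_sub ρ (1 : AdjoinRoot Φ)
        (g.map (algebraMap ℤ (AdjoinRoot Φ)))
      rw [Polynomial.eval_map, ← Polynomial.aeval_def, AdjoinRoot.aeval_eq,
        Polynomial.eval_map, Polynomial.eval₂_at_one] at h2
      have : pim ∣ ρ - 1 := ⟨-1, by rw [hπdef]; ring⟩
      calc pim ∣ ρ - 1 := this
        _ ∣ _ := h2
    have : AdjoinRoot.mk Φ g =
        (AdjoinRoot.mk Φ g - ((g.eval 1 : ℤ) : AdjoinRoot Φ)) + ((g.eval 1 : ℤ) : AdjoinRoot Φ) := by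
      ring
    rw [this]
    refine dvd_add hgdvd ?_
    rw [ht]
    push_cast
    exact Dvd.dvd.mul_right hpdvd _
  -- reduce to showing the determinant over AdjoinRoot Φ is nonzero
  set N : Matrix (Fin k) (Fin k) (AdjoinRoot Φ) :=
    Matrix.of (fun i j : Fin k => ρ ^ ((a i) * (b j)).val) with hNdef
  have hmap : (Matrix.of fun i j : Fin k => η ^ ((a i) * (b j)).val) = N.map θ := by
    ext i j
    simp [hNdef, _root_.map_pow, hθρ]
  rw [hmap]
  intro hdet
  have hdetN : N.det = 0 := by
    apply hθinj
    rw [_root_.map_zero]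
    have h3 := RingHom.map_det θ.toRingHom N
    rw [RingHom.mapMatrix_apply] at h3
    exact h3.trans hdet
  obtain ⟨v, hv, hmv⟩ := Matrix.exists_mulVec_eq_zero_iff.mpr hdetN
  obtain ⟨j0, hj0⟩ := Function.ne_iff.mp hv
  have hj0' : v j0 ≠ 0 := hj0
  have hrel : ∀ i, ∑ j, v j * ρ ^ ((a i) * (b j)).val = 0 := by
    intro i
    have := congrFun hmv i
    simp only [Matrix.mulVec, dotProduct, Pi.zero_apply] at this
    rw [← this]
    refine Finset.sum_congr rfl fun j _ => ?_
    rw [mul_comm]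
    rfl
  -- descent
  have main : ∀ x : AdjoinRoot Φ, x ≠ 0 → ∀ c : Fin k → AdjoinRoot Φ, c j0 = x →
      (∀ i, ∑ j, c j * ρ ^ ((a i) * (b j)).val = 0) → False := by
    intro x
    refine wellFounded_dvdNotUnit.induction
      (C := fun x => x ≠ 0 → ∀ c : Fin k → AdjoinRoot Φ, c j0 = x →
        (∀ i, ∑ j, c j * ρ ^ ((a i) * (b j)).val = 0) → False) x ?_
    intro x IH hx c hcx hrelc
    by_cases hall : ∀ j, φ (c j) = 0
    · -- divide by π
      have hd : ∀ j, ∃ d, c j = pim * d := fun j => hker (c j) (hall j)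
      choose d hdc using hd
      have hrel' : ∀ i, ∑ j, d j * ρ ^ ((a i) * (b j)).val = 0 := by
        intro i
        have h2 := hrelc i
        have h3 : pim * (∑ j, d j * ρ ^ ((a i) * (b j)).val) = 0 := by
          rw [Finset.mul_sum, ← h2]
          exact Finset.sum_congr rfl fun j _ => by rw [hdc j, mul_assoc]
        exact (mul_eq_zero.mp h3).resolve_left hπ0
      have hdj0 : d j0 ≠ 0 := by
        intro h
        apply hx
        rw [← hcx, hdc j0, h, mul_zero]
      refine IH (d j0) ⟨hdj0, pim, hπu, ?_⟩ hdj0 d rfl hrel'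
      rw [← hcx, hdc j0]; ring
    · -- Frenkel's argument
      push_neg at hall
      obtain ⟨j1, hj1⟩ := hall
      set f : Polynomial (AdjoinRoot Φ) := ∑ j, Polynomial.C (c j) * Polynomial.X ^ ((b j).val)
        with hfdef
      set r : Fin k → AdjoinRoot Φ := fun i => ρ ^ ((a i).val) with hrdef
      have hrinj : Function.Injective r := by
        intro i i' hii
        have : η ^ ((a i).val) = η ^ ((a i').val) := by
          have := congrArg θ hii
          simpa [hrdef, map_pow, hθρ] using this
        have := hη.pow_inj (ZMod.val_lt _) (ZMod.val_lt _) this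
        exact ha (ZMod.val_injective p this)
      have heval : ∀ i, f.eval (r i) = 0 := by
        intro i
        rw [hfdef]
        simp only [Polynomial.eval_finset_sum, Polynomial.eval_mul, Polynomial.eval_C,
          Polynomial.eval_pow, Polynomial.eval_X]
        rw [← hrelc i]
        refine Finset.sum_congr rfl fun j _ => ?_
        rw [hrdef, ← pow_mul, hpowmod ((a i).val * (b j).val), ← ZMod.val_mul]
      have hdvdf : (∏ i, (Polynomial.X - Polynomial.C (r i))) ∣ f :=
        prodXsubC_dvd k r hrinj f heval
      have hfac : ∀ i : Fin k, (Polynomial.X - Polynomial.C (r i)).map φ =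
          (Polynomial.X - 1 : Polynomial (ZMod p)) := by
        intro i
        rw [Polynomial.map_sub, Polynomial.map_X, Polynomial.map_C]
        have hri : φ (r i) = 1 := by
          simp only [hrdef]
          rw [_root_.map_pow, hφρ, one_pow]
        rw [hri, Polynomial.C_1]
      have hmapdvd : ((Polynomial.X - 1) ^ k : Polynomial (ZMod p)) ∣ f.map φ := by
        have h4 := Polynomial.map_dvd φ hdvdf
        rwa [Polynomial.map_prod, Finset.prod_congr rfl fun i _ => hfac i,
          Finset.prod_const, Finset.card_univ, Fintype.card_fin] at h4
      have hfmap : f.map φ = ∑ j, Polynomial.C (φ (c j)) * Polynomial.X ^ ((b j).val) := by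
        rw [hfdef, Polynomial.map_sum]
        exact Finset.sum_congr rfl fun j _ => by
          rw [Polynomial.map_mul, Polynomial.map_C, Polynomial.map_pow, Polynomial.map_X]
      have hginj : Function.Injective (fun j : Fin k => (((b j).val : ℕ) : ZMod p)) := by
        intro j j' hjj
        apply hb
        simpa [ZMod.natCast_rightInverse (b j), ZMod.natCast_rightInverse (b j')] using hjj
      have := frenkel k (fun j => (b j).val) (fun j => φ (c j)) hginj (hfmap ▸ hmapdvd) j1
      exact hj1 this
  exact main (v j0) hj0' v rfl hrel


theorem cheb_corollary (p : ℕ) [hp : Fact p.Prime] {η : ℂ} (hη : IsPrimitiveRoot η p)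
    (μ : ZMod p → ℂ) (B : Finset (ZMod p))
    (hcard : (Finset.univ.filter fun x => μ x ≠ 0).card ≤ B.card)
    (hvan : ∀ b ∈ B, ∑ x : ZMod p, μ x * η ^ ((x * b).val) = 0) :
    μ = 0 := by
  classical
  set A := Finset.univ.filter fun x => μ x ≠ 0 with hA
  set m := A.card with hm
  obtain ⟨B', hB'sub, hB'card⟩ := Finset.exists_subset_card_eq hcard
  have eA : Fin m ≃ {x // x ∈ A} := A.equivFin.symm
  have eB : Fin m ≃ {x // x ∈ B'} := (finCongr hB'card.symm).trans B'.equivFin.symm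
  set a : Fin m → ZMod p := fun i => (eA i : ZMod p) with ha
  set b : Fin m → ZMod p := fun j => (eB j : ZMod p) with hb
  have hainj : Function.Injective a := fun i i' h => eA.injective (Subtype.ext h)
  have hbinj : Function.Injective b := fun i i' h => eB.injective (Subtype.ext h)
  set Mm : Matrix (Fin m) (Fin m) ℂ := Matrix.of (fun i j => η ^ ((a i) * (b j)).val) with hMm
  have hdet : Mm.det ≠ 0 := cheb_s2 p hp.out hη a b hainj hbinj
  set ν : Fin m → ℂ := fun i => μ (a i) with hν
  have hvm : ν ᵥ* Mm = 0 := by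
    funext j
    have e1 : ∑ i : Fin m, μ (a i) * η ^ ((a i) * (b j)).val
        = ∑ x : {x // x ∈ A}, μ (x : ZMod p) * η ^ (((x : ZMod p)) * (b j)).val :=
      Equiv.sum_comp eA (fun x : {x // x ∈ A} => μ (x : ZMod p) * η ^ (((x : ZMod p)) * (b j)).val)
    have e2 : ∑ x : {x // x ∈ A}, μ (x : ZMod p) * η ^ (((x : ZMod p)) * (b j)).val
        = ∑ x ∈ A, μ x * η ^ ((x * (b j))).val :=
      Finset.sum_coe_sort A (fun x => μ x * η ^ ((x * (b j))).val)
    have e3 : ∑ x ∈ A, μ x * η ^ ((x * (b j))).val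
        = ∑ x : ZMod p, μ x * η ^ ((x * (b j))).val := by
      refine Finset.sum_subset (Finset.subset_univ A) fun x _ hx => ?_
      have : μ x = 0 := by
        by_contra hc
        exact hx (by simp [hA, hc])
      rw [this, zero_mul]
    have e4 : (ν ᵥ* Mm) j = ∑ i : Fin m, μ (a i) * η ^ ((a i) * (b j)).val := by
      simp [Matrix.vecMul, dotProduct, hν, hMm]
    rw [e4, e1, e2, e3, Pi.zero_apply]
    exact hvan (b j) (hB'sub (eB j).2)
  have hν0 : ν = 0 := by
    have hu : IsUnit Mm.det := hdet.isUnit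
    have h2 : ν ᵥ* (Mm * Mm⁻¹) = (0 : Fin m → ℂ) ᵥ* Mm⁻¹ := by
      rw [← Matrix.vecMul_vecMul, hvm]
    rwa [Matrix.mul_nonsing_inv _ hu, Matrix.vecMul_one, Matrix.zero_vecMul] at h2
  funext x
  by_cases hx : x ∈ A
  · have : ν (eA.symm ⟨x, hx⟩) = 0 := by rw [hν0]; rfl
    rw [hν, ha] at this
    simpa using this
  · have : ¬ (μ x ≠ 0) := by
      intro hc
      exact hx (by simp [hA, hc])
    simpa using this


set_option maxHeartbeats 1000000 in
theorem coscols (p : ℕ) (hp : p.Prime) (hpodd : Odd p) {k : ℕ}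
    (r s : Fin k → ℕ) (hrlt : ∀ i, r i < (p + 1) / 2) (hslt : ∀ j, s j < (p + 1) / 2)
    (hrinj : Function.Injective r) (hsinj : Function.Injective s)
    (h0 : (∃ i, r i = 0) → (∃ j, s j = 0))
    (lam : Fin k → ℝ)
    (hrel : ∀ i, ∑ j, lam j * Real.cos (2 * Real.pi * ((r i * s j : ℕ)) / p) = 0) :
    ∀ j, lam j = 0 := by
  classical
  haveI : Fact p.Prime := ⟨hp⟩
  have hp0 : 0 < p := hp.pos
  set η : ℂ := Complex.exp (2 * Real.pi * Complex.I / p) with hηdef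
  have hη : IsPrimitiveRoot η p := Complex.isPrimitiveRoot_exp p hp0.ne'
  have hlt_sum : ∀ u v : ℕ, u < (p + 1) / 2 → v < (p + 1) / 2 → u + v < p := by
    intro u v hu hv
    obtain ⟨t, ht⟩ := hpodd
    omega
  have hvalcast : ∀ u : ℕ, u < (p + 1) / 2 → ((u : ZMod p)).val = u := by
    intro u hu
    apply ZMod.val_natCast_of_lt
    omega
  have hkey : ∀ (u v : ℕ), u < (p + 1) / 2 → v < (p + 1) / 2 →
      (u : ZMod p) = -(v : ZMod p) → u = 0 ∧ v = 0 := by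
    intro u v hu hv h
    have h1 : ((u + v : ℕ) : ZMod p) = 0 := by push_cast; rw [h]; ring
    have hdvd : p ∣ u + v := (ZMod.natCast_eq_zero_iff _ _).mp h1
    have h2 := Nat.eq_zero_of_dvd_of_lt hdvd (hlt_sum u v hu hv)
    omega
  have hcastinj : ∀ u v : ℕ, u < (p + 1) / 2 → v < (p + 1) / 2 →
      (u : ZMod p) = (v : ZMod p) → u = v := by
    intro u v hu hv h
    rw [← hvalcast u hu, ← hvalcast v hv, h]
  set sc : Fin k → ZMod p := fun j => (s j : ZMod p) with hsc
  set rc : Fin k → ZMod p := fun i => (r i : ZMod p) with hrc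
  set μ : ZMod p → ℂ := fun x => ∑ j, (lam j : ℂ) *
      ((if sc j = x then 1 else 0) + (if -(sc j) = x then 1 else 0)) with hμ
  set B : Finset (ZMod p) :=
    (Finset.univ.image rc) ∪ (Finset.univ.image fun i => -(rc i)) with hB
  -- powers of η and cosines
  have hpow : ∀ m : ℕ, η ^ m = Complex.exp ((2 * Real.pi * m / p : ℝ) * Complex.I) := by
    intro m
    rw [hηdef, ← Complex.exp_nat_mul]
    congr 1
    push_cast
    ring
  have hconj : ∀ x : ZMod p, η ^ (-x).val = (η ^ x.val)⁻¹ := by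
    intro x
    have h1 : η ^ (x.val + (-x).val) = 1 := by
      have h2 : ((x.val + (-x).val : ℕ) : ZMod p) = 0 := by
        push_cast
        rw [ZMod.natCast_val, ZMod.natCast_val, ZMod.cast_id, ZMod.cast_id]
        ring
      obtain ⟨t, ht⟩ := (ZMod.natCast_eq_zero_iff _ _).mp h2
      rw [ht, pow_mul, hη.pow_eq_one, one_pow]
    rw [pow_add] at h1
    exact eq_inv_of_mul_eq_one_left (by rw [mul_comm] at h1; exact h1)
  have hcos1 : ∀ x : ZMod p, η ^ x.val + η ^ (-x).val
      = ((2 * Real.cos (2 * Real.pi * x.val / p) : ℝ) : ℂ) := by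
    intro x
    rw [hconj, hpow, ← Complex.exp_neg]
    push_cast
    rw [Complex.two_cos]
    rw [neg_mul]
  have hcosper : ∀ u : ℕ, Real.cos (2 * Real.pi * ((u : ZMod p)).val / p)
      = Real.cos (2 * Real.pi * u / p) := by
    intro u
    rw [ZMod.val_natCast]
    conv_rhs => rw [← Nat.div_add_mod u p]
    rw [show (2 * Real.pi * ((p * (u / p) + u % p : ℕ)) / p : ℝ)
        = 2 * Real.pi * ((u % p : ℕ)) / p + (u / p : ℕ) * (2 * Real.pi) by
      push_cast
      field_simp
      ring]
    rw [Real.cos_add_nat_mul_two_pi]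
  -- sifting
  have hsift : ∀ (t c : ZMod p), ∑ x : ZMod p, (if t = x then (1 : ℂ) else 0) * η ^ ((x * c)).val
      = η ^ ((t * c)).val := by
    intro t c
    rw [Finset.sum_eq_single t]
    · simp
    · intro x _ hx
      simp [Ne.symm hx]
    · intro h
      exact absurd (Finset.mem_univ t) h
  have hswap : ∀ c : ZMod p, ∑ x : ZMod p, μ x * η ^ ((x * c)).val
      = ∑ j, (lam j : ℂ) * (η ^ ((sc j * c)).val + η ^ ((-(sc j) * c)).val) := by
    intro c
    have e1 : ∀ x : ZMod p, μ x * η ^ ((x * c)).val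
        = ∑ j, ((lam j : ℂ) * ((if sc j = x then (1 : ℂ) else 0) * η ^ ((x * c)).val)
              + (lam j : ℂ) * ((if -(sc j) = x then (1 : ℂ) else 0) * η ^ ((x * c)).val)) := by
      intro x
      rw [hμ]
      rw [Finset.sum_mul]
      refine Finset.sum_congr rfl fun j _ => by ring
    calc ∑ x : ZMod p, μ x * η ^ ((x * c)).val
        = ∑ x : ZMod p, ∑ j, ((lam j : ℂ) * ((if sc j = x then (1 : ℂ) else 0) * η ^ ((x * c)).val)
              + (lam j : ℂ) * ((if -(sc j) = x then (1 : ℂ) else 0) * η ^ ((x * c)).val)) :=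
          Finset.sum_congr rfl fun x _ => e1 x
      _ = ∑ j, ∑ x : ZMod p, ((lam j : ℂ) * ((if sc j = x then (1 : ℂ) else 0) * η ^ ((x * c)).val)
              + (lam j : ℂ) * ((if -(sc j) = x then (1 : ℂ) else 0) * η ^ ((x * c)).val)) :=
          Finset.sum_comm
      _ = ∑ j, ((lam j : ℂ) * η ^ ((sc j * c)).val + (lam j : ℂ) * η ^ ((-(sc j) * c)).val) := by
          refine Finset.sum_congr rfl fun j _ => ?_
          rw [Finset.sum_add_distrib, ← Finset.mul_sum, ← Finset.mul_sum, hsift, hsift]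
      _ = ∑ j, (lam j : ℂ) * (η ^ ((sc j * c)).val + η ^ ((-(sc j) * c)).val) :=
          Finset.sum_congr rfl fun j _ => by ring
  -- the pair of powers is a cosine
  have hpair : ∀ (i j : Fin k) (c : ZMod p), (c = rc i ∨ c = -(rc i)) →
      η ^ ((sc j * c)).val + η ^ ((-(sc j) * c)).val
      = ((2 * Real.cos (2 * Real.pi * ((r i * s j : ℕ)) / p) : ℝ) : ℂ) := by
    intro i j c hc
    have hcos2 : ((2 * Real.cos (2 * Real.pi * (((s j * r i : ℕ) : ZMod p)).val / p) : ℝ) : ℂ)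
        = ((2 * Real.cos (2 * Real.pi * ((r i * s j : ℕ)) / p) : ℝ) : ℂ) := by
      rw [hcosper (s j * r i), mul_comm (s j) (r i)]
    rcases hc with hc | hc
    · have h1 : sc j * c = (((s j * r i : ℕ)) : ZMod p) := by
        rw [hc, hsc, hrc]; push_cast; ring
      have h2 : -(sc j) * c = -((((s j * r i : ℕ)) : ZMod p)) := by
        rw [hc, hsc, hrc]; push_cast; ring
      rw [h1, h2, hcos1, hcos2]
    · have h1 : sc j * c = -((((s j * r i : ℕ)) : ZMod p)) := by
        rw [hc, hsc, hrc]; push_cast; ring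
      have h2 : -(sc j) * c = (((s j * r i : ℕ)) : ZMod p) := by
        rw [hc, hsc, hrc]; push_cast; ring
      rw [h1, h2, add_comm, hcos1, hcos2]
  -- vanishing of the transform on B
  have hvan : ∀ c ∈ B, ∑ x : ZMod p, μ x * η ^ ((x * c)).val = 0 := by
    intro c hc
    rw [hswap c]
    rw [hB] at hc
    simp only [Finset.mem_union, Finset.mem_image, Finset.mem_univ, true_and] at hc
    have hc' : ∃ i, c = rc i ∨ c = -(rc i) := by
      rcases hc with ⟨i, hi⟩ | ⟨i, hi⟩
      · exact ⟨i, Or.inl hi.symm⟩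
      · exact ⟨i, Or.inr hi.symm⟩
    obtain ⟨i, hi⟩ := hc'
    rw [Finset.sum_congr rfl fun j _ => by rw [hpair i j c hi]]
    have h3 : ∑ j, lam j * (2 * Real.cos (2 * Real.pi * ((r i * s j : ℕ)) / p)) = 0 := by
      have h4 : ∑ j, lam j * (2 * Real.cos (2 * Real.pi * ((r i * s j : ℕ)) / p))
          = 2 * ∑ j, lam j * Real.cos (2 * Real.pi * ((r i * s j : ℕ)) / p) := by
        rw [Finset.mul_sum]
        exact Finset.sum_congr rfl fun j _ => by ring
      rw [h4, hrel i, mul_zero]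
    exact_mod_cast h3
  -- support and cardinality estimates
  set S1 : Finset (ZMod p) := Finset.univ.image sc with hS1
  set S2 : Finset (ZMod p) := Finset.univ.image (fun j => -(sc j)) with hS2
  have hsupp : (Finset.univ.filter fun x => μ x ≠ 0) ⊆ S1 ∪ S2 := by
    intro x hx
    simp only [Finset.mem_filter, Finset.mem_univ, true_and] at hx
    by_contra hmem
    apply hx
    rw [hμ]
    refine Finset.sum_eq_zero fun j _ => ?_
    have h1 : ¬ (sc j = x) := fun h =>
      hmem (Finset.mem_union_left _ (Finset.mem_image.mpr ⟨j, Finset.mem_univ j, h⟩))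
    have h2 : ¬ (-(sc j) = x) := fun h =>
      hmem (Finset.mem_union_right _ (Finset.mem_image.mpr ⟨j, Finset.mem_univ j, h⟩))
    simp [h1, h2]
  have hscinj : Function.Injective sc := by
    intro j j' h
    exact hsinj (hcastinj _ _ (hslt j) (hslt j') h)
  have hrcinj : Function.Injective rc := by
    intro i i' h
    exact hrinj (hcastinj _ _ (hrlt i) (hrlt i') h)
  have hcards1 : S1.card = k := by
    rw [hS1, Finset.card_image_of_injective _ hscinj, Finset.card_univ, Fintype.card_fin]
  have hnsc : Function.Injective (fun j => -(sc j)) := fun a b h => hscinj (neg_injective h)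
  have hnrc : Function.Injective (fun i => -(rc i)) := fun a b h => hrcinj (neg_injective h)
  have hcards2 : S2.card = k := by
    rw [hS2, Finset.card_image_of_injective _ hnsc, Finset.card_univ, Fintype.card_fin]
  have hcardr1 : (Finset.univ.image rc).card = k := by
    rw [Finset.card_image_of_injective _ hrcinj, Finset.card_univ, Fintype.card_fin]
  have hcardr2 : (Finset.univ.image (fun i => -(rc i))).card = k := by
    rw [Finset.card_image_of_injective _ hnrc, Finset.card_univ, Fintype.card_fin]
  have hinterS : S1 ∩ S2 ⊆ {0} := by
    intro x hx
    simp only [hS1, hS2, Finset.mem_inter, Finset.mem_image, Finset.mem_univ, true_and] at hx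
    obtain ⟨⟨j, hj⟩, ⟨j', hj'⟩⟩ := hx
    have h1 : sc j = -(sc j') := hj.trans hj'.symm
    have h2 : (s j : ZMod p) = -((s j' : ZMod p)) := by simpa only [hsc] using h1
    obtain ⟨hz, _⟩ := hkey (s j) (s j') (hslt j) (hslt j') h2
    simp only [Finset.mem_singleton]
    rw [← hj]
    simp only [hsc]
    rw [hz]
    exact Nat.cast_zero
  have hinterB : (Finset.univ.image rc) ∩ (Finset.univ.image (fun i => -(rc i))) ⊆ {0} := by
    intro x hx
    simp only [Finset.mem_inter, Finset.mem_image, Finset.mem_univ, true_and] at hx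
    obtain ⟨⟨i, hi⟩, ⟨i', hi'⟩⟩ := hx
    have h1 : rc i = -(rc i') := hi.trans hi'.symm
    have h2 : (r i : ZMod p) = -((r i' : ZMod p)) := by simpa only [hrc] using h1
    obtain ⟨hz, _⟩ := hkey (r i) (r i') (hrlt i) (hrlt i') h2
    simp only [Finset.mem_singleton]
    rw [← hi]
    simp only [hrc]
    rw [hz]
    exact Nat.cast_zero
  have hcardle : (Finset.univ.filter fun x => μ x ≠ 0).card ≤ B.card := by
    have hUS := Finset.card_union_add_card_inter S1 S2
    have hUB := Finset.card_union_add_card_inter (Finset.univ.image rc)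
      (Finset.univ.image (fun i => -(rc i)))
    have hfilter_le : (Finset.univ.filter fun x => μ x ≠ 0).card ≤ (S1 ∪ S2).card :=
      Finset.card_le_card hsupp
    by_cases h0s : ∃ j, s j = 0
    · -- 0 is in the intersection of S1 and S2
      obtain ⟨j, hj⟩ := h0s
      have h0in : (0 : ZMod p) ∈ S1 ∩ S2 := by
        refine Finset.mem_inter.mpr ⟨?_, ?_⟩
        · refine Finset.mem_image.mpr ⟨j, Finset.mem_univ j, ?_⟩
          simp only [hsc]
          rw [hj]; exact Nat.cast_zero
        · refine Finset.mem_image.mpr ⟨j, Finset.mem_univ j, ?_⟩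
          simp only [hsc]
          rw [hj]
          simp
      have hSeq : S1 ∩ S2 = {0} :=
        Finset.Subset.antisymm hinterS (Finset.singleton_subset_iff.mpr h0in)
      have hBint : ((Finset.univ.image rc) ∩ (Finset.univ.image (fun i => -(rc i)))).card ≤ 1 := by
        have := Finset.card_le_card hinterB
        simpa using this
      rw [hSeq] at hUS
      simp only [Finset.card_singleton] at hUS
      rw [hcards1, hcards2] at hUS
      rw [hcardr1, hcardr2] at hUB
      rw [hB]
      omega
    · -- no zero among the s values, hence none among the r values either
      have h0r : ¬ ∃ i, r i = 0 := fun h => h0s (h0 h)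
      have hSint : S1 ∩ S2 = ∅ := by
        rw [Finset.eq_empty_iff_forall_notMem]
        intro x hx
        have hx0 : x = 0 := Finset.mem_singleton.mp (hinterS hx)
        subst hx0
        obtain ⟨hj, -⟩ := Finset.mem_inter.mp hx
        obtain ⟨j', hj1, hj2⟩ := Finset.mem_image.mp hj
        apply h0s
        refine ⟨j', ?_⟩
        have : (s j' : ZMod p) = ((0 : ℕ) : ZMod p) := by
          simp only [hsc] at hj2
          rw [hj2]; exact Nat.cast_zero.symm
        exact hcastinj _ _ (hslt j') (by omega) this
      have hBint : (Finset.univ.image rc) ∩ (Finset.univ.image (fun i => -(rc i))) = ∅ := by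
        rw [Finset.eq_empty_iff_forall_notMem]
        intro x hx
        have hx0 : x = 0 := Finset.mem_singleton.mp (hinterB hx)
        subst hx0
        obtain ⟨hi, -⟩ := Finset.mem_inter.mp hx
        obtain ⟨i', hi1, hi2⟩ := Finset.mem_image.mp hi
        apply h0r
        refine ⟨i', ?_⟩
        have : (r i' : ZMod p) = ((0 : ℕ) : ZMod p) := by
          simp only [hrc] at hi2
          rw [hi2]; exact Nat.cast_zero.symm
        exact hcastinj _ _ (hrlt i') (by omega) this
      rw [hSint] at hUS
      rw [hBint] at hUB
      simp only [Finset.card_empty] at hUS hUB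
      rw [hcards1, hcards2] at hUS
      rw [hcardr1, hcardr2] at hUB
      rw [hB]
      omega
  -- conclude μ = 0 and extract the coefficients
  have hμ0 : μ = 0 := cheb_corollary p hη μ B hcardle hvan
  intro j
  have hev := congrFun hμ0 (sc j)
  rw [hμ] at hev
  simp only [Pi.zero_apply] at hev
  rw [Finset.sum_eq_single j] at hev
  · -- remaining term
    have h1 : (if sc j = sc j then (1:ℂ) else 0) = 1 := by simp
    rw [h1] at hev
    by_cases hz : -(sc j) = sc j
    · rw [if_pos hz] at hev
      have : (lam j : ℂ) = 0 := by
        have h2 : (1 : ℂ) + 1 ≠ 0 := by norm_num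
        exact (mul_eq_zero.mp hev).resolve_right h2
      exact_mod_cast this
    · rw [if_neg hz] at hev
      have : (lam j : ℂ) = 0 := by
        have h2 : (1 : ℂ) + 0 ≠ 0 := by norm_num
        exact (mul_eq_zero.mp hev).resolve_right h2
      exact_mod_cast this
  · intro j' _ hjj
    have h1 : ¬ (sc j' = sc j) := fun h => hjj (hscinj h)
    have h2 : ¬ (-(sc j') = sc j) := by
      intro h
      have h3 : (s j : ZMod p) = -((s j' : ZMod p)) := by
        simp only [hsc] at h ⊢
        rw [← h]
      obtain ⟨hz1, hz2⟩ := hkey (s j) (s j') (hslt j) (hslt j') h3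
      apply hjj
      apply hsinj
      rw [hz1, hz2]
    simp [h1, h2]
  · intro h
    exact absurd (Finset.mem_univ j) h


theorem dct_prime_aux (p : ℕ) (hp : p.Prime) (hpodd : Odd p) {k : ℕ}
    (ri ci : Fin k → Fin ((p + 1) / 2)) (hri : Function.Injective ri) (hci : Function.Injective ci)
    (h0 : (∃ i, (ri i : ℕ) = 0) → (∃ j, (ci j : ℕ) = 0)) :
    (Matrix.of fun i j : Fin k =>
        if (ri i : ℕ) = 0 ∧ (ci j : ℕ) = 0 then Real.sqrt (1 / p)
        else if (ri i : ℕ) = 0 ∨ (ci j : ℕ) = 0 then Real.sqrt (2 / p)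
        else 2 * Real.cos (2 * Real.pi * ((ri i : ℕ) * (ci j : ℕ) : ℕ) / p)
              / Real.sqrt p).det ≠ 0 := by
  intro hdet
  have hp0 : 0 < p := hp.pos
  have hsp : (0:ℝ) < Real.sqrt p := Real.sqrt_pos.mpr (by exact_mod_cast hp0)
  have hs2 : (0:ℝ) < Real.sqrt 2 := Real.sqrt_pos.mpr (by norm_num)
  set w : ℕ → ℝ := fun m => if m = 0 then (Real.sqrt 2)⁻¹ else 1 with hw
  have hwne : ∀ m, w m ≠ 0 := by
    intro m
    simp only [hw]
    split
    · exact inv_ne_zero hs2.ne'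
    · exact one_ne_zero
  have hwpos : ∀ m, 0 < w m := by
    intro m
    simp only [hw]
    split
    · exact inv_pos.mpr hs2
    · exact one_pos
  have h22 : Real.sqrt 2 * Real.sqrt 2 = 2 := Real.mul_self_sqrt (by norm_num)
  have hinv2 : (Real.sqrt 2)⁻¹ * (Real.sqrt 2)⁻¹ = 2⁻¹ := by rw [← mul_inv, h22]
  have hsqrt2p : Real.sqrt (2 / p) = Real.sqrt 2 / Real.sqrt p := Real.sqrt_div (by norm_num) p
  -- entry formula
  have hentry : ∀ (u v : ℕ),
      (if u = 0 ∧ v = 0 then Real.sqrt (1 / p)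
        else if u = 0 ∨ v = 0 then Real.sqrt (2 / p)
        else 2 * Real.cos (2 * Real.pi * ((u * v : ℕ)) / p) / Real.sqrt p)
      = 2 / Real.sqrt p * w u * w v * Real.cos (2 * Real.pi * ((u * v : ℕ)) / p) := by
    intro u v
    by_cases hu : u = 0 <;> by_cases hv : v = 0
    · rw [if_pos ⟨hu, hv⟩]
      simp only [hw]
      rw [if_pos hu, if_pos hv, hu, Nat.zero_mul, Nat.cast_zero, mul_zero, zero_div,
        Real.cos_zero, mul_one, one_div, Real.sqrt_inv, mul_assoc, hinv2]
      field_simp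
    · rw [if_neg (fun h => hv h.2), if_pos (Or.inl hu)]
      simp only [hw]
      rw [if_pos hu, if_neg hv, hu, Nat.zero_mul, Nat.cast_zero, mul_zero, zero_div,
        Real.cos_zero, mul_one, mul_one, hsqrt2p]
      field_simp
      linear_combination h22
    · rw [if_neg (fun h => hu h.1), if_pos (Or.inr hv)]
      simp only [hw]
      rw [if_neg hu, if_pos hv, hv, Nat.mul_zero, Nat.cast_zero, mul_zero, zero_div,
        Real.cos_zero, mul_one, hsqrt2p]
      field_simp
      linear_combination h22
    · rw [if_neg (fun h => hu h.1), if_neg (by push_neg; exact ⟨hu, hv⟩)]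
      simp only [hw]
      rw [if_neg hu, if_neg hv]
      ring
  -- column dependence
  obtain ⟨v, hvne, hmv⟩ := Matrix.exists_mulVec_eq_zero_iff.mpr hdet
  set lam : Fin k → ℝ := fun j => w (ci j) * v j with hlam
  have hrel : ∀ i, ∑ j,
      lam j * Real.cos (2 * Real.pi * (((ri i : ℕ) * (ci j : ℕ) : ℕ)) / p) = 0 := by
    intro i
    have h1 := congrFun hmv i
    simp only [Matrix.mulVec, dotProduct, Matrix.of_apply, Pi.zero_apply] at h1
    have h2 : ∑ j, (2 / Real.sqrt p * w (ri i)) *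
        (lam j * Real.cos (2 * Real.pi * (((ri i : ℕ) * (ci j : ℕ) : ℕ)) / p)) = 0 := by
      rw [← h1]
      refine Finset.sum_congr rfl fun j _ => ?_
      rw [hentry]
      simp only [hlam]
      ring
    rw [← Finset.mul_sum] at h2
    rcases mul_eq_zero.mp h2 with h3 | h3
    · exact absurd h3 (mul_pos (div_pos two_pos hsp) (hwpos _)).ne'
    · exact h3
  have hall := coscols p hp hpodd (fun i => (ri i : ℕ)) (fun j => (ci j : ℕ))
      (fun i => (ri i).2) (fun j => (ci j).2)
      (fun a b h => hri (Fin.val_injective h))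
      (fun a b h => hci (Fin.val_injective h))
      h0 lam hrel
  apply hvne
  funext j
  have := hall j
  rw [hlam] at this
  simp only at this
  exact (mul_eq_zero.mp this).resolve_left (hwne _)


set_option maxHeartbeats 2000000 in
/-- The discrete cosine transform matrix `C_n` (for odd `n ≥ 1`), of size
`(n+1)/2 × (n+1)/2` with rows and columns indexed by `0,…,(n-1)/2`, whose `(r,s)`-entry
is `√(1/n)` if `r = s = 0`, `√(2/n)` if exactly one of `r, s` is `0`, and
`2cos(2πrs/n)/√n` otherwise, has the nonvanishing minors property if and only if
`n` is prime or `n = 1`. -/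
theorem dct_nonvanishing_minors_iff (n : ℕ) (hn : 1 ≤ n) (hodd : Odd n) :
    (∀ (k : ℕ) (ri ci : Fin k → Fin ((n + 1) / 2)),
      Function.Injective ri → Function.Injective ci →
      (Matrix.of fun i j : Fin k =>
        if (ri i : ℕ) = 0 ∧ (ci j : ℕ) = 0 then Real.sqrt (1 / n)
        else if (ri i : ℕ) = 0 ∨ (ci j : ℕ) = 0 then Real.sqrt (2 / n)
        else 2 * Real.cos (2 * Real.pi * ((ri i : ℕ) * (ci j : ℕ) : ℕ) / n)
              / Real.sqrt n).det ≠ 0)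
    ↔ (n.Prime ∨ n = 1) := by
  constructor
  · -- if all minors are nonzero then n is prime or 1
    intro H
    by_contra hc
    push_neg at hc
    obtain ⟨hnp, hn1⟩ := hc
    set p := n.minFac with hpdef
    have hp : p.Prime := Nat.minFac_prime hn1
    have hdvd : p ∣ n := Nat.minFac_dvd n
    set m := n / p with hmdef
    have hpm : p * m = n := Nat.mul_div_cancel' hdvd
    have hpn : p ≠ n := fun h => hnp (h ▸ hp)
    have hp2 : p ≠ 2 := by
      intro h
      have h2 : (2 : ℕ) ∣ n := h ▸ hdvd
      rcases hodd with ⟨t, ht⟩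
      omega
    have hp3 : 3 ≤ p := by
      have := hp.two_le
      omega
    have hm1 : m ≠ 1 := by
      intro h
      rw [h, mul_one] at hpm
      exact hpn hpm
    have hm0 : m ≠ 0 := by
      intro h
      rw [h, mul_zero] at hpm
      omega
    have hmodd : Odd m := by
      rcases Nat.even_or_odd m with he | ho
      · exfalso
        rcases he with ⟨u, hu⟩
        have h2 : n = 2 * (p * u) := by rw [← hpm, hu]; ring
        rcases hodd with ⟨t, ht⟩
        omega
      · exact ho
    have hm3 : 3 ≤ m := by
      rcases hmodd with ⟨t, ht⟩
      omega
    have h3m : 3 * m ≤ n := by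
      rw [← hpm]
      exact Nat.mul_le_mul_right m hp3
    have h3p : 3 * p ≤ n := by
      rw [← hpm]
      calc 3 * p ≤ m * p := Nat.mul_le_mul_right p hm3
        _ = p * m := Nat.mul_comm m p
    have hb1 : 1 + m < (n + 1) / 2 := by omega
    have hb2 : p < (n + 1) / 2 := by omega
    have hb0 : 0 < (n + 1) / 2 := by omega
    have hb1' : (1 : ℕ) < (n + 1) / 2 := by omega
    set ri : Fin 2 → Fin ((n + 1) / 2) :=
      fun t => if (t : ℕ) = 0 then ⟨1, hb1'⟩ else ⟨1 + m, hb1⟩ with hridef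
    set ci : Fin 2 → Fin ((n + 1) / 2) :=
      fun t => if (t : ℕ) = 0 then ⟨0, hb0⟩ else ⟨p, hb2⟩ with hcidef
    have hriv : ∀ t : Fin 2, (ri t : ℕ) = if (t : ℕ) = 0 then 1 else 1 + m := by
      intro t
      simp only [hridef]
      split <;> rfl
    have hciv : ∀ t : Fin 2, (ci t : ℕ) = if (t : ℕ) = 0 then 0 else p := by
      intro t
      simp only [hcidef]
      split <;> rfl
    have hriinj : Function.Injective ri := by
      intro a b hab
      have hv := congrArg Fin.val hab
      rw [hriv a, hriv b] at hv
      have ha2 := a.2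
      have hb2' := b.2
      by_cases ha0 : (a : ℕ) = 0 <;> by_cases hb0' : (b : ℕ) = 0 <;>
        simp only [ha0, hb0', if_true, if_false, if_pos, if_neg] at hv <;>
        (try omega) <;> exact Fin.ext (by omega)
    have hciinj : Function.Injective ci := by
      intro a b hab
      have hv := congrArg Fin.val hab
      rw [hciv a, hciv b] at hv
      have ha2 := a.2
      have hb2' := b.2
      by_cases ha0 : (a : ℕ) = 0 <;> by_cases hb0' : (b : ℕ) = 0 <;>
        simp only [ha0, hb0', if_true, if_false, if_pos, if_neg] at hv <;>
        (try omega) <;> exact Fin.ext (by omega)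
    have hne := H 2 ri ci hriinj hciinj
    apply hne
    have e00 : ((ri 0 : ℕ)) = 1 := by rw [hriv]; rfl
    have e01 : ((ri 1 : ℕ)) = 1 + m := by rw [hriv]; rfl
    have e10 : ((ci 0 : ℕ)) = 0 := by rw [hciv]; rfl
    have e11 : ((ci 1 : ℕ)) = p := by rw [hciv]; rfl
    rw [Matrix.det_fin_two]
    simp only [Matrix.of_apply, e00, e01, e10, e11]
    have hpne : p ≠ 0 := hp.pos.ne'
    have hnne : (n : ℝ) ≠ 0 := Nat.cast_ne_zero.mpr (by omega)
    have hcos : Real.cos (2 * Real.pi * (((1 + m) * p : ℕ)) / n)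
        = Real.cos (2 * Real.pi * ((1 * p : ℕ)) / n) := by
      have hnat : (1 + m) * p = 1 * p + n := by rw [← hpm]; ring
      rw [hnat]
      have harg : (2 * Real.pi * ((1 * p + n : ℕ)) / n : ℝ)
          = 2 * Real.pi * ((1 * p : ℕ)) / n + 2 * Real.pi := by
        push_cast
        field_simp
      rw [harg, Real.cos_add_two_pi]
    have E00 : (if (1 : ℕ) = 0 ∧ True then Real.sqrt (1 / n)
        else if (1 : ℕ) = 0 ∨ True then Real.sqrt (2 / n)
        else 2 * Real.cos (2 * Real.pi * ((1 * 0 : ℕ)) / n) / Real.sqrt n)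
        = Real.sqrt (2 / n) := by
      rw [if_neg (by simp), if_pos (Or.inr trivial)]
    have E01 : (if (1 : ℕ) = 0 ∧ p = 0 then Real.sqrt (1 / n)
        else if (1 : ℕ) = 0 ∨ p = 0 then Real.sqrt (2 / n)
        else 2 * Real.cos (2 * Real.pi * ((1 * p : ℕ)) / n) / Real.sqrt n)
        = 2 * Real.cos (2 * Real.pi * ((1 * p : ℕ)) / n) / Real.sqrt n := by
      rw [if_neg (by omega), if_neg (by omega)]
    have E10 : (if (1 + m : ℕ) = 0 ∧ True then Real.sqrt (1 / n)
        else if (1 + m : ℕ) = 0 ∨ True then Real.sqrt (2 / n)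
        else 2 * Real.cos (2 * Real.pi * (((1 + m) * 0 : ℕ)) / n) / Real.sqrt n)
        = Real.sqrt (2 / n) := by
      rw [if_neg (by simp), if_pos (Or.inr trivial)]
    have E11 : (if (1 + m : ℕ) = 0 ∧ p = 0 then Real.sqrt (1 / n)
        else if (1 + m : ℕ) = 0 ∨ p = 0 then Real.sqrt (2 / n)
        else 2 * Real.cos (2 * Real.pi * (((1 + m) * p : ℕ)) / n) / Real.sqrt n)
        = 2 * Real.cos (2 * Real.pi * (((1 + m) * p : ℕ)) / n) / Real.sqrt n := by
      rw [if_neg (by omega), if_neg (by omega)]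
    rw [E00, E01, E10, E11, hcos]
    ring
  · rintro (hp | h1)
    · intro k ri ci hri hci
      by_cases hc0 : (∃ i, (ri i : ℕ) = 0) → (∃ j, (ci j : ℕ) = 0)
      · exact dct_prime_aux n hp hodd ri ci hri hci hc0
      · push_neg at hc0
        have haux := dct_prime_aux n hp hodd ci ri hci hri (fun hj => by obtain ⟨j, hjj⟩ := hj; exact absurd hjj (hc0.2 j))
        intro hdet
        apply haux
        have htr : (Matrix.of fun i j : Fin k =>
            if (ci i : ℕ) = 0 ∧ (ri j : ℕ) = 0 then Real.sqrt (1 / n)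
            else if (ci i : ℕ) = 0 ∨ (ri j : ℕ) = 0 then Real.sqrt (2 / n)
            else 2 * Real.cos (2 * Real.pi * ((ci i : ℕ) * (ri j : ℕ) : ℕ) / n)
                  / Real.sqrt n)
          = (Matrix.of fun i j : Fin k =>
            if (ri i : ℕ) = 0 ∧ (ci j : ℕ) = 0 then Real.sqrt (1 / n)
            else if (ri i : ℕ) = 0 ∨ (ci j : ℕ) = 0 then Real.sqrt (2 / n)
            else 2 * Real.cos (2 * Real.pi * ((ri i : ℕ) * (ci j : ℕ) : ℕ) / n)
                  / Real.sqrt n)ᵀ := by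
          ext i j
          simp only [Matrix.transpose_apply, Matrix.of_apply]
          by_cases h1 : (ri j : ℕ) = 0 <;> by_cases h2 : (ci i : ℕ) = 0 <;>
            simp [h1, h2, Nat.mul_comm]
        rw [htr, Matrix.det_transpose, hdet]
    · subst h1
      intro k ri ci hri hci
      match k with
      | 0 => simp [Matrix.det_fin_zero]
      | 1 =>
        rw [Matrix.det_fin_one]
        have hr2 := (ri 0).2
        have hc2 := (ci 0).2
        have h1 : (ri 0 : ℕ) = 0 := by omega
        have h2 : (ci 0 : ℕ) = 0 := by omega
        simp only [Matrix.of_apply, h1, h2, and_self, if_true]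
        norm_num
      | (k + 2) =>
        exfalso
        have hr0 := (ri 0).2
        have hr1 := (ri 1).2
        have h01 : ri 0 = ri 1 := Fin.ext (by omega)
        have := hri h01
        simp at this
end

section
/- Let n ≥ 3 be odd. The discrete sine transform matrix S_n, which is the ((n−1)/2)×((n−1)/2) matrix with rows and columns indexed by 1,2,…,(n−1)/2 whose (r,s)-entry equals 2sin(2πrs/n)/√n, has the nonvanishing minors property if and only if n is prime. -/
open Real

open Polynomial Complex

lemma key_support_aux (p : ℕ) [hp : Fact p.Prime] (m : ℕ) :
    ∀ P : (ZMod p)[X], P.support.card ≤ m → P.natDegree < p →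
      (X - 1) ^ P.support.card ∣ P → P = 0 := by
  induction m with
  | zero =>
    intro P h _ _
    rw [Nat.le_zero, Finset.card_eq_zero, support_eq_empty] at h
    exact h
  | succ m ih =>
    intro P hcard hdeg hdvd
    by_cases hP : P = 0
    · exact hP
    exfalso
    set e0 := P.natTrailingDegree with he0def
    have he0 : e0 ∈ P.support := natTrailingDegree_mem_support_of_nonzero hP
    set Q : (ZMod p)[X] := X * derivative P - C (e0 : ZMod p) * P with hQdef
    have hQcoeff : ∀ n, Q.coeff n = ((n : ZMod p) - (e0 : ZMod p)) * P.coeff n := by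
      intro n
      rcases n with _ | n
      · simp [hQdef, coeff_sub, coeff_C_mul, mul_comm, sub_mul]
      · simp [hQdef, coeff_sub, coeff_X_mul, coeff_derivative, coeff_C_mul, sub_mul]
        ring
    have hQsupp : Q.support ⊆ P.support.erase e0 := by
      intro n hn
      rw [mem_support_iff, hQcoeff] at hn
      rw [Finset.mem_erase, mem_support_iff]
      constructor
      · rintro rfl; simp at hn
      · intro h; exact hn (by rw [h, mul_zero])
    have hcardP : 1 ≤ P.support.card := Finset.card_pos.mpr ⟨e0, he0⟩
    have hQcard : Q.support.card ≤ P.support.card - 1 := by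
      calc Q.support.card ≤ (P.support.erase e0).card := Finset.card_le_card hQsupp
        _ = P.support.card - 1 := Finset.card_erase_of_mem he0
    have hQdeg : Q.natDegree < p := by
      have h1 : Q.natDegree ≤ P.natDegree := by
        by_cases hQ0 : Q = 0
        · simp [hQ0]
        have := hQsupp (natDegree_mem_support_of_nonzero hQ0)
        exact le_natDegree_of_mem_supp _ (Finset.mem_of_mem_erase this)
      omega
    have hQdvd : (X - 1 : (ZMod p)[X]) ^ Q.support.card ∣ Q := by
      have h1 : (X - 1 : (ZMod p)[X]) ^ (P.support.card - 1) ∣ Q := by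
        obtain ⟨S, hS⟩ := hdvd
        generalize hc : P.support.card = c at hS
        have hder : (X - 1 : (ZMod p)[X]) ^ (c - 1) ∣ derivative P := by
          rw [hS, derivative_mul, derivative_pow]
          refine dvd_add ?_ ?_
          · exact (((dvd_mul_left _ _)).mul_right _).mul_right _
          · exact Dvd.dvd.mul_right (pow_dvd_pow _ (Nat.sub_le _ _)) _
        have hPd : (X - 1 : (ZMod p)[X]) ^ (c - 1) ∣ P := by
          rw [hS]; exact Dvd.dvd.mul_right (pow_dvd_pow _ (Nat.sub_le _ _)) _
        exact dvd_sub (hder.mul_left _) (hPd.mul_left _)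
      exact dvd_trans (pow_dvd_pow _ hQcard) h1
    have hQ0 : Q = 0 := ih Q (by omega) hQdeg hQdvd
    have hsingle : P.support ⊆ {e0} := by
      intro n hn
      rw [Finset.mem_singleton]
      by_contra hne
      have h1 : Q.coeff n = 0 := by rw [hQ0]; simp
      rw [hQcoeff] at h1
      have h2 : P.coeff n ≠ 0 := mem_support_iff.mp hn
      have h3 : (n : ZMod p) = (e0 : ZMod p) := by
        rcases mul_eq_zero.mp h1 with h | h
        · exact sub_eq_zero.mp h
        · exact absurd h h2
      have hnp : n < p := lt_of_le_of_lt (le_natDegree_of_mem_supp _ hn) hdeg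
      have he0p : e0 < p := lt_of_le_of_lt (le_natDegree_of_mem_supp _ he0) hdeg
      have := (ZMod.natCast_eq_natCast_iff' n e0 p).mp h3
      rw [Nat.mod_eq_of_lt hnp, Nat.mod_eq_of_lt he0p] at this
      exact hne this
    have hsupp_eq : P.support = {e0} := Finset.Subset.antisymm hsingle (by simpa using he0)
    have heval : P.eval 1 = 0 := by
      obtain ⟨S, hS⟩ := hdvd
      rw [hS, eval_mul, eval_pow, eval_sub, eval_X, eval_one, sub_self,
        zero_pow (by omega), zero_mul]
    have heval2 : P.eval 1 = P.coeff e0 := by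
      rw [eval_eq_sum, sum_def, hsupp_eq, Finset.sum_singleton, one_pow, mul_one]
    exact mem_support_iff.mp he0 (by rw [← heval2, heval])

open Polynomial Complex

section Hard

variable (p : ℕ) [hp : Fact p.Prime]

lemma dst_det_ne_zero {p : ℕ} (hp : p.Prime) (hodd : Odd p) (hp3 : 3 ≤ p)
    {k : ℕ} (ri ci : Fin k → Fin ((p - 1) / 2))
    (hri : Function.Injective ri) (hci : Function.Injective ci) :
    (Matrix.of fun i j : Fin k =>
        2 * Real.sin (2 * Real.pi * (((ri i : ℕ) + 1) * ((ci j : ℕ) + 1) : ℕ) / p)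
          / Real.sqrt p).det ≠ 0 := by
  intro hdet
  haveI : Fact p.Prime := ⟨hp⟩
  rcases Nat.eq_zero_or_pos k with rfl | hk
  · rw [Matrix.det_fin_zero] at hdet; exact one_ne_zero hdet
  -- numerology
  obtain ⟨t, ht⟩ := hodd
  set r : Fin k → ℕ := fun i => (ri i : ℕ) + 1 with hrdef
  set s : Fin k → ℕ := fun j => (ci j : ℕ) + 1 with hsdef
  have hr1 : ∀ i, 1 ≤ r i ∧ 2 * r i < p := fun i => by
    have h2 : (ri i : ℕ) < (p - 1) / 2 := (ri i).2
    exact ⟨Nat.le_add_left _ _, by show 2 * ((ri i : ℕ) + 1) < p; omega⟩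
  have hs1 : ∀ j, 1 ≤ s j ∧ 2 * s j < p := fun j => by
    have h2 : (ci j : ℕ) < (p - 1) / 2 := (ci j).2
    exact ⟨Nat.le_add_left _ _, by show 2 * ((ci j : ℕ) + 1) < p; omega⟩
  have hrinj : Function.Injective r := fun a b hab =>
    hri (Fin.val_injective (Nat.succ_injective hab))
  have hsinj : Function.Injective s := fun a b hab =>
    hci (Fin.val_injective (Nat.succ_injective hab))
  -- the primitive root
  have hp0 : (p : ℕ) ≠ 0 := by omega
  set ζ : ℂ := Complex.exp (2 * Real.pi * I / p) with hζdef
  have hζ : IsPrimitiveRoot ζ p := Complex.isPrimitiveRoot_exp p hp0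
  -- the ring R
  set cyc : ℤ[X] := cyclotomic p ℤ with hcyc
  have hroot : cyc.eval₂ (Int.castRingHom ℂ) ζ = 0 := by
    rw [hcyc, eval₂_eq_eval_map, map_cyclotomic]
    exact (hζ.isRoot_cyclotomic (by omega))
  set R := AdjoinRoot cyc with hR
  set θ : R := AdjoinRoot.root cyc with hθdef
  set f : R →+* ℂ := AdjoinRoot.lift (Int.castRingHom ℂ) ζ hroot with hfdef
  have hfθ : f θ = ζ := AdjoinRoot.lift_root hroot
  have hinj : Function.Injective f := by
    rw [injective_iff_map_eq_zero]
    intro z hz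
    obtain ⟨q, rfl⟩ := AdjoinRoot.mk_surjective z
    rw [AdjoinRoot.mk_eq_zero]
    have h1 : Polynomial.aeval ζ q = 0 := by
      rw [hfdef, AdjoinRoot.lift_mk] at hz
      rwa [aeval_def]
    have h2 : minpoly ℤ ζ ∣ q :=
      minpoly.isIntegrallyClosed_dvd (hζ.isIntegral (by omega)) h1
    rwa [hcyc, cyclotomic_eq_minpoly hζ (by omega)]
  haveI : IsDomain R := Function.Injective.isDomain f hinj
  have hθp : θ ^ p = 1 := by
    have h1 : AdjoinRoot.mk cyc (X ^ p - 1) = 0 :=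
      AdjoinRoot.mk_eq_zero.mpr (cyclotomic.dvd_X_pow_sub_one p ℤ)
    rw [map_sub, map_pow, map_one, AdjoinRoot.mk_X, sub_eq_zero] at h1
    exact h1
  -- φ to ZMod p
  have hroot1 : cyc.eval₂ (Int.castRingHom (ZMod p)) 1 = 0 := by
    rw [eval₂_at_one, hcyc, eval_one_cyclotomic_prime]
    simp
  set φ : R →+* ZMod p := AdjoinRoot.lift (Int.castRingHom (ZMod p)) 1 hroot1 with hφdef
  have hφθ : φ θ = 1 := AdjoinRoot.lift_root hroot1
  have hφθpow : ∀ a : ℕ, φ (θ ^ a) = 1 := fun a => by rw [map_pow, hφθ, one_pow]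
  set ϖ : R := θ - 1 with hϖdef
  have hϖ0 : ϖ ≠ 0 := by
    intro h
    have : f ϖ = 0 := by rw [h, map_zero]
    rw [hϖdef, map_sub, hfθ, map_one, sub_eq_zero] at this
    exact hζ.ne_one (by omega) this
  have hϖp : ϖ ∣ (p : R) := by
    have h1 : (X - 1 : ℤ[X]) ∣ (cyc - (p : ℤ[X])) := by
      have h0 : (X - C (1 : ℤ)) ∣ (cyc - (p : ℤ[X])) := by
        rw [dvd_iff_isRoot]
        simp [IsRoot, hcyc, eval_one_cyclotomic_prime]
      simpa using h0
    obtain ⟨g, hg⟩ := h1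
    have h2 := congrArg (AdjoinRoot.mk cyc) hg
    rw [map_sub, map_mul, map_sub, map_one, map_natCast, AdjoinRoot.mk_X,
      AdjoinRoot.mk_self] at h2
    exact ⟨-(AdjoinRoot.mk cyc g), by linear_combination -h2⟩
  have hker : ∀ x : R, φ x = 0 → ϖ ∣ x := by
    intro x hx
    obtain ⟨q, rfl⟩ := AdjoinRoot.mk_surjective x
    have hφx : ((q.eval 1 : ℤ) : ZMod p) = 0 := by
      rwa [hφdef, AdjoinRoot.lift_mk, eval₂_at_one] at hx
    have hpdvd : (p : ℤ) ∣ q.eval 1 := by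
      rwa [ZMod.intCast_zmod_eq_zero_iff_dvd] at hφx
    obtain ⟨u, hu⟩ := hpdvd
    have h1 : (X - 1 : ℤ[X]) ∣ (q - C (q.eval 1)) := by
      have h0 : (X - C (1 : ℤ)) ∣ (q - C (q.eval 1)) := by
        rw [dvd_iff_isRoot]; simp [IsRoot]
      simpa using h0
    obtain ⟨g, hg⟩ := h1
    have h2 := congrArg (AdjoinRoot.mk cyc) hg
    rw [map_sub, map_mul, map_sub, map_one, AdjoinRoot.mk_X, AdjoinRoot.mk_C] at h2
    have h4 : ϖ ∣ algebraMap ℤ R (q.eval 1) := by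
      rw [hu, map_mul, map_natCast]
      exact hϖp.mul_right _
    have h5 : ϖ ∣ (AdjoinRoot.mk cyc q - algebraMap ℤ R (q.eval 1)) := ⟨_, h2⟩
    simpa using dvd_add h5 h4
  have hϖnu : ¬IsUnit ϖ := by
    intro h
    haveI : Fact (1 < p) := ⟨by omega⟩
    have h2 : IsUnit (φ ϖ) := h.map φ
    rw [hϖdef, map_sub, hφθ, map_one, sub_self] at h2
    exact not_isUnit_zero h2
  -- the matrix over R
  set M' : Matrix (Fin k) (Fin k) R :=
    Matrix.of (fun i j => θ ^ (r i * s j) - θ ^ (r i * (p - s j))) with hM'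
  have hζp1 : ζ ^ p = 1 := hζ.pow_eq_one
  have hdetM' : M'.det = 0 := by
    have hsqrt : ((Real.sqrt p : ℝ) : ℂ) ≠ 0 := by
      rw [Complex.ofReal_ne_zero]
      exact Real.sqrt_ne_zero'.mpr (by positivity)
    have key : M'.map f = (I * (Real.sqrt p : ℝ)) •
        ((Matrix.of fun i j : Fin k =>
          2 * Real.sin (2 * Real.pi * (((ri i : ℕ) + 1) * ((ci j : ℕ) + 1) : ℕ) / p)
            / Real.sqrt p).map Complex.ofRealHom) := by
      ext i j
      simp only [Matrix.map_apply, Matrix.smul_apply, Matrix.of_apply, smul_eq_mul, hM']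
      rw [map_sub, map_pow, map_pow, hfθ]
      have ha : ζ ^ (r i * s j) =
          Complex.exp ((2 * Real.pi * ((r i * s j : ℕ) : ℝ) / p : ℝ) * I) := by
        rw [hζdef, ← Complex.exp_nat_mul]
        congr 1
        push_cast
        ring
      have hb : ζ ^ (r i * (p - s j)) =
          Complex.exp (-((2 * Real.pi * ((r i * s j : ℕ) : ℝ) / p : ℝ) * I)) := by
        have hsum : r i * (p - s j) + r i * s j = r i * p := by
          rw [← Nat.mul_add, Nat.sub_add_cancel (by have := (hs1 j).2; omega)]
        have h1 : ζ ^ (r i * (p - s j)) * ζ ^ (r i * s j) = 1 := by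
          rw [← pow_add, hsum, mul_comm (r i) p, pow_mul, hζp1, one_pow]
        rw [ha] at h1
        rw [Complex.exp_neg]
        exact eq_inv_of_mul_eq_one_left h1
      rw [ha, hb]
      set u : ℝ := 2 * Real.pi * ((r i * s j : ℕ) : ℝ) / p with hu
      have hsin : Complex.exp ((u : ℝ) * I) - Complex.exp (-((u : ℝ) * I)) =
          2 * I * Complex.sin u := by
        rw [Complex.sin, neg_mul]
        linear_combination (Complex.exp ((u : ℂ) * I) - Complex.exp (-((u : ℂ) * I))) *
          Complex.I_mul_I
      rw [hsin]
      have hcast : (Complex.ofRealHom (2 * Real.sin u / Real.sqrt p) : ℂ) =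
          2 * Complex.sin (u : ℂ) / ((Real.sqrt p : ℝ) : ℂ) := by
        rw [Complex.ofRealHom_eq_coe, Complex.ofReal_div, Complex.ofReal_mul,
          Complex.ofReal_sin, Complex.ofReal_ofNat]
      rw [hcast]
      field_simp
    have h0 : ((Matrix.of fun i j : Fin k =>
        2 * Real.sin (2 * Real.pi * (((ri i : ℕ) + 1) * ((ci j : ℕ) + 1) : ℕ) / p)
          / Real.sqrt p).map Complex.ofRealHom).det = 0 := by
      rw [← RingHom.mapMatrix_apply, ← RingHom.map_det, hdet, map_zero]
    apply hinj
    rw [map_zero, RingHom.map_det, RingHom.mapMatrix_apply, key, Matrix.det_smul, h0, mul_zero]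
  obtain ⟨v, hv0, hvM⟩ := Matrix.exists_mulVec_eq_zero_iff.mpr hdetM'
  have hrelv : ∀ i, ∑ j, M' i j * v j = 0 := by
    intro i
    have := congrFun hvM i
    simpa [Matrix.mulVec, dotProduct] using this
  -- descent
  obtain ⟨j0, hj0⟩ : ∃ j0, v j0 ≠ 0 := Function.ne_iff.mp hv0
  obtain ⟨N, hN⟩ : ∃ N, ¬ ϖ ^ N ∣ v j0 := by
    haveI : IsNoetherianRing R := inferInstanceAs (IsNoetherianRing (AdjoinRoot cyc))
    haveI : WfDvdMonoid R := IsNoetherianRing.wfDvdMonoid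
    obtain ⟨N, hN⟩ := FiniteMultiplicity.of_not_isUnit hϖnu hj0
    exact ⟨N + 1, hN⟩
  have descent : ∀ N (c : Fin k → R) (j0 : Fin k), ¬ ϖ ^ N ∣ c j0 →
      (∀ i, ∑ j, M' i j * c j = 0) →
      ∃ c' : Fin k → R, (∀ i, ∑ j, M' i j * c' j = 0) ∧ ∃ j1, φ (c' j1) ≠ 0 := by
    intro N
    induction N with
    | zero => intro c j0 hdvd _; rw [pow_zero] at hdvd; exact absurd (one_dvd _) hdvd
    | succ N ihN =>
      intro c j0 hdvd hrel
      by_cases hall : ∀ j, φ (c j) = 0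
      · have hc' : ∀ j, ∃ y, c j = ϖ * y := fun j => hker _ (hall j)
        choose c' hc' using hc'
        refine ihN c' j0 (fun hd => hdvd ?_) (fun i => ?_)
        · rw [hc' j0, pow_succ, mul_comm (ϖ ^ N) ϖ]
          exact mul_dvd_mul_left ϖ hd
        · have h1 : ϖ * ∑ j, M' i j * c' j = 0 := by
            rw [Finset.mul_sum, ← hrel i]
            exact Finset.sum_congr rfl fun j _ => by rw [hc' j]; ring
          exact (mul_eq_zero.mp h1).resolve_left hϖ0
      · push_neg at hall; exact ⟨c, hrel, hall⟩
  obtain ⟨c, hrel, j1, hj1⟩ := descent N v j0 hN hrelv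
  have hcj1 : c j1 ≠ 0 := fun h => hj1 (by rw [h, map_zero])
  -- the polynomial P
  set P : R[X] := ∑ j, C (c j) * (X ^ (s j) - X ^ (p - s j)) with hP
  have hθmod : ∀ a : ℕ, θ ^ a = θ ^ (a % p) := by
    intro a
    conv_lhs => rw [← Nat.div_add_mod a p]
    rw [pow_add, pow_mul, hθp, one_pow, one_mul]
  have hPcoeff : ∀ j0', P.coeff (s j0') = c j0' := by
    intro j0'
    rw [hP, finset_sum_coeff]
    rw [Finset.sum_eq_single j0']
    · rw [coeff_C_mul, coeff_sub, coeff_X_pow, coeff_X_pow, if_pos rfl,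
        if_neg (show ¬ s j0' = p - s j0' by have := (hs1 j0').1; have := (hs1 j0').2; omega),
        sub_zero, mul_one]
    · intro b _ hb
      rw [coeff_C_mul, coeff_sub, coeff_X_pow, coeff_X_pow,
        if_neg (fun h => hb (hsinj h.symm)),
        if_neg (show ¬ s j0' = p - s b by
          have := (hs1 b).1; have := (hs1 b).2; have := (hs1 j0').2; omega),
        sub_zero, mul_zero]
    · intro h; exact absurd (Finset.mem_univ j0') h
  have hPne : P ≠ 0 := fun h => hcj1 (by rw [← hPcoeff j1, h, coeff_zero])
  -- roots
  have hPone : P.eval 1 = 0 := by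
    rw [hP, eval_finset_sum]
    refine Finset.sum_eq_zero fun j _ => ?_
    rw [eval_mul, eval_sub, eval_pow, eval_pow, eval_X, one_pow, one_pow, sub_self, mul_zero]
  have hProotr : ∀ i, P.eval (θ ^ (r i)) = 0 := by
    intro i
    rw [hP, eval_finset_sum]
    rw [Finset.sum_congr rfl (fun j _ => show
        eval (θ ^ r i) (C (c j) * (X ^ s j - X ^ (p - s j))) = M' i j * c j by
      rw [eval_mul, eval_C, eval_sub, eval_pow, eval_pow, eval_X, ← pow_mul, ← pow_mul, hM']
      exact mul_comm _ _)]
    exact hrel i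
  have hProotr' : ∀ i, P.eval (θ ^ (p - r i)) = 0 := by
    intro i
    have hrp : r i ≤ p := by have := (hr1 i).2; omega
    have hmodeq : ∀ a b : ℕ, (a : ZMod p) = (b : ZMod p) → θ ^ a = θ ^ b := by
      intro a b hab
      rw [hθmod a, hθmod b, (ZMod.natCast_eq_natCast_iff a b p).mp hab]
    have he1 : ∀ j, (((p - r i) * s j : ℕ) : ZMod p) = ((r i * (p - s j) : ℕ) : ZMod p) := by
      intro j
      have hsp : s j ≤ p := by have := (hs1 j).2; omega
      push_cast [Nat.cast_sub hrp, Nat.cast_sub hsp, ZMod.natCast_self]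
      ring
    have he2 : ∀ j, (((p - r i) * (p - s j) : ℕ) : ZMod p) = ((r i * s j : ℕ) : ZMod p) := by
      intro j
      have hsp : s j ≤ p := by have := (hs1 j).2; omega
      push_cast [Nat.cast_sub hrp, Nat.cast_sub hsp, ZMod.natCast_self]
      ring
    rw [hP, eval_finset_sum]
    have hterm : ∀ j, eval (θ ^ (p - r i)) (C (c j) * (X ^ s j - X ^ (p - s j))) =
        -(M' i j * c j) := by
      intro j
      rw [eval_mul, eval_C, eval_sub, eval_pow, eval_pow, eval_X, ← pow_mul, ← pow_mul, hM']
      rw [hmodeq _ _ (he1 j), hmodeq _ _ (he2 j)]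
      simp only [Matrix.of_apply]
      ring
    rw [Finset.sum_congr rfl (fun j _ => hterm j), Finset.sum_neg_distrib, hrel i, neg_zero]
  -- the finset of roots
  have hθinj : ∀ a b : ℕ, a < p → b < p → θ ^ a = θ ^ b → a = b := by
    intro a b ha hb hab
    refine hζ.pow_inj ha hb ?_
    rw [← hfθ, ← map_pow, ← map_pow, hab]
  set A : Finset ℕ := insert 0 ((Finset.image r Finset.univ) ∪
    (Finset.image (fun i => p - r i) Finset.univ)) with hA
  have hrinj' : Function.Injective (fun i => p - r i) := by
    intro a b hab
    apply hrinj
    have ha := (hr1 a).2; have hb := (hr1 b).2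
    simp only at hab
    omega
  have hAcard : A.card = 2 * k + 1 := by
    rw [hA, Finset.card_insert_of_notMem, Finset.card_union_of_disjoint]
    · rw [Finset.card_image_of_injective _ hrinj, Finset.card_image_of_injective _ hrinj',
        Finset.card_univ, Fintype.card_fin]
      ring
    · rw [Finset.disjoint_left]
      rintro a ha hb
      obtain ⟨i1, -, h1⟩ := Finset.mem_image.mp ha
      obtain ⟨i2, -, h2⟩ := Finset.mem_image.mp hb
      have := (hr1 i1).1; have := (hr1 i1).2; have := (hr1 i2).1; have := (hr1 i2).2
      omega
    · rw [Finset.mem_union]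
      rintro (h | h)
      · obtain ⟨i1, -, h1⟩ := Finset.mem_image.mp h
        have := (hr1 i1).1; omega
      · obtain ⟨i1, -, h1⟩ := Finset.mem_image.mp h
        have := (hr1 i1).1; have := (hr1 i1).2; omega
  have hAlt : ∀ a ∈ A, a < p := by
    intro a ha
    rw [hA, Finset.mem_insert, Finset.mem_union] at ha
    rcases ha with rfl | h | h
    · omega
    · obtain ⟨i1, -, h1⟩ := Finset.mem_image.mp h
      have := (hr1 i1).2; omega
    · obtain ⟨i1, -, h1⟩ := Finset.mem_image.mp h
      have := (hr1 i1).1; omega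
  set T : Finset R := A.image (fun a => θ ^ a) with hT
  have hTcard : T.card = 2 * k + 1 := by
    rw [hT, Finset.card_image_of_injOn, hAcard]
    intro a ha b hb hab
    exact hθinj a b (hAlt a ha) (hAlt b hb) hab
  have hTroots : ∀ x ∈ T, P.eval x = 0 := by
    intro x hx
    obtain ⟨a, ha, rfl⟩ := Finset.mem_image.mp hx
    rw [hA, Finset.mem_insert, Finset.mem_union] at ha
    rcases ha with rfl | h | h
    · rw [pow_zero]; exact hPone
    · obtain ⟨i1, -, rfl⟩ := Finset.mem_image.mp h
      exact hProotr i1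
    · obtain ⟨i1, -, rfl⟩ := Finset.mem_image.mp h
      exact hProotr' i1
  have hdvdP : (∏ x ∈ T, (X - C x)) ∣ P := by
    have h1 : T.val ≤ P.roots := by
      rw [Multiset.le_iff_subset T.nodup]
      intro x hx
      rw [mem_roots hPne]
      exact hTroots x hx
    have h2 := (Multiset.prod_X_sub_C_dvd_iff_le_roots hPne T.val).mpr h1
    rwa [Finset.prod_eq_multiset_prod]
  -- mapping to ZMod p
  set Pb : (ZMod p)[X] := P.map φ with hPb
  have hdvdPb : (X - 1 : (ZMod p)[X]) ^ (2 * k + 1) ∣ Pb := by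
    obtain ⟨W, hW⟩ := hdvdP
    have h2 := congrArg (Polynomial.map φ) hW
    rw [Polynomial.map_mul, Polynomial.map_prod] at h2
    have h3 : ∀ x ∈ T, (X - C x).map φ = (X - 1 : (ZMod p)[X]) := by
      intro x hx
      obtain ⟨a, -, rfl⟩ := Finset.mem_image.mp hx
      rw [Polynomial.map_sub, Polynomial.map_X, Polynomial.map_C, hφθpow a, map_one]
    rw [Finset.prod_congr rfl h3, Finset.prod_const, hTcard] at h2
    exact ⟨W.map φ, by rw [hPb, h2]⟩
  have hPbdeg : Pb.natDegree < p := by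
    have h1 : P.natDegree ≤ p - 1 := by
      rw [hP]
      refine le_trans (natDegree_sum_le _ _) ?_
      rw [Finset.fold_max_le]
      refine ⟨by omega, fun j _ => ?_⟩
      refine le_trans (natDegree_C_mul_le _ _) (le_trans (natDegree_sub_le _ _) ?_)
      rw [natDegree_X_pow, natDegree_X_pow]
      have := (hs1 j).1; have := (hs1 j).2
      omega
    have h2 : Pb.natDegree ≤ P.natDegree := by
      rw [hPb]; exact natDegree_map_le
    omega
  have hPbcard : Pb.support.card ≤ 2 * k := by
    have hsupp : Pb.support ⊆ (Finset.image s Finset.univ) ∪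
        (Finset.image (fun j => p - s j) Finset.univ) := by
      intro d hd
      rw [mem_support_iff] at hd
      by_contra hdmem
      apply hd
      simp only [Finset.mem_union, Finset.mem_image, Finset.mem_univ, true_and,
        not_or, not_exists] at hdmem
      obtain ⟨hd1, hd2⟩ := hdmem
      rw [hPb, coeff_map, hP, finset_sum_coeff]
      rw [Finset.sum_eq_zero (fun j _ => ?_), map_zero]
      rw [coeff_C_mul, coeff_sub, coeff_X_pow, coeff_X_pow,
        if_neg (fun h => hd1 j h.symm), if_neg (fun h => hd2 j h.symm), sub_zero, mul_zero]
    calc Pb.support.card ≤ _ := Finset.card_le_card hsupp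
      _ ≤ (Finset.image s Finset.univ).card +
          (Finset.image (fun j => p - s j) Finset.univ).card := Finset.card_union_le _ _
      _ ≤ 2 * k := by
        have h1 := Finset.card_image_le (s := Finset.univ) (f := s)
        have h2 := Finset.card_image_le (s := Finset.univ) (f := fun j => p - s j)
        rw [Finset.card_univ, Fintype.card_fin] at h1 h2
        omega
  have hPb0 : Pb = 0 := by
    refine key_support_aux p Pb.support.card Pb le_rfl hPbdeg ?_
    exact dvd_trans (pow_dvd_pow _ (by omega)) hdvdPb
  have : Pb.coeff (s j1) = φ (c j1) := by rw [hPb, coeff_map, hPcoeff]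
  rw [hPb0, coeff_zero] at this
  exact hj1 this.symm

end Hard

open Real in
/-- The discrete sine transform matrix `S_n` (for odd `n ≥ 3`), of size
`(n-1)/2 × (n-1)/2` with rows and columns indexed by `1,…,(n-1)/2`, whose `(r,s)`-entry
is `2sin(2πrs/n)/√n`, has the nonvanishing minors property if and only if `n` is prime. -/
theorem dst_nonvanishing_minors_iff (n : ℕ) (hn : 3 ≤ n) (hodd : Odd n) :
    (∀ (k : ℕ) (ri ci : Fin k → Fin ((n - 1) / 2)),
      Function.Injective ri → Function.Injective ci →
      (Matrix.of fun i j : Fin k =>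
        2 * Real.sin (2 * Real.pi * (((ri i : ℕ) + 1) * ((ci j : ℕ) + 1) : ℕ) / n)
          / Real.sqrt n).det ≠ 0)
    ↔ n.Prime := by
  constructor
  · intro h
    by_contra hnp
    have hn0 : 0 < n := by omega
    set q := n.minFac with hq
    have hq2 : q ^ 2 ≤ n := Nat.minFac_sq_le_self hn0 hnp
    have hqp : q.Prime := Nat.minFac_prime (by omega)
    have hqdvd : q ∣ n := Nat.minFac_dvd n
    have hqodd : q ≠ 2 := by
      intro h2
      have hdd : (2 : ℕ) ∣ n := h2 ▸ hqdvd
      obtain ⟨t, ht⟩ := hodd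
      omega
    have hq3 : 3 ≤ q := by have := hqp.two_le; omega
    set w := n / q with hw
    have hwq : q * w = n := Nat.mul_div_cancel' hqdvd
    have hqq : q * q ≤ n := by rw [← hwq]; nlinarith [Nat.le_of_dvd hn0 hqdvd, hq2, sq q]
    have hqw : q ≤ w := Nat.le_of_mul_le_mul_left (by rw [hwq]; exact hqq) (by omega)
    have h3q : 3 * q ≤ q * q := by nlinarith
    have h3w : 3 * w ≤ q * w := Nat.mul_le_mul_right w hq3
    have hqlt : q - 1 < (n - 1) / 2 := by omega
    have hwlt : w - 1 < (n - 1) / 2 := by omega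
    have := h 1 (fun _ => ⟨q - 1, hqlt⟩) (fun _ => ⟨w - 1, hwlt⟩)
      (fun a b _ => Subsingleton.elim a b) (fun a b _ => Subsingleton.elim a b)
    apply this
    rw [Matrix.det_fin_one]
    simp only [Matrix.of_apply]
    have e1 : ((q - 1) + 1) * ((w - 1) + 1) = n := by
      rw [show (q - 1) + 1 = q by omega, show (w - 1) + 1 = w by omega, hwq]
    rw [show ((((⟨q - 1, hqlt⟩ : Fin ((n-1)/2)) : ℕ) + 1) *
        (((⟨w - 1, hwlt⟩ : Fin ((n-1)/2)) : ℕ) + 1) : ℕ) = n from e1]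
    rw [show 2 * Real.pi * (n : ℝ) / n = 2 * Real.pi by
      field_simp]
    rw [Real.sin_two_pi]
    simp
  · intro hprime k ri ci hri hci
    exact dst_det_ne_zero hprime hodd hn ri ci hri hci
end

section
/- Let p be a prime, let H be a subgroup of F_p^×, and let χ : H → ℂ^× be a nontrivial character. If f : F_p → ℂ is χ-symmetric and f is not identically zero, then |supp(f)| + |supp(f̂)| ≥ p + |H| − 1. -/
open Complex

open Finset MvPolynomial Matrix
set_option maxHeartbeats 1000000

lemma my_prod_primes_dvd {α : Type*} [CommMonoidWithZero α] [IsCancelMulZero α] {ι : Type*} [DecidableEq ι]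
    (s : Finset ι) (q : ι → α) (hp : ∀ i ∈ s, Prime (q i))
    (hna : ∀ i ∈ s, ∀ j ∈ s, i ≠ j → ¬ Associated (q i) (q j)) :
    ∀ n : α, (∀ i ∈ s, q i ∣ n) → (∏ i ∈ s, q i) ∣ n := by
  induction s using Finset.induction with
  | empty => intro n _; simp
  | insert a s ha ih =>
    intro n hd
    obtain ⟨m, hm⟩ := hd a (mem_insert_self a s)
    rw [Finset.prod_insert ha, hm]
    refine mul_dvd_mul_left _ (ih (fun i hi => hp i (mem_insert_of_mem hi))
      (fun i hi j hj hij => hna i (mem_insert_of_mem hi) j (mem_insert_of_mem hj) hij) m ?_)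
    intro i hi
    have hqi : q i ∣ q a * m := hm ▸ hd i (mem_insert_of_mem hi)
    rcases (hp i (mem_insert_of_mem hi)).dvd_or_dvd hqi with h | h
    · exact absurd ((hp i (mem_insert_of_mem hi)).associated_of_dvd (hp a (mem_insert_self a s)) h)
        (hna i (mem_insert_of_mem hi) a (mem_insert_self a s) (by rintro rfl; exact ha hi))
    · exact h

lemma my_prime_ringEquiv {α β : Type*} [CommRing α] [CommRing β] (e : α ≃+* β) {a : α}
    (h : Prime a) : Prime (e a) := by
  refine ⟨fun h0 => h.1 (by simpa using congrArg e.symm h0), fun hu => h.2.1 ?_, fun x y hxy => ?_⟩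
  · have := hu.map e.symm; simpa using this
  · have : a ∣ e.symm x * e.symm y := by
      have := map_dvd e.symm hxy; simpa using this
    rcases h.2.2 _ _ this with hh | hh
    · left; have := map_dvd e hh; simpa using this
    · right; have := map_dvd e hh; simpa using this

section Sep

variable {R : Type*} [CommRing R] {σ : Type*} [DecidableEq σ]

noncomputable def sepEquiv (i : σ) :
    MvPolynomial σ R ≃ₐ[R] Polynomial (MvPolynomial {k : σ // k ≠ i} R) :=
  (renameEquiv R (Equiv.optionSubtypeNe i).symm).trans (optionEquivLeft R {k : σ // k ≠ i})

lemma sepEquiv_X_self (i : σ) : sepEquiv (R := R) i (X i) = Polynomial.X := by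
  simp [sepEquiv, Equiv.optionSubtypeNe_symm_self, optionEquivLeft_X_none]

lemma sepEquiv_X_ne (i : σ) {j : σ} (h : j ≠ i) :
    sepEquiv (R := R) i (X j) = Polynomial.C (X ⟨j, h⟩) := by
  simp [sepEquiv, Equiv.optionSubtypeNe_symm_of_ne h, optionEquivLeft_X_some]

lemma prime_X_sub_X [IsDomain R] {i j : σ} (h : j ≠ i) :
    Prime ((X i - X j : MvPolynomial σ R)) := by
  have hP : Prime (Polynomial.X - Polynomial.C (X ⟨j, h⟩) :
      Polynomial (MvPolynomial {k : σ // k ≠ i} R)) := Polynomial.prime_X_sub_C _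
  have key : (X i - X j : MvPolynomial σ R) =
      (sepEquiv (R := R) i).symm (Polynomial.X - Polynomial.C (X ⟨j, h⟩)) := by
    apply (sepEquiv (R := R) i).injective
    simp [map_sub, sepEquiv_X_self, sepEquiv_X_ne i h]
  rw [key]
  exact my_prime_ringEquiv (sepEquiv (R := R) i).symm.toRingEquiv hP



lemma X_sub_X_dvd_of_subst {i j : σ} (h : j ≠ i) (f : MvPolynomial σ R)
    (hf : aeval (fun k => if k = i then X j else X k : σ → MvPolynomial σ R) f = 0) : X i - X j ∣ f := by
  classical
  set u : σ → MvPolynomial {k : σ // k ≠ i} R :=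
    fun k => if hk : k = i then X ⟨j, h⟩ else X ⟨k, hk⟩ with hu
  set Ψ : MvPolynomial σ R →ₐ[R] MvPolynomial {k : σ // k ≠ i} R := aeval u with hΨ
  have hcomp : AlgHom.comp
      (((Polynomial.aeval (X ⟨j, h⟩ : MvPolynomial {k : σ // k ≠ i} R)).restrictScalars R))
      (sepEquiv (R := R) i).toAlgHom = Ψ := by
    apply MvPolynomial.algHom_ext
    intro k
    by_cases hk : k = i
    · subst hk
      simp [sepEquiv_X_self, hΨ, hu]
    · simp [sepEquiv_X_ne i hk, hΨ, hu, hk]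
  have hΨu : Ψ.comp (aeval (fun k => if k = i then X j else X k : σ → MvPolynomial σ R)) = Ψ := by
    apply MvPolynomial.algHom_ext
    intro k
    by_cases hk : k = i <;> simp [hΨ, hu, hk, h]
  have hΨf : Ψ f = 0 := by
    have := congrArg (fun g => g f) hΨu
    simp only [AlgHom.comp_apply] at this
    rw [← this, hf, map_zero]
  have hroot : Polynomial.IsRoot (sepEquiv (R := R) i f) (X ⟨j, h⟩) := by
    have := congrArg (fun g => g f) hcomp
    simp only [AlgHom.comp_apply, AlgHom.restrictScalars_apply] at this
    rw [Polynomial.IsRoot.def, ← Polynomial.coe_aeval_eq_eval]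
    simpa [hΨf] using this
  have hdvd : Polynomial.X - Polynomial.C (X ⟨j, h⟩) ∣ sepEquiv (R := R) i f :=
    Polynomial.dvd_iff_isRoot.mpr hroot
  have key : (X i - X j : MvPolynomial σ R) =
      (sepEquiv (R := R) i).symm (Polynomial.X - Polynomial.C (X ⟨j, h⟩)) := by
    apply (sepEquiv (R := R) i).injective
    simp [map_sub, sepEquiv_X_self, sepEquiv_X_ne i h]
  obtain ⟨g, hg⟩ := hdvd
  refine ⟨(sepEquiv (R := R) i).symm g, ?_⟩
  have := congrArg (sepEquiv (R := R) i).symm hg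
  simpa [key, _root_.map_mul] using this


end Sep

lemma not_assoc_X_sub_X {σ : Type*} [DecidableEq σ] {i j k l m : σ}
    (hij : i ≠ j) (hm : m = i ∨ m = j) (hk : m ≠ k) (hl : m ≠ l) :
    ¬ Associated (X j - X i : MvPolynomial σ ℤ) (X l - X k) := by
  rintro ⟨u, hu⟩
  set v : σ → ℤ := fun t => if t = m then 1 else 0 with hv
  have h2 : MvPolynomial.eval v (X l - X k : MvPolynomial σ ℤ) = 0 := by
    simp [hv, Ne.symm hk, Ne.symm hl]
  have hu' : IsUnit (MvPolynomial.eval v (u : MvPolynomial σ ℤ)) := u.isUnit.map (eval v)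
  have h1 : MvPolynomial.eval v (X j - X i : MvPolynomial σ ℤ) ≠ 0 := by
    rcases hm with rfl | rfl
    · simp [hv, Ne.symm hij]
    · simp [hv, hij]
  have := congrArg (MvPolynomial.eval v) hu
  rw [_root_.map_mul, h2] at this
  exact mul_ne_zero h1 hu'.ne_zero this

lemma vandermonde_dvd_det_pow {n : ℕ} (e : Fin n → ℕ) :
    (∏ i : Fin n, ∏ j ∈ Ioi i, (X j - X i : MvPolynomial (Fin n) ℤ)) ∣
      (Matrix.of fun i j : Fin n => (X i : MvPolynomial (Fin n) ℤ) ^ e j).det := by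
  classical
  rw [← Finset.prod_sigma (Finset.univ : Finset (Fin n)) (fun i => Ioi i)
    (fun q => (X q.2 - X q.1 : MvPolynomial (Fin n) ℤ))]
  apply my_prod_primes_dvd
  · rintro ⟨i, j⟩ hq
    simp only [Finset.mem_sigma, Finset.mem_Ioi, Finset.mem_univ, true_and] at hq
    exact prime_X_sub_X (ne_of_lt hq)
  · rintro ⟨i, j⟩ hq ⟨k, l⟩ hq' hne
    simp only [Finset.mem_sigma, Finset.mem_Ioi, Finset.mem_univ, true_and] at hq hq'
    have hij : i < j := hq
    have hkl : k < l := hq'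
    show ¬ Associated (X j - X i : MvPolynomial (Fin n) ℤ) (X l - X k)
    by_cases hik : i = k
    · subst hik
      have hjl : j ≠ l := by
        intro hc; exact hne (by rw [hc])
      exact not_assoc_X_sub_X (ne_of_lt hij) (Or.inr rfl) (ne_of_gt hij) hjl
    · by_cases hil : i = l
      · have h1 : k ≠ i := fun hh => (ne_of_lt hkl) (hh.trans hil)
        have h2 : k ≠ j := ne_of_lt (lt_trans (hil ▸ hkl) hij)
        exact fun hassoc =>
          not_assoc_X_sub_X (ne_of_lt hkl) (Or.inl rfl) h1 h2 hassoc.symm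
      · exact not_assoc_X_sub_X (ne_of_lt hij) (Or.inl rfl) hik hil
  · rintro ⟨i, j⟩ hq
    simp only [Finset.mem_sigma, Finset.mem_Ioi, Finset.mem_univ, true_and] at hq
    have hne : i ≠ j := ne_of_lt hq
    show (X j - X i : MvPolynomial (Fin n) ℤ) ∣ _
    rw [← neg_sub, neg_dvd]
    apply X_sub_X_dvd_of_subst hne.symm
    show ((aeval (fun k => if k = i then X j else X k :
        Fin n → MvPolynomial (Fin n) ℤ)).toRingHom)
        (Matrix.of fun i' j' => (X i' : MvPolynomial (Fin n) ℤ) ^ e j').det = 0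
    rw [RingHom.map_det]
    apply Matrix.det_zero_of_row_eq hne
    funext c
    simp [RingHom.mapMatrix_apply, Matrix.map_apply, hne]


lemma eval_one_comp_pow {n : ℕ} (γ : Fin n → ℕ) (Q : MvPolynomial (Fin n) ℤ) :
    Polynomial.eval (1 : ℤ) (aeval (fun i => (Polynomial.X : Polynomial ℤ) ^ γ i) Q)
      = aeval (fun _ => (1 : ℤ)) Q := by
  have hcomp : (Polynomial.aeval (1 : ℤ)).comp
      (aeval (fun i => (Polynomial.X : Polynomial ℤ) ^ γ i)) = aeval (fun _ => (1 : ℤ)) := by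
    apply MvPolynomial.algHom_ext
    intro i
    simp
  have h := congrArg (fun g => g Q) hcomp
  simp only [AlgHom.comp_apply] at h
  rw [← h, Polynomial.coe_aeval_eq_eval]

lemma bridge {n : ℕ} (e : Fin n → ℕ) (Q : MvPolynomial (Fin n) ℤ)
    (hQ : (Matrix.of fun i j : Fin n => (X i : MvPolynomial (Fin n) ℤ) ^ e j).det
      = (∏ i : Fin n, ∏ j ∈ Ioi i, (X j - X i : MvPolynomial (Fin n) ℤ)) * Q) :
    ∏ i : Fin n, ∏ j ∈ Ioi i, ((e j : ℤ) - (e i : ℤ))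
      = (∏ i : Fin n, ∏ j ∈ Ioi i, ((j : ℤ) - (i : ℤ))) * aeval (fun _ => (1 : ℤ)) Q := by
  classical
  set φ := aeval (R := ℤ) (fun i : Fin n => (Polynomial.X : Polynomial ℤ) ^ (i : ℕ)) with hφ
  set q1 := φ Q with hq1
  -- apply φ to hQ
  have h1 : (∏ i : Fin n, ∏ j ∈ Ioi i, ((Polynomial.X : Polynomial ℤ) ^ e j - Polynomial.X ^ e i))
      = (∏ i : Fin n, ∏ j ∈ Ioi i, ((Polynomial.X : Polynomial ℤ) ^ (j : ℕ) - Polynomial.X ^ (i : ℕ))) * q1 := by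
    have hdet : φ ((Matrix.of fun i j : Fin n => (X i : MvPolynomial (Fin n) ℤ) ^ e j).det)
        = (∏ i : Fin n, ∏ j ∈ Ioi i, ((Polynomial.X : Polynomial ℤ) ^ e j - Polynomial.X ^ e i)) := by
      show (φ.toRingHom) _ = _
      rw [RingHom.map_det]
      have hmat : φ.toRingHom.mapMatrix (Matrix.of fun i j : Fin n => (X i : MvPolynomial (Fin n) ℤ) ^ e j)
          = (Matrix.vandermonde (fun j : Fin n => (Polynomial.X : Polynomial ℤ) ^ e j))ᵀ := by
        refine Matrix.ext fun i j => ?_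
        simp only [RingHom.mapMatrix_apply, Matrix.map_apply, Matrix.of_apply,
          Matrix.transpose_apply, Matrix.vandermonde_apply, AlgHom.toRingHom_eq_coe, RingHom.coe_coe]
        rw [map_pow, hφ, aeval_X, ← pow_mul, ← pow_mul, mul_comm]
      rw [hmat, Matrix.det_transpose, Matrix.det_vandermonde]
    have hV : φ (∏ i : Fin n, ∏ j ∈ Ioi i, (X j - X i : MvPolynomial (Fin n) ℤ))
        = ∏ i : Fin n, ∏ j ∈ Ioi i, ((Polynomial.X : Polynomial ℤ) ^ (j : ℕ) - Polynomial.X ^ (i : ℕ)) := by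
      rw [map_prod]
      refine Finset.prod_congr rfl fun i _ => ?_
      rw [map_prod]
      refine Finset.prod_congr rfl fun j _ => ?_
      rw [map_sub, hφ, aeval_X, aeval_X]
    rw [← hdet, hQ, _root_.map_mul, hV, hq1]
  -- introduce g
  set g : ℕ → ℕ → Polynomial ℤ := fun a b =>
    (∑ t ∈ range b, Polynomial.X ^ t) - (∑ t ∈ range a, Polynomial.X ^ t) with hg
  have hgmul : ∀ a b : ℕ, (Polynomial.X - 1 : Polynomial ℤ) * g a b
      = Polynomial.X ^ b - Polynomial.X ^ a := by
    intro a b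
    rw [hg]
    simp only [mul_sub]
    rw [mul_comm (Polynomial.X - 1 : Polynomial ℤ), mul_comm (Polynomial.X - 1 : Polynomial ℤ),
      geom_sum_mul, geom_sum_mul]
    ring
  have hgeval : ∀ a b : ℕ, Polynomial.eval (1 : ℤ) (g a b) = (b : ℤ) - (a : ℤ) := by
    intro a b
    simp [hg]
  have hXone : (Polynomial.X - 1 : Polynomial ℤ) ≠ 0 := by
    intro h
    have := congrArg (Polynomial.eval (0 : ℤ)) h
    simp at this
  -- cancel
  have h2 : (∏ i : Fin n, ∏ j ∈ Ioi i, g (e i) (e j))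
      = (∏ i : Fin n, ∏ j ∈ Ioi i, g (i : ℕ) (j : ℕ)) * q1 := by
    have hC : (∏ i : Fin n, ∏ _j ∈ Ioi i, (Polynomial.X - 1 : Polynomial ℤ)) ≠ 0 := by
      rw [Finset.prod_ne_zero_iff]
      intro i _
      rw [Finset.prod_ne_zero_iff]
      intro j _
      exact hXone
    apply mul_left_cancel₀ hC
    calc (∏ i : Fin n, ∏ _j ∈ Ioi i, (Polynomial.X - 1 : Polynomial ℤ))
          * ∏ i : Fin n, ∏ j ∈ Ioi i, g (e i) (e j)
        = ∏ i : Fin n, ∏ j ∈ Ioi i, ((Polynomial.X - 1 : Polynomial ℤ) * g (e i) (e j)) := by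
          rw [← Finset.prod_mul_distrib]
          refine Finset.prod_congr rfl fun i _ => (Finset.prod_mul_distrib).symm
      _ = ∏ i : Fin n, ∏ j ∈ Ioi i, ((Polynomial.X : Polynomial ℤ) ^ e j - Polynomial.X ^ e i) := by
          refine Finset.prod_congr rfl fun i _ => Finset.prod_congr rfl fun j _ => hgmul _ _
      _ = (∏ i : Fin n, ∏ j ∈ Ioi i, ((Polynomial.X : Polynomial ℤ) ^ (j:ℕ) - Polynomial.X ^ (i:ℕ))) * q1 := h1
      _ = (∏ i : Fin n, ∏ j ∈ Ioi i, ((Polynomial.X - 1 : Polynomial ℤ) * g (i:ℕ) (j:ℕ))) * q1 := by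
          refine congrArg (· * q1) ?_
          refine Finset.prod_congr rfl fun i _ => Finset.prod_congr rfl fun j _ => (hgmul _ _).symm
      _ = ((∏ i : Fin n, ∏ _j ∈ Ioi i, (Polynomial.X - 1 : Polynomial ℤ))
          * ∏ i : Fin n, ∏ j ∈ Ioi i, g (i:ℕ) (j:ℕ)) * q1 := by
          refine congrArg (· * q1) ?_
          rw [← Finset.prod_mul_distrib]
          exact Finset.prod_congr rfl fun i _ => Finset.prod_mul_distrib
      _ = (∏ i : Fin n, ∏ _j ∈ Ioi i, (Polynomial.X - 1 : Polynomial ℤ))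
          * ((∏ i : Fin n, ∏ j ∈ Ioi i, g (i:ℕ) (j:ℕ)) * q1) := by ring
  -- evaluate at 1
  have h3 := congrArg (Polynomial.eval (1 : ℤ)) h2
  rw [Polynomial.eval_mul] at h3
  rw [Polynomial.eval_prod] at h3
  simp only [Polynomial.eval_prod, hgeval] at h3
  rw [hq1, hφ, eval_one_comp_pow] at h3
  exact h3

theorem cheb_det_ne_zero {p : ℕ} [hp : Fact p.Prime] {n : ℕ} {r c : Fin n → ZMod p}
    (hr : Function.Injective r) (hc : Function.Injective c) :
    (Matrix.of fun i j : Fin n =>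
      Complex.exp (2 * Real.pi * Complex.I / p) ^ ((r i).val * (c j).val)).det ≠ 0 := by
  classical
  haveI : NeZero p := ⟨hp.out.ne_zero⟩
  set ω : ℂ := Complex.exp (2 * Real.pi * Complex.I / p) with hωdef
  have hω : IsPrimitiveRoot ω p := Complex.isPrimitiveRoot_exp p hp.out.ne_zero
  set e : Fin n → ℕ := fun j => (c j).val with he
  set α : Fin n → ℕ := fun i => (r i).val with hα
  obtain ⟨Q, hQ⟩ := vandermonde_dvd_det_pow (n := n) e
  set ψ : MvPolynomial (Fin n) ℤ →ₐ[ℤ] ℂ := aeval (fun i : Fin n => ω ^ α i) with hψ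
  intro hdet0
  -- ψ of the determinant is the complex determinant
  have hψD : ψ ((Matrix.of fun i j : Fin n => (X i : MvPolynomial (Fin n) ℤ) ^ e j).det)
      = (Matrix.of fun i j : Fin n => ω ^ ((r i).val * (c j).val)).det := by
    show (ψ.toRingHom) _ = _
    rw [RingHom.map_det]
    congr 1
    refine Matrix.ext fun i j => ?_
    simp only [RingHom.mapMatrix_apply, Matrix.map_apply, Matrix.of_apply,
      AlgHom.toRingHom_eq_coe, RingHom.coe_coe]
    rw [map_pow, hψ, aeval_X, ← pow_mul]
  have hψV : ψ (∏ i : Fin n, ∏ j ∈ Ioi i, (X j - X i : MvPolynomial (Fin n) ℤ)) ≠ 0 := by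
    rw [map_prod]
    rw [Finset.prod_ne_zero_iff]
    intro i _
    rw [map_prod, Finset.prod_ne_zero_iff]
    intro j hj
    rw [Finset.mem_Ioi] at hj
    rw [map_sub, hψ, aeval_X, aeval_X]
    apply sub_ne_zero_of_ne
    intro hpow
    have hij : α j = α i := hω.pow_inj (ZMod.val_lt _) (ZMod.val_lt _) hpow
    exact absurd (hr (ZMod.val_injective p hij)) (ne_of_gt hj)
  -- hence ψ Q = 0
  have hψQ : ψ Q = 0 := by
    have h0 : ψ ((Matrix.of fun i j : Fin n => (X i : MvPolynomial (Fin n) ℤ) ^ e j).det) = 0 := by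
      rw [hψD]; exact hdet0
    rw [hQ, _root_.map_mul] at h0
    rcases mul_eq_zero.mp h0 with h | h
    · exact absurd h hψV
    · exact h
  -- factor ψ through the univariate evaluation
  set q2 : Polynomial ℤ := aeval (fun i => (Polynomial.X : Polynomial ℤ) ^ α i) Q with hq2
  have hcomp : (Polynomial.aeval ω).comp
      (aeval (fun i => (Polynomial.X : Polynomial ℤ) ^ α i)) = ψ := by
    apply MvPolynomial.algHom_ext
    intro i
    simp [hψ]
  have hq2ω : Polynomial.aeval ω q2 = 0 := by
    have := congrArg (fun g => g Q) hcomp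
    simp only [AlgHom.comp_apply] at this
    rw [hq2, this, hψQ]
  have hint : IsIntegral ℤ ω := hω.isIntegral hp.out.pos
  have hmin : minpoly ℤ ω ∣ q2 := minpoly.isIntegrallyClosed_dvd hint hq2ω
  rw [← Polynomial.cyclotomic_eq_minpoly hω hp.out.pos] at hmin
  obtain ⟨s, hs⟩ := hmin
  have hpdvd : (p : ℤ) ∣ Polynomial.eval (1 : ℤ) q2 := by
    rw [hs, Polynomial.eval_mul, Polynomial.eval_one_cyclotomic_prime]
    exact Dvd.intro _ rfl
  rw [hq2, eval_one_comp_pow] at hpdvd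
  have hkey := bridge e Q hQ
  have hpprod : (p : ℤ) ∣ ∏ i : Fin n, ∏ j ∈ Ioi i, ((e j : ℤ) - (e i : ℤ)) := by
    rw [hkey]
    exact Dvd.dvd.mul_left hpdvd _
  have hpZ : Prime (p : ℤ) := Int.prime_iff_natAbs_prime.mpr (by simpa using hp.out)
  rw [hpZ.dvd_finset_prod_iff] at hpprod
  obtain ⟨i, _, hi⟩ := hpprod
  rw [hpZ.dvd_finset_prod_iff] at hi
  obtain ⟨j, hj, hij⟩ := hi
  rw [Finset.mem_Ioi] at hj
  have habs : |((e j : ℤ) - (e i : ℤ))| < (p : ℤ) := by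
    have h1 : e j < p := ZMod.val_lt (c j)
    have h2 : e i < p := ZMod.val_lt (c i)
    rw [abs_sub_lt_iff]
    constructor <;> [skip; skip] <;> omega
  have h0 : ((e j : ℤ) - (e i : ℤ)) = 0 := Int.eq_zero_of_abs_lt_dvd hij habs
  have hee : e j = e i := by omega
  exact absurd (hc (ZMod.val_injective p hee)) (ne_of_gt hj)


theorem tao_uncertainty {p : ℕ} [hp : Fact p.Prime] (f : ZMod p → ℂ) (hf : f ≠ 0) :
    p + 1 ≤ (Finset.univ.filter fun x => f x ≠ 0).card
      + (Finset.univ.filter fun a => (∑ b : ZMod p,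
          f b * Complex.exp (2 * Real.pi * Complex.I * ((a * b).val : ℕ) / p)) ≠ 0).card := by
  classical
  haveI : NeZero p := ⟨hp.out.ne_zero⟩
  set ω : ℂ := Complex.exp (2 * Real.pi * Complex.I / p) with hωdef
  have hω : IsPrimitiveRoot ω p := Complex.isPrimitiveRoot_exp p hp.out.ne_zero
  set F : ZMod p → ℂ := fun a => ∑ b : ZMod p,
    f b * Complex.exp (2 * Real.pi * Complex.I * ((a * b).val : ℕ) / p) with hFdef
  have hexp : ∀ m : ℕ, Complex.exp (2 * Real.pi * Complex.I * (m : ℕ) / p) = ω ^ m := by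
    intro m
    rw [hωdef, ← Complex.exp_nat_mul]
    congr 1
    ring
  have hmod : ∀ x y : ZMod p, ω ^ ((x * y).val) = ω ^ (x.val * y.val) := by
    intro x y
    have h2 : ω ^ (x.val * y.val) = ω ^ (x.val * y.val % p) * (ω ^ p) ^ (x.val * y.val / p) := by
      rw [← pow_mul, ← pow_add, Nat.mod_add_div]
    rw [h2, hω.pow_eq_one, one_pow, mul_one, ZMod.val_mul]
  set A : Finset (ZMod p) := Finset.univ.filter fun x => f x ≠ 0 with hA
  set B : Finset (ZMod p) := Finset.univ.filter fun a => F a ≠ 0 with hB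
  by_contra hlt
  push_neg at hlt
  have hABp : A.card + B.card ≤ p := by omega
  set n := A.card with hn
  have hcompl : n ≤ Bᶜ.card := by
    rw [Finset.card_compl]
    have : Fintype.card (ZMod p) = p := ZMod.card p
    omega
  obtain ⟨T, hTsub, hTcard⟩ := Finset.exists_subset_card_eq hcompl
  set eA : Fin n ≃ {x // x ∈ A} := A.equivFin.symm with heA
  set eT : Fin n ≃ {x // x ∈ T} := ((T.equivFin).trans (finCongr hTcard)).symm with heT
  set a : Fin n → ZMod p := fun i => ((eA i : {x // x ∈ A}) : ZMod p) with ha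
  set t : Fin n → ZMod p := fun i => ((eT i : {x // x ∈ T}) : ZMod p) with ht
  have hainj : Function.Injective a := fun i j hij =>
    eA.injective (Subtype.ext hij)
  have htinj : Function.Injective t := fun i j hij =>
    eT.injective (Subtype.ext hij)
  have htmem : ∀ i, t i ∈ T := fun i => (eT i).2
  have hFt : ∀ i, F (t i) = 0 := by
    intro i
    have : t i ∈ Bᶜ := hTsub (htmem i)
    rw [Finset.mem_compl, hB, Finset.mem_filter] at this
    push_neg at this
    exact this (Finset.mem_univ _)
  -- rewrite F (t i) as a matrix-vector product
  have hsum : ∀ i, ∑ j : Fin n, ω ^ ((t i).val * (a j).val) * f (a j) = 0 := by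
    intro i
    have h1 : F (t i) = ∑ b ∈ A, f b * ω ^ ((t i * b).val) := by
      rw [hFdef, hA]
      rw [Finset.sum_filter_of_ne
        (by intro x _ hfx hne; rw [hne, zero_mul] at hfx; exact hfx rfl)]
      refine Finset.sum_congr rfl fun b _ => ?_
      rw [hexp]
    have h2 : ∑ b ∈ A, f b * ω ^ ((t i * b).val)
        = ∑ j : Fin n, f (a j) * ω ^ ((t i * a j).val) := by
      rw [← Finset.sum_coe_sort]
      exact (Fintype.sum_equiv eA (fun j : Fin n => f (a j) * ω ^ ((t i * a j).val))
        (fun x : {x // x ∈ A} => f (x : ZMod p) * ω ^ ((t i * (x : ZMod p)).val))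
        (fun j => rfl)).symm
    have h3 : ∀ j, f (a j) * ω ^ ((t i * a j).val)
        = ω ^ ((t i).val * (a j).val) * f (a j) := by
      intro j
      rw [hmod, mul_comm]
    calc ∑ j : Fin n, ω ^ ((t i).val * (a j).val) * f (a j)
        = ∑ j : Fin n, f (a j) * ω ^ ((t i * a j).val) := by
          exact Finset.sum_congr rfl fun j _ => (h3 j).symm
      _ = F (t i) := by rw [h1, h2]
      _ = 0 := hFt i
  have hdet := cheb_det_ne_zero (p := p) htinj hainj
  have hv : (fun j => f (a j)) = 0 := by
    apply Matrix.eq_zero_of_mulVec_eq_zero hdet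
    funext i
    simp only [Matrix.mulVec, dotProduct, Matrix.of_apply]
    exact hsum i
  obtain ⟨x, hx⟩ := Function.ne_iff.mp hf
  have hxA : x ∈ A := by rw [hA, Finset.mem_filter]; exact ⟨Finset.mem_univ _, hx⟩
  set j := eA.symm ⟨x, hxA⟩ with hj
  have : a j = x := by
    rw [ha, hj]
    simp
  have := congrArg (fun g => g j) hv
  simp only [Pi.zero_apply] at this
  rw [‹a j = x›] at this
  exact hx this

lemma card_dvd_of_stable {p : ℕ} [hp : Fact p.Prime] (H : Subgroup (ZMod p)ˣ)
    (A : Finset (ZMod p)) (h0 : (0 : ZMod p) ∉ A)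
    (hst : ∀ (h : H) (x : ZMod p), x ∈ A → ((h : (ZMod p)ˣ) : ZMod p) * x ∈ A) :
    Nat.card H ∣ A.card := by
  classical
  induction A using Finset.strongInduction with
  | _ A ih =>
    rcases A.eq_empty_or_nonempty with rfl | ⟨x, hx⟩
    · simp
    · have hxne : x ≠ 0 := fun hc => h0 (hc ▸ hx)
      set O : Finset (ZMod p) :=
        Finset.image (fun h : H => ((h : (ZMod p)ˣ) : ZMod p) * x) Finset.univ with hO
      have hOsub : O ⊆ A := by
        intro y hy
        rw [hO, Finset.mem_image] at hy
        obtain ⟨h, _, rfl⟩ := hy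
        exact hst h x hx
      have hOcard : O.card = Nat.card H := by
        rw [hO, Finset.card_image_of_injective _ ?_, Finset.card_univ, Nat.card_eq_fintype_card]
        intro h1 h2 hh
        have : ((h1 : (ZMod p)ˣ) : ZMod p) = ((h2 : (ZMod p)ˣ) : ZMod p) :=
          mul_right_cancel₀ hxne hh
        exact Subtype.ext (Units.ext this)
      have hxO : x ∈ O := by
        rw [hO, Finset.mem_image]
        exact ⟨1, Finset.mem_univ _, by simp⟩
      have hss : A \ O ⊂ A := by
        refine Finset.sdiff_ssubset ?_ ?_
        · exact hOsub
        · exact ⟨x, hxO⟩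
      have h0' : (0 : ZMod p) ∉ A \ O := fun hc => h0 (Finset.mem_sdiff.mp hc).1
      have hst' : ∀ (h : H) (y : ZMod p), y ∈ A \ O → ((h : (ZMod p)ˣ) : ZMod p) * y ∈ A \ O := by
        intro h y hy
        rw [Finset.mem_sdiff] at hy ⊢
        refine ⟨hst h y hy.1, fun hc => hy.2 ?_⟩
        rw [hO, Finset.mem_image] at hc ⊢
        obtain ⟨h', _, hh'⟩ := hc
        refine ⟨h⁻¹ * h', Finset.mem_univ _, ?_⟩
        have := congrArg (fun z => ((h⁻¹ : H) : (ZMod p)ˣ).1 * z) hh'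
        push_cast at this ⊢
        rw [← mul_assoc] at this
        rw [this, ← mul_assoc, inv_mul_cancel₀ (Units.ne_zero _), one_mul]
      have hdvd := ih (A \ O) hss h0' hst'
      have hcard : A.card = (A \ O).card + Nat.card H := by
        rw [Finset.card_sdiff_of_subset hOsub, hOcard]
        have := Finset.card_le_card hOsub
        omega
      rw [hcard]
      exact Nat.dvd_add hdvd dvd_rfl

/-- Uncertainty principle for `χ`-symmetric functions with `χ` nontrivial: if `p` is
prime, `H ≤ F_p^×`, `χ : H → ℂ^×` is a nontrivial character, and `f : F_p → ℂ` is a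
nonzero function with `f(hx) = χ(h)f(x)` for all `h ∈ H`, `x ∈ F_p`, then
`|supp f| + |supp f̂| ≥ p + |H| - 1`. -/
theorem uncertainty_chi_symmetric_nontrivial (p : ℕ) [Fact p.Prime]
    (H : Subgroup (ZMod p)ˣ) (χ : H →* ℂˣ) (hχ : χ ≠ 1)
    (f : ZMod p → ℂ) (hf : f ≠ 0)
    (hsym : ∀ (h : H) (x : ZMod p), f (((h : (ZMod p)ˣ) : ZMod p) * x) = (χ h : ℂ) * f x) :
    p + Nat.card H - 1 ≤
      (Function.support f).ncard +
      (Function.support fun a : ZMod p =>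
        ∑ b : ZMod p, f b * Complex.exp (2 * Real.pi * Complex.I * ((a * b).val : ℕ) / p)).ncard := by
  classical
  have hp : Fact p.Prime := ‹_›
  haveI : NeZero p := ⟨hp.out.ne_zero⟩
  obtain ⟨h₀, hh₀⟩ : ∃ h : H, χ h ≠ 1 := by
    by_contra hc
    push_neg at hc
    exact hχ (MonoidHom.ext fun h => hc h)
  have hχ0 : (χ h₀ : ℂ) ≠ 1 := fun hc => hh₀ (Units.ext hc)
  set F : ZMod p → ℂ := fun a => ∑ b : ZMod p,
    f b * Complex.exp (2 * Real.pi * Complex.I * ((a * b).val : ℕ) / p) with hF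
  -- f vanishes at 0
  have hf0 : f 0 = 0 := by
    have h1 := hsym h₀ 0
    rw [mul_zero] at h1
    have h2 : ((χ h₀ : ℂ) - 1) * f 0 = 0 := by
      rw [sub_mul, one_mul, ← h1, sub_self]
    rcases mul_eq_zero.mp h2 with h | h
    · exact absurd (by linear_combination h) hχ0
    · exact h
  -- symmetry of F
  have hFsym : ∀ (h : H) (x : ZMod p),
      F (((h : (ZMod p)ˣ) : ZMod p) * x) = ((χ h : ℂ))⁻¹ * F x := by
    intro h x
    have hinvcoe : (((h⁻¹ : H) : (ZMod p)ˣ) : ZMod p) = (((h : (ZMod p)ˣ) : ZMod p))⁻¹ := by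
      rw [show ((h⁻¹ : H) : (ZMod p)ˣ) = ((h : (ZMod p)ˣ))⁻¹ from rfl]
      exact Units.val_inv_eq_inv_val _
    have hcan : ((h : (ZMod p)ˣ) : ZMod p) * (((h⁻¹ : H) : (ZMod p)ˣ) : ZMod p) = 1 := by
      rw [hinvcoe]
      exact mul_inv_cancel₀ (Units.ne_zero _)
    have hne : (((h⁻¹ : H) : (ZMod p)ˣ) : ZMod p) ≠ 0 := Units.ne_zero _
    set c : ZMod p := (((h⁻¹ : H) : (ZMod p)ˣ) : ZMod p) with hc
    set e : ZMod p ≃ ZMod p := Equiv.mulLeft₀ c hne with he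
    have step : ∀ b : ZMod p,
        f (e b) * Complex.exp (2 * Real.pi * Complex.I *
          (((((h : (ZMod p)ˣ) : ZMod p) * x) * (e b)).val : ℕ) / p)
        = ((χ h : ℂ))⁻¹ * (f b * Complex.exp (2 * Real.pi * Complex.I * (((x * b).val : ℕ)) / p)) := by
      intro b
      have harg : (((h : (ZMod p)ˣ) : ZMod p) * x) * (e b) = x * b := by
        rw [he]
        show (((h : (ZMod p)ˣ) : ZMod p) * x) * (c * b) = x * b
        calc (((h : (ZMod p)ˣ) : ZMod p) * x) * (c * b)
            = (((h : (ZMod p)ˣ) : ZMod p) * c) * (x * b) := by ring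
          _ = x * b := by rw [hcan, one_mul]
      have hfe : f (e b) = ((χ h : ℂ))⁻¹ * f b := by
        rw [he]
        show f (c * b) = _
        rw [hc, hsym h⁻¹ b]
        congr 1
        rw [map_inv]
        exact Units.val_inv_eq_inv_val _
      rw [harg, hfe]
      ring
    calc F (((h : (ZMod p)ˣ) : ZMod p) * x)
        = ∑ b : ZMod p, f (e b) * Complex.exp (2 * Real.pi * Complex.I *
            (((((h : (ZMod p)ˣ) : ZMod p) * x) * (e b)).val : ℕ) / p) := by
          rw [hF]
          exact (Equiv.sum_comp e (fun b => f b * Complex.exp (2 * Real.pi * Complex.I *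
            (((((h : (ZMod p)ˣ) : ZMod p) * x) * b).val : ℕ) / p))).symm
      _ = ∑ b : ZMod p, ((χ h : ℂ))⁻¹ *
            (f b * Complex.exp (2 * Real.pi * Complex.I * (((x * b).val : ℕ)) / p)) :=
          Finset.sum_congr rfl fun b _ => step b
      _ = ((χ h : ℂ))⁻¹ * F x := by rw [← Finset.mul_sum, hF]
  -- F vanishes at 0
  have hF0 : F 0 = 0 := by
    have h1 := hFsym h₀ 0
    rw [mul_zero] at h1
    have hinv : ((χ h₀ : ℂ))⁻¹ ≠ 1 := by
      intro hc
      exact hχ0 (by rw [← inv_inv ((χ h₀ : ℂ)), hc, inv_one])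
    have h2 : (((χ h₀ : ℂ))⁻¹ - 1) * F 0 = 0 := by
      rw [sub_mul, one_mul, ← h1, sub_self]
    rcases mul_eq_zero.mp h2 with h | h
    · exact absurd (by linear_combination h) hinv
    · exact h
  set A : Finset (ZMod p) := Finset.univ.filter fun x => f x ≠ 0 with hA
  set B : Finset (ZMod p) := Finset.univ.filter fun a => F a ≠ 0 with hB
  have h0A : (0 : ZMod p) ∉ A := by
    rw [hA, Finset.mem_filter]
    push_neg
    intro _
    simpa using hf0
  have h0B : (0 : ZMod p) ∉ B := by
    rw [hB, Finset.mem_filter]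
    push_neg
    intro _
    simpa using hF0
  have hstA : ∀ (h : H) (x : ZMod p), x ∈ A → ((h : (ZMod p)ˣ) : ZMod p) * x ∈ A := by
    intro h x hx
    rw [hA, Finset.mem_filter] at hx ⊢
    refine ⟨Finset.mem_univ _, ?_⟩
    rw [hsym h x]
    exact mul_ne_zero (Units.ne_zero (χ h)) hx.2
  have hstB : ∀ (h : H) (x : ZMod p), x ∈ B → ((h : (ZMod p)ˣ) : ZMod p) * x ∈ B := by
    intro h x hx
    rw [hB, Finset.mem_filter] at hx ⊢
    refine ⟨Finset.mem_univ _, ?_⟩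
    rw [hFsym h x]
    exact mul_ne_zero (inv_ne_zero (Units.ne_zero (χ h))) hx.2
  have hdA := card_dvd_of_stable H A h0A hstA
  have hdB := card_dvd_of_stable H B h0B hstB
  have htao' : p + 1 ≤ A.card + B.card := by
    have htao := tao_uncertainty f hf
    rw [hA, hB]
    simpa only [hF] using htao
  have hdH : Nat.card H ∣ p - 1 := by
    have h1 : Nat.card H ∣ Nat.card (ZMod p)ˣ := Subgroup.card_subgroup_dvd_card H
    rwa [Nat.card_eq_fintype_card (α := (ZMod p)ˣ), ZMod.card_units] at h1
  have hsupp1 : (Function.support f).ncard = A.card := by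
    have : Function.support f = ↑A := by
      ext x
      simp [Function.mem_support, hA]
    rw [this, Set.ncard_coe_finset]
  have hsupp2 : (Function.support fun a : ZMod p =>
      ∑ b : ZMod p, f b * Complex.exp (2 * Real.pi * Complex.I * ((a * b).val : ℕ) / p)).ncard
      = B.card := by
    have : (Function.support fun a : ZMod p =>
        ∑ b : ZMod p, f b * Complex.exp (2 * Real.pi * Complex.I * ((a * b).val : ℕ) / p)) = ↑B := by
      ext x
      simp only [Function.mem_support, hB, Finset.coe_filter, Set.mem_setOf_eq,
        Finset.mem_univ, true_and]
      exact Iff.rfl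
    rw [this, Set.ncard_coe_finset]
  rw [hsupp1, hsupp2]
  have hd1 : 1 ≤ Nat.card H := Nat.one_le_iff_ne_zero.mpr (Nat.card_pos (α := H)).ne'
  have hsub : Nat.card H ∣ (A.card + B.card) - (p - 1) :=
    Nat.dvd_sub (Nat.dvd_add hdA hdB) hdH
  have hp2 : 2 ≤ p := hp.out.two_le
  have hle : Nat.card H ≤ (A.card + B.card) - (p - 1) :=
    Nat.le_of_dvd (by omega) hsub
  omega
end

section
/- Let F_q be a finite field of characteristic p, let H be a subgroup of F_q^×, and let χ : H → ℂ^× be a character. Let S be a set of representatives of the H-orbits of F_q (if χ is trivial) or of F_q^× (if χ is nontrivial). Then the set of χ-symmetric functions from F_q to ℂ is a ℂ-vector space of dimension |S|, and the ℂ-linear map sending a χ-symmetric function f to the restriction of its Fourier transform f̂ to S is a vector space isomorphism onto ℂ^S. -/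
set_option linter.unusedSectionVars false


open Complex

/-- The canonical additive character of a finite field `F` of characteristic `p`:
`ε(x) = exp(2πi·Tr(x)/p)`, where `Tr : F → F_p` is the absolute trace. -/
noncomputable def canonicalAddChar (p : ℕ) [Fact p.Prime] (F : Type*) [Field F]
    [CharP F p] (x : F) : ℂ :=
  letI := ZMod.algebra F p
  Complex.exp (2 * Real.pi * Complex.I * ((Algebra.trace (ZMod p) F x).val : ℕ) / p)

/-- `R` is a set of representatives of the orbits of the multiplication action of the
subgroup `H ≤ Fˣ` on the subset `X` of `F`. -/
def IsOrbitReprSet {F : Type*} [Field F] (H : Subgroup Fˣ) (X : Set F)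
    (R : Finset F) : Prop :=
  ↑R ⊆ X ∧ ∀ x ∈ X, ∃! r, r ∈ R ∧ ∃ h : H, ((h : Fˣ) : F) * r = x

section Setup
variable (p : ℕ) [Fact p.Prime] (F : Type*) [Field F] [Fintype F] [CharP F p]

noncomputable def myPsi : AddChar F ℂ :=
  letI := ZMod.algebra F p
  AddChar.compAddMonoidHom
    (AddChar.zmodChar p (((Complex.isPrimitiveRoot_exp p (Fact.out (p := p.Prime)).ne_zero)).pow_eq_one))
    (Algebra.trace (ZMod p) F).toAddMonoidHom

lemma myPsi_apply (x : F) : myPsi p F x = canonicalAddChar p F x := by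
  letI := ZMod.algebra F p
  rw [myPsi, AddChar.compAddMonoidHom_apply, AddChar.zmodChar_apply, canonicalAddChar]
  rw [← Complex.exp_nat_mul, LinearMap.toAddMonoidHom_coe]
  congr 1
  ring

lemma myPsi_primitive : (myPsi p F).IsPrimitive := by
  letI := ZMod.algebra F p
  intro a ha
  have hnd : ∃ b : F, Algebra.trace (ZMod p) F (a * b) ≠ 0 := by
    have htr := (traceForm_nondegenerate (ZMod p) F).1 a
    simp_rw [Algebra.traceForm_apply] at htr
    by_contra! hf
    exact ha (htr hf)
  obtain ⟨b, hb⟩ := hnd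
  intro hcon
  have : myPsi p F (a * b) = 1 := by
    rw [show myPsi p F (a*b) = (myPsi p F).mulShift a b by simp [AddChar.mulShift_apply, mul_comm], hcon]
    rfl
  rw [myPsi, AddChar.compAddMonoidHom_apply] at this
  exact hb ((AddChar.zmodChar_primitive_of_primitive_root p
    (Complex.isPrimitiveRoot_exp p (Fact.out (p := p.Prime)).ne_zero)).zmod_char_eq_one_iff p _ |>.mp this)

open scoped Classical in
lemma myPsi_sum (b : F) :
    ∑ x : F, myPsi p F (x * b) = if b = 0 then (Fintype.card F : ℂ) else 0 := by
  classical
  rw [AddChar.sum_mulShift b (myPsi_primitive p F)]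
  split_ifs <;> simp

lemma fourier_injective (g : F → ℂ) (hg : ∀ a : F, ∑ b : F, g b * myPsi p F (a * b) = 0) :
    g = 0 := by
  classical
  funext c
  have h0 : ∑ a : F, (∑ b : F, g b * myPsi p F (a * b)) * myPsi p F (a * (-c)) = 0 := by
    simp [hg]
  have h1 : ∀ a : F, (∑ b : F, g b * myPsi p F (a * b)) * myPsi p F (a * (-c))
      = ∑ b : F, g b * myPsi p F (a * (b - c)) := by
    intro a
    rw [Finset.sum_mul]
    refine Finset.sum_congr rfl fun b _ => ?_
    rw [mul_assoc, ← AddChar.map_add_eq_mul]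
    ring_nf
  rw [Finset.sum_congr rfl (fun a _ => h1 a), Finset.sum_comm] at h0
  have h2 : ∀ b : F, ∑ a : F, g b * myPsi p F (a * (b - c))
      = g b * (if b - c = 0 then (Fintype.card F : ℂ) else 0) := by
    intro b
    classical
    rw [← Finset.mul_sum, myPsi_sum]
  rw [Finset.sum_congr rfl (fun b _ => h2 b)] at h0
  simp only [sub_eq_zero, mul_ite, mul_zero] at h0
  rw [Finset.sum_ite_eq' Finset.univ c (fun b => g b * (Fintype.card F : ℂ))] at h0
  simp only [Finset.mem_univ, if_true] at h0
  have hq : (Fintype.card F : ℂ) ≠ 0 := by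
    exact_mod_cast Nat.cast_ne_zero.mpr Fintype.card_ne_zero
  simpa [hq] using h0

end Setup

/-- The `χ`-symmetric functions from a finite field `F_q` (of characteristic `p`) to `ℂ`
form a `ℂ`-vector space of dimension `|S|`, where `S` is a set of representatives of the
`H`-orbits of `F_q` (if `χ` is trivial) or of `F_q^×` (if `χ` is nontrivial), and the
linear map sending a `χ`-symmetric `f` to the restriction of its Fourier transform
`f̂(a) = Σ_b f(b)ε(ab)` to `S` is a vector space isomorphism onto `ℂ^S`. -/
theorem chi_symmetric_space_dim_and_fourier_iso (p : ℕ) [Fact p.Prime] (F : Type*)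
    [Field F] [Fintype F] [CharP F p] (H : Subgroup Fˣ) (χ : H →* ℂˣ) (S : Finset F)
    (hStriv : χ = 1 → IsOrbitReprSet H Set.univ S)
    (hSnontriv : χ ≠ 1 → IsOrbitReprSet H {x : F | x ≠ 0} S) :
    ∃ V : Submodule ℂ (F → ℂ),
      (∀ f : F → ℂ, f ∈ V ↔
        ∀ (h : H) (x : F), f (((h : Fˣ) : F) * x) = (χ h : ℂ) * f x) ∧
      Module.finrank ℂ V = S.card ∧
      ∃ e : V ≃ₗ[ℂ] (S → ℂ),
        ∀ (f : V) (s : S), e f s = ∑ b : F, (f : F → ℂ) b * canonicalAddChar p F ((s : F) * b) := by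
  classical
  -- The submodule of χ-symmetric functions
  set V : Submodule ℂ (F → ℂ) :=
    { carrier := {f | ∀ (h : H) (x : F), f (((h : Fˣ) : F) * x) = (χ h : ℂ) * f x}
      add_mem' := fun hf hg h x => by simp only [Pi.add_apply, hf h x, hg h x]; ring
      zero_mem' := fun h x => by simp
      smul_mem' := fun c f hf h x => by simp only [Pi.smul_apply, hf h x, smul_eq_mul]; ring }
    with hV
  have hmemV : ∀ f : F → ℂ, f ∈ V ↔
      ∀ (h : H) (x : F), f (((h : Fˣ) : F) * x) = (χ h : ℂ) * f x := fun f => Iff.rfl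
  -- basic facts about S
  have hA : ∀ x : F, x ≠ 0 → ∃! r, r ∈ S ∧ ∃ h : H, ((h : Fˣ) : F) * r = x := by
    intro x hx
    by_cases hχ : χ = 1
    · exact (hStriv hχ).2 x (Set.mem_univ x)
    · exact (hSnontriv hχ).2 x hx
  have hL : ∀ (x : F) (h h' : H) (r r' : F), r ∈ S → r' ∈ S →
      ((h : Fˣ) : F) * r = x → ((h' : Fˣ) : F) * r' = x → r = r' ∧ (χ h : ℂ) = χ h' := by
    intro x h h' r r' hr hr' he he'
    by_cases hx : x = 0
    · subst hx
      have hr0 : r = 0 := by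
        rcases mul_eq_zero.mp he with h0 | h0
        · exact absurd h0 (Units.ne_zero _)
        · exact h0
      have hr'0 : r' = 0 := by
        rcases mul_eq_zero.mp he' with h0 | h0
        · exact absurd h0 (Units.ne_zero _)
        · exact h0
      refine ⟨hr0.trans hr'0.symm, ?_⟩
      by_cases hχ : χ = 1
      · simp [hχ]
      · have h0 : (0 : F) ∈ S := hr0 ▸ hr
        have := (hSnontriv hχ).1 h0
        simp at this
    · have hru : r = r' :=
        ((hA x hx).unique ⟨hr, h, he⟩ ⟨hr', h', he'⟩)
      refine ⟨hru, ?_⟩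
      have hrne : r ≠ 0 := by
        rintro rfl
        exact hx (by simpa using he.symm)
      have : ((h : Fˣ) : F) = ((h' : Fˣ) : F) := by
        have := he.trans (hru ▸ he').symm
        exact mul_right_cancel₀ hrne this
      have hu : (h : Fˣ) = (h' : Fˣ) := Units.ext this
      have : h = h' := Subtype.ext hu
      rw [this]
  have hnontrivh : χ ≠ 1 → ∃ h : H, (χ h : ℂ) ≠ 1 := by
    intro hχ
    by_contra hc
    push_neg at hc
    apply hχ
    ext h
    have := hc h
    have : χ h = 1 := Units.ext (by simpa using this)
    simp [this]
  have h0S : χ = 1 → (0 : F) ∈ S := by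
    intro hχ
    obtain ⟨r, ⟨hrS, h, hre⟩, -⟩ := (hStriv hχ).2 0 (Set.mem_univ 0)
    have : r = 0 := by
      rcases mul_eq_zero.mp hre with h0 | h0
      · exact absurd h0 (Units.ne_zero _)
      · exact h0
    exact this ▸ hrS
  -- evaluation on S is bijective from V
  have hevinj : ∀ f ∈ V, (∀ s : S, f (s : F) = 0) → f = 0 := by
    intro f hf hs
    funext x
    by_cases hx : x = 0
    · subst hx
      by_cases hχ : χ = 1
      · exact hs ⟨0, h0S hχ⟩
      · obtain ⟨h, hh⟩ := hnontrivh hχ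
        have h1 : f (((h : Fˣ) : F) * 0) = (χ h : ℂ) * f 0 := hf h 0
        rw [mul_zero] at h1
        have h2 : ((χ h : ℂ) - 1) * f 0 = 0 := by linear_combination -h1
        rcases mul_eq_zero.mp h2 with h0 | h0
        · exact absurd (by linear_combination h0) hh
        · simpa using h0
    · obtain ⟨r, ⟨hrS, h, hre⟩, -⟩ := hA x hx
      have := hf h r
      rw [hre] at this
      rw [this, hs ⟨r, hrS⟩]
      simp
  have hevsurj : ∀ g : S → ℂ, ∃ f ∈ V, ∀ s : S, f (s : F) = g s := by
    intro g
    set E : F → ℂ := fun x =>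
      if hx : ∃ c : H × S, ((c.1 : Fˣ) : F) * (c.2 : F) = x
      then (χ hx.choose.1 : ℂ) * g hx.choose.2 else 0 with hE
    have hEval : ∀ (x : F) (h : H) (s : S), ((h : Fˣ) : F) * (s : F) = x →
        E x = (χ h : ℂ) * g s := by
      intro x h s hxe
      have hex : ∃ c : H × S, ((c.1 : Fˣ) : F) * (c.2 : F) = x := ⟨⟨h, s⟩, hxe⟩
      rw [hE]
      simp only [dif_pos hex]
      obtain ⟨hr1, hr2⟩ := hL x hex.choose.1 h (hex.choose.2 : F) (s : F)
        (hex.choose.2).2 s.2 hex.choose_spec hxe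
      rw [hr2, Subtype.ext hr1]
    refine ⟨E, ?_, ?_⟩
    · intro h x
      by_cases hx : ∃ c : H × S, ((c.1 : Fˣ) : F) * (c.2 : F) = x
      · obtain ⟨⟨h₀, s⟩, hc⟩ := hx
        have h1 : E x = (χ h₀ : ℂ) * g s := hEval x h₀ s hc
        have h2 : ((((h * h₀ : H) : Fˣ)) : F) * (s : F) = ((h : Fˣ) : F) * x := by
          rw [← hc]
          push_cast
          ring
        have h3 : E (((h : Fˣ) : F) * x) = (χ (h * h₀) : ℂ) * g s := hEval _ _ s h2
        rw [h3, h1, map_mul]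
        push_cast
        ring
      · have hx' : ¬∃ c : H × S, ((c.1 : Fˣ) : F) * (c.2 : F) = ((h : Fˣ) : F) * x := by
          rintro ⟨c, hc⟩
          refine hx ⟨⟨h⁻¹ * c.1, c.2⟩, ?_⟩
          have hinv : ((((h⁻¹ * c.1 : H) : Fˣ)) : F)
              = (((h : Fˣ) : F))⁻¹ * ((c.1 : Fˣ) : F) := by
            push_cast
            simp [Units.val_inv_eq_inv_val]
          rw [hinv, mul_assoc, hc, ← mul_assoc,
            inv_mul_cancel₀ (Units.ne_zero (h : Fˣ)), one_mul]
        rw [hE]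
        simp only [dif_neg hx, dif_neg hx', mul_zero]
    · intro s
      have := hEval (s : F) 1 s (by simp)
      simpa using this
  -- Fourier symmetry
  have hsymm : ∀ f ∈ V, ∀ (h : H) (a : F),
      ∑ b : F, f b * myPsi p F (((h : Fˣ) : F) * a * b)
        = (χ h⁻¹ : ℂ) * ∑ b : F, f b * myPsi p F (a * b) := by
    intro f hf h a
    have hbij : Function.Bijective (fun c : F => ((((h : Fˣ)⁻¹ : Fˣ)) : F) * c) :=
      mulLeft_bijective₀ _ (Units.ne_zero _)
    have hre := Fintype.sum_bijective _ hbij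
      (fun c => f (((((h : Fˣ)⁻¹ : Fˣ)) : F) * c) *
        myPsi p F (((h : Fˣ) : F) * a * (((((h : Fˣ)⁻¹ : Fˣ)) : F) * c)))
      (fun b => f b * myPsi p F (((h : Fˣ) : F) * a * b)) (fun c => rfl)
    rw [← hre, Finset.mul_sum]
    refine Finset.sum_congr rfl fun c _ => ?_
    have hfc : f (((((h : Fˣ)⁻¹ : Fˣ)) : F) * c) = (χ h⁻¹ : ℂ) * f c := by
      have := hf h⁻¹ c
      simpa using this
    have hmul : ((h : Fˣ) : F) * ((((h : Fˣ)⁻¹ : Fˣ)) : F) = 1 := by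
      rw [← Units.val_mul]
      simp
    have harg : ((h : Fˣ) : F) * a * (((((h : Fˣ)⁻¹ : Fˣ)) : F) * c) = a * c := by
      rw [show ((h : Fˣ) : F) * a * (((((h : Fˣ)⁻¹ : Fˣ)) : F) * c)
        = (((h : Fˣ) : F) * ((((h : Fˣ)⁻¹ : Fˣ)) : F)) * (a * c) by ring, hmul, one_mul]
    simp only [hfc, harg]
    ring
  -- the sum of a χ-symmetric function vanishes when χ is nontrivial
  have hsum0 : ∀ f ∈ V, χ ≠ 1 → ∑ b : F, f b = 0 := by
    intro f hf hχ
    obtain ⟨h, hh⟩ := hnontrivh hχ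
    have hbij : Function.Bijective (fun c : F => ((h : Fˣ) : F) * c) :=
      mulLeft_bijective₀ _ (Units.ne_zero _)
    have hre := Fintype.sum_bijective _ hbij
      (fun c => f (((h : Fˣ) : F) * c)) f (fun c => rfl)
    have h2 : ∑ c : F, f (((h : Fˣ) : F) * c) = (χ h : ℂ) * ∑ b : F, f b := by
      rw [Finset.mul_sum]
      exact Finset.sum_congr rfl fun c _ => hf h c
    rw [h2] at hre
    have h3 : ((χ h : ℂ) - 1) * ∑ b : F, f b = 0 := by linear_combination hre
    rcases mul_eq_zero.mp h3 with h0 | h0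
    · exact absurd (by linear_combination h0) hh
    · exact h0
  -- injectivity of the Fourier-restriction map
  have hTinj : ∀ f ∈ V, (∀ s : S, ∑ b : F, f b * myPsi p F ((s : F) * b) = 0) → f = 0 := by
    intro f hf hs
    apply fourier_injective p F
    intro a
    by_cases ha : a = 0
    · subst ha
      by_cases hχ : χ = 1
      · simpa using hs ⟨0, h0S hχ⟩
      · simp only [zero_mul, AddChar.map_zero_eq_one, mul_one]
        exact hsum0 f hf hχ
    · obtain ⟨r, ⟨hrS, h, hre⟩, -⟩ := hA a ha
      have hsy := hsymm f hf h r
      rw [hre] at hsy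
      rw [hsy, hs ⟨r, hrS⟩, mul_zero]
  haveI : FiniteDimensional ℂ V := inferInstance
  -- evaluation linear map, giving the dimension
  let ev : V →ₗ[ℂ] (↥S → ℂ) :=
    { toFun := fun f s => (f : F → ℂ) (s : F)
      map_add' := fun f g => rfl
      map_smul' := fun c f => rfl }
  have hevbij : Function.Bijective ev := by
    constructor
    · intro f g hfg
      have hsz : ((f : F → ℂ) - (g : F → ℂ)) = 0 := by
        refine hevinj _ (sub_mem f.2 g.2) fun s => ?_
        have h1 : (f : F → ℂ) (s : F) = (g : F → ℂ) (s : F) := congrFun hfg s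
        simp [h1]
      exact Subtype.ext (sub_eq_zero.mp hsz)
    · intro g
      obtain ⟨f, hfV, hfs⟩ := hevsurj g
      exact ⟨⟨f, hfV⟩, funext hfs⟩
  have hrank : Module.finrank ℂ V = S.card := by
    rw [(LinearEquiv.ofBijective ev hevbij).finrank_eq, Module.finrank_pi, Fintype.card_coe]
  refine ⟨V, hmemV, hrank, ?_⟩
  -- the Fourier-restriction linear map
  let T : V →ₗ[ℂ] (↥S → ℂ) :=
    { toFun := fun f s => ∑ b : F, (f : F → ℂ) b * myPsi p F ((s : F) * b)
      map_add' := fun f g => by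
        funext s
        simp only [Submodule.coe_add, Pi.add_apply, add_mul, Finset.sum_add_distrib]
      map_smul' := fun c f => by
        funext s
        simp only [Submodule.coe_smul, Pi.smul_apply, smul_eq_mul, RingHom.id_apply,
          Finset.mul_sum, mul_assoc] }
  have hTinj' : Function.Injective T := by
    intro f g hfg
    have h1 : T (f - g) = 0 := by rw [map_sub, hfg, sub_self]
    have h2 : ((f - g : V) : F → ℂ) = 0 := by
      refine hTinj _ (f - g).2 fun s => ?_
      exact congrFun h1 s
    have : (f - g : V) = 0 := Subtype.ext h2
    rw [sub_eq_zero] at this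
    exact this
  have hTsurj : Function.Surjective T :=
    (LinearMap.injective_iff_surjective_of_finrank_eq_finrank
      (by rw [hrank, Module.finrank_pi, Fintype.card_coe])).mp hTinj'
  refine ⟨LinearEquiv.ofBijective T ⟨hTinj', hTsurj⟩, fun f s => ?_⟩
  show ∑ b : F, (f : F → ℂ) b * myPsi p F ((s : F) * b) = _
  exact Finset.sum_congr rfl fun b _ => by rw [myPsi_apply]
end

section
/- Let F be a finite field of characteristic p, let K be a proper subfield of F, and let H be a subgroup of F^× with H ⊆ K. Let χ : H → ℂ^× be any character, and let R and S be sets of representatives of the H-orbits of F (if χ is trivial) or of F^× (if χ is nontrivial). Then the (χ,R,S)-compressed Fourier matrix, with (r,s)-entry Σ_{h∈H} χ(h)ε(hrs), does not have the nonvanishing minors property; that is, some k×k submatrix (with distinct row indices and distinct column indices) has zero determinant. -/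
open Complex

lemma canonicalAddChar_eq_one_of_trace_eq_zero (p : ℕ) [Fact p.Prime] (F : Type*) [Field F]
    [CharP F p] (z : F)
    (hz : (letI := ZMod.algebra F p; Algebra.trace (ZMod p) F z) = 0) :
    canonicalAddChar p F z = 1 := by
  unfold canonicalAddChar
  rw [hz]
  simp

lemma exists_ker_elt (p : ℕ) [Fact p.Prime] (F : Type*) [Field F] [Fintype F] [CharP F p]
    (K : Subfield F) (hK : K ≠ ⊤) :
    letI := ZMod.algebra F p
    ∃ z : F, z ≠ 0 ∧ ∀ c ∈ K, Algebra.trace (ZMod p) F (c * z) = 0 := by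
  classical
  letI := ZMod.algebra F p
  haveI : CharP K p := inferInstance
  letI := ZMod.algebra K p
  haveI : @IsScalarTower (ZMod p) K F Algebra.toSMul Algebra.toSMul Algebra.toSMul :=
    IsScalarTower.of_algebraMap_eq' (RingHom.ext_zmod _ _)
  haveI : Fintype K := Fintype.ofFinite K
  obtain ⟨z, hz0, hz⟩ : ∃ z : F, z ≠ 0 ∧ Algebra.trace K F z = 0 := by
    by_contra h
    push_neg at h
    have hinj : Function.Injective (Algebra.trace K F) := by
      intro a b hab
      by_contra hne
      exact h (a - b) (sub_ne_zero.mpr hne) (by rw [map_sub, hab, sub_self])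
    obtain ⟨x, hx⟩ : ∃ x : F, x ∉ K := by
      by_contra h'
      push_neg at h'
      exact hK (Subfield.ext fun y => ⟨fun _ => trivial, fun _ => h' y⟩)
    have h1 : Fintype.card K < Fintype.card F :=
      Fintype.card_lt_of_injective_of_notMem (Subtype.val) Subtype.coe_injective (b := x)
        (by rintro ⟨y, hy⟩; exact hx (hy ▸ y.2))
    have h2 : Fintype.card F ≤ Fintype.card K := Fintype.card_le_of_injective _ hinj
    omega
  refine ⟨z, hz0, fun c hc => ?_⟩
  have h4 := map_smul (Algebra.trace K F) (⟨c, hc⟩ : K) z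
  rw [hz, smul_zero] at h4
  have h5 : (⟨c, hc⟩ : K) • z = c * z := rfl
  rw [h5] at h4
  rw [← Algebra.trace_trace (S := K), h4, map_zero]

lemma sum_char_eq_zero {H : Type*} [Group H] [Fintype H] (χ : H →* ℂˣ) (hχ : χ ≠ 1) :
    ∑ h : H, (χ h : ℂ) = 0 := by
  obtain ⟨h0, hh0⟩ : ∃ h0, χ h0 ≠ 1 := by
    by_contra h; push_neg at h; exact hχ (MonoidHom.ext fun x => h x)
  have key : (χ h0 : ℂ) * ∑ h : H, (χ h : ℂ) = ∑ h : H, (χ h : ℂ) := by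
    rw [Finset.mul_sum]
    exact Fintype.sum_bijective (fun h => h0 * h) (Group.mulLeft_bijective h0) _ _
      (fun h => by rw [map_mul]; push_cast; ring)
  have h1 : ((χ h0 : ℂ) - 1) * ∑ h : H, (χ h : ℂ) = 0 := by
    rw [sub_mul, one_mul, key, sub_self]
  rcases mul_eq_zero.mp h1 with h | h
  · exact absurd (Units.ext (by simpa using sub_eq_zero.mp h)) hh0
  · exact h

lemma injective_pair {α : Type*} {a b : α} (hab : a ≠ b) :
    Function.Injective ![a, b] := by
  intro i j hij
  fin_cases i <;> fin_cases j <;> simp_all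


set_option maxHeartbeats 1000000 in
/-- If `F` is a finite field of characteristic `p`, `K` a proper subfield, and `H` a
subgroup of `Fˣ` contained in `K`, then for any character `χ : H → ℂ^×` the
`(χ,R,S)`-compressed Fourier matrix, with `(r,s)`-entry `Σ_{h∈H} χ(h)ε(hrs)`, fails the
nonvanishing minors property: some square submatrix with distinct row indices and
distinct column indices has zero determinant. -/
theorem compressed_fourier_matrix_vanishing_minor_of_subfield (p : ℕ) [Fact p.Prime]
    (F : Type*) [Field F] [Fintype F] [CharP F p] (K : Subfield F) (hK : K ≠ ⊤)
    (H : Subgroup Fˣ) [Fintype H] (hHK : ∀ h : H, ((h : Fˣ) : F) ∈ K)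
    (χ : H →* ℂˣ) (R S : Finset F)
    (hRtriv : χ = 1 → IsOrbitReprSet H Set.univ R)
    (hStriv : χ = 1 → IsOrbitReprSet H Set.univ S)
    (hRnontriv : χ ≠ 1 → IsOrbitReprSet H {x : F | x ≠ 0} R)
    (hSnontriv : χ ≠ 1 → IsOrbitReprSet H {x : F | x ≠ 0} S) :
    ∃ (k : ℕ) (ri : Fin k → R) (ci : Fin k → S),
      Function.Injective ri ∧ Function.Injective ci ∧
      (Matrix.of fun i j : Fin k =>
        ∑ h : H, (χ h : ℂ) *
          canonicalAddChar p F (((h : Fˣ) : F) * (ri i : F) * (ci j : F))).det = 0 := by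
  classical
  letI := ZMod.algebra F p
  obtain ⟨z, hz0, hz⟩ := exists_ker_elt p F K hK
  by_cases hχ : χ = 1
  · obtain ⟨-, hRmem⟩ := hRtriv hχ
    obtain ⟨-, hSmem⟩ := hStriv hχ
    -- 0 ∈ R and 0 ∈ S
    obtain ⟨r0, ⟨hr0R, h0, hh0⟩, -⟩ := hRmem 0 trivial
    have hr0 : r0 = 0 := by
      rcases mul_eq_zero.mp hh0 with h | h
      · exact absurd h (Units.ne_zero _)
      · exact h
    rw [hr0] at hr0R
    obtain ⟨s0, ⟨hs0S, g0, hg0⟩, -⟩ := hSmem 0 trivial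
    have hs0 : s0 = 0 := by
      rcases mul_eq_zero.mp hg0 with h | h
      · exact absurd h (Units.ne_zero _)
      · exact h
    rw [hs0] at hs0S
    -- r1 ∈ R representing 1
    obtain ⟨r1, ⟨hr1R, h1, hh1⟩, -⟩ := hRmem 1 trivial
    have hr1ne : r1 ≠ 0 := by
      intro h; rw [h, mul_zero] at hh1; exact zero_ne_one hh1
    -- s' ∈ S representing z * r1⁻¹
    obtain ⟨s', ⟨hs'S, h2, hh2⟩, -⟩ := hSmem (z * r1⁻¹) trivial
    have hs'ne : s' ≠ 0 := by
      intro h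
      rw [h, mul_zero] at hh2
      apply hz0
      field_simp at hh2
      exact hh2.symm.trans (zero_mul r1)
    have h2ne : ((h2 : Fˣ) : F) ≠ 0 := Units.ne_zero _
    have hr1s' : r1 * s' = ((h2 : Fˣ) : F)⁻¹ * z := by
      have hmain : ((h2 : Fˣ) : F) * (r1 * s') = z := by
        rw [show ((h2 : Fˣ) : F) * (r1 * s') = ((h2 : Fˣ) : F) * s' * r1 by ring, hh2]
        field_simp
      rw [← hmain, inv_mul_cancel_left₀ h2ne]
    have key : ∀ h : H, ((h : Fˣ) : F) * r1 * s' = (((h * h2⁻¹ : H) : Fˣ) : F) * z := by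
      intro h
      rw [mul_assoc, hr1s']
      push_cast
      ring
    have keytr : ∀ h : H, Algebra.trace (ZMod p) F (((h : Fˣ) : F) * r1 * s') = 0 := by
      intro h
      rw [key h]
      exact hz _ (hHK _)
    -- entries
    have entry : ∀ (r s : F), (∀ h : H, Algebra.trace (ZMod p) F (((h : Fˣ) : F) * r * s) = 0) →
        ∑ h : H, (χ h : ℂ) * canonicalAddChar p F (((h : Fˣ) : F) * r * s)
          = (Fintype.card H : ℂ) := by
      intro r s hrs
      have : ∀ h : H, canonicalAddChar p F (((h : Fˣ) : F) * r * s) = 1 := fun h =>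
        canonicalAddChar_eq_one_of_trace_eq_zero p F _ (hrs h)
      simp [this, hχ]
    refine ⟨2, ![⟨0, hr0R⟩, ⟨r1, hr1R⟩], ![⟨0, hs0S⟩, ⟨s', hs'S⟩],
      injective_pair (fun hc => hr1ne (congrArg Subtype.val hc).symm),
      injective_pair (fun hc => hs'ne (congrArg Subtype.val hc).symm), ?_⟩
    · rw [Matrix.det_fin_two]
      simp only [Matrix.of_apply, Matrix.cons_val', Matrix.cons_val_zero, Matrix.cons_val_one,
        Matrix.head_cons, Matrix.empty_val', Matrix.cons_val_fin_one, Matrix.head_fin_const]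
      rw [entry 0 0 (by intro h; simp), entry 0 s' (by intro h; simp),
        entry r1 0 (by intro h; simp), entry r1 s' keytr]
      ring
  · obtain ⟨hRsub, hRmem⟩ := hRnontriv hχ
    obtain ⟨hSsub, hSmem⟩ := hSnontriv hχ
    obtain ⟨r1, ⟨hr1R, h1, hh1⟩, -⟩ := hRmem 1 one_ne_zero
    have hr1ne : r1 ≠ 0 := by
      intro h; rw [h, mul_zero] at hh1; exact zero_ne_one hh1
    obtain ⟨s', ⟨hs'S, h2, hh2⟩, -⟩ := hSmem (z * r1⁻¹)
      (by simp [hz0, hr1ne])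
    have h2ne : ((h2 : Fˣ) : F) ≠ 0 := Units.ne_zero _
    have hr1s' : r1 * s' = ((h2 : Fˣ) : F)⁻¹ * z := by
      have hmain : ((h2 : Fˣ) : F) * (r1 * s') = z := by
        rw [show ((h2 : Fˣ) : F) * (r1 * s') = ((h2 : Fˣ) : F) * s' * r1 by ring, hh2]
        field_simp
      rw [← hmain, inv_mul_cancel_left₀ h2ne]
    have keytr : ∀ h : H, Algebra.trace (ZMod p) F (((h : Fˣ) : F) * r1 * s') = 0 := by
      intro h
      rw [mul_assoc, hr1s', show ((h : Fˣ) : F) * (((h2 : Fˣ) : F)⁻¹ * z)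
          = (((h * h2⁻¹ : H) : Fˣ) : F) * z by push_cast; ring]
      exact hz _ (hHK _)
    refine ⟨1, ![⟨r1, hr1R⟩], ![⟨s', hs'S⟩], fun a b _ => Subsingleton.elim a b,
      fun a b _ => Subsingleton.elim a b, ?_⟩
    rw [Matrix.det_fin_one]
    simp only [Matrix.of_apply, Matrix.cons_val_zero]
    have : ∀ h : H, canonicalAddChar p F (((h : Fˣ) : F) * r1 * s') = 1 := fun h =>
      canonicalAddChar_eq_one_of_trace_eq_zero p F _ (keytr h)
    simp only [this, mul_one]
    exact sum_char_eq_zero χ hχ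
end
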